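/- arXiv:2207.07804 — 8 statements merged into one kernel-verified Lean document; each statement's English description precedes it below -/
import Mathlib

section
/- Let p be a prime with p ≡ 1 (mod 6). Then (∏_{1 ≤ i ≤ (p²−1)/3, p ∤ i} i)^(p−1) ≡ 1 (mod p²) if and only if (∏_{1 ≤ i ≤ (p²−1)/6, p ∤ i} i)^(p−1) ≡ 1 (mod p²). (That is, p is 1-exceptional for m = 3 if and only if p is 1-exceptional for m = 6.) -/
open Finset

namespace CD

/-- Partial Gauss-factorial product in `ZMod (p^2)`. -/
def Q (p a b : ℕ) : ZMod (p ^ 2) :=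
  ∏ i ∈ (Finset.Ioc a b).filter (fun i => ¬ p ∣ i), (i : ZMod (p ^ 2))

lemma Ioc_disj (a b c : ℕ) : Disjoint (Finset.Ioc a b) (Finset.Ioc b c) := by
  rw [Finset.disjoint_left]
  intro x hx hx2
  simp only [Finset.mem_Ioc] at hx hx2
  omega

lemma Q_split (p a b c : ℕ) (h1 : a ≤ b) (h2 : b ≤ c) :
    Q p a c = Q p a b * Q p b c := by
  unfold Q
  rw [← Finset.prod_union
      (Finset.disjoint_filter_filter (Ioc_disj a b c)),
    ← Finset.filter_union, Finset.Ioc_union_Ioc_eq_Ioc h1 h2]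

lemma Q_isUnit {p : ℕ} (hp : p.Prime) (a b : ℕ) : IsUnit (Q p a b) := by
  refine Finset.prod_induction _ _ (fun x y hx hy => hx.mul hy) isUnit_one ?_
  intro i hi
  simp only [Finset.mem_filter] at hi
  rw [ZMod.isUnit_iff_coprime]
  exact ((hp.coprime_iff_not_dvd).mpr hi.2).symm.pow_right 2

lemma Q_pow_form {p : ℕ} (hp : p.Prime) (a b : ℕ) :
    ∃ w : ZMod (p ^ 2), (Q p a b) ^ (p - 1) = 1 + (p : ZMod (p ^ 2)) * w := by
  haveI : Fact p.Prime := ⟨hp⟩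
  haveI : NeZero (p ^ 2) := ⟨pow_ne_zero _ hp.ne_zero⟩
  set x := (Q p a b) ^ (p - 1) with hx
  have hdvd : p ∣ p ^ 2 := dvd_pow_self p two_ne_zero
  have h1 : (ZMod.castHom hdvd (ZMod p)) x = 1 := by
    rw [hx, map_pow]
    apply ZMod.pow_card_sub_one_eq_one
    have heq : (ZMod.castHom hdvd (ZMod p)) (Q p a b)
        = ∏ i ∈ (Finset.Ioc a b).filter (fun i => ¬ p ∣ i), (i : ZMod p) := by
      unfold Q
      rw [map_prod]
      exact Finset.prod_congr rfl (fun i _ => by simp)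
    rw [heq, Finset.prod_ne_zero_iff]
    intro i hi
    simp only [Finset.mem_filter] at hi
    rw [Ne, ZMod.natCast_eq_zero_iff]
    exact hi.2
  have h2 : ((x - 1).val : ZMod p) = 0 := by
    rw [ZMod.natCast_val, ← ZMod.castHom_apply (h := hdvd), map_sub, h1, map_one, sub_self]
  rw [ZMod.natCast_eq_zero_iff] at h2
  obtain ⟨m, hm⟩ := h2
  refine ⟨(m : ZMod (p ^ 2)), ?_⟩
  have h3 : (((x - 1).val : ℕ) : ZMod (p ^ 2)) = x - 1 := by
    rw [ZMod.natCast_val, ZMod.cast_id]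
  rw [hm] at h3
  push_cast at h3
  exact by rw [h3]; ring

lemma one_add_pow {R : Type*} [CommRing R] (u : R) (hu : u * u = 0) (m : ℕ) :
    (1 + u) ^ m = 1 + (m : R) * u := by
  induction m with
  | zero => simp
  | succ m ih =>
      rw [pow_succ, ih]
      push_cast
      linear_combination (m : R) * hu

lemma eq_one_of_pow {p : ℕ} {x w : ZMod (p ^ 2)}
    (hx : x = 1 + (p : ZMod (p ^ 2)) * w) (m : ℕ) (hm : Nat.Coprime m (p ^ 2))
    (h : x ^ m = 1) : x = 1 := by
  have hpp : ((p : ZMod (p ^ 2)) * w) * ((p : ZMod (p ^ 2)) * w) = 0 := by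
    have h0 : ((p ^ 2 : ℕ) : ZMod (p ^ 2)) = 0 := ZMod.natCast_self _
    push_cast at h0
    linear_combination (w * w) * h0
  rw [hx, one_add_pow _ hpp] at h
  have h2 : ((m : ZMod (p ^ 2))) * ((p : ZMod (p ^ 2)) * w) = 0 := by
    linear_combination h
  have hu : IsUnit ((m : ZMod (p ^ 2))) := (ZMod.isUnit_iff_coprime m (p ^ 2)).mpr hm
  have h3 : (p : ZMod (p ^ 2)) * w = 0 :=
    hu.mul_left_cancel (by simpa using h2)
  rw [hx, h3, add_zero]

lemma card_filter_Ioc (p m : ℕ) :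
    (((Finset.Ioc 0 m).filter (fun i => ¬ p ∣ i)).card) = m - m / p := by
  rw [Finset.filter_not, Finset.card_sdiff_of_subset (Finset.filter_subset _ _),
    Nat.card_Ioc, Nat.Ioc_filter_dvd_card_eq_div]
  norm_num

/-- even part of the product over `(0, 2n]`. -/
lemma even_part {p : ℕ} (hp : p.Prime) (hnd2 : ¬ p ∣ 2) (n : ℕ) :
    ∏ i ∈ ((Finset.Ioc 0 (2 * n)).filter (fun i => ¬ p ∣ i)).filter (fun i => 2 ∣ i),
        (i : ZMod (p ^ 2))
      = 2 ^ (((Finset.Ioc 0 n).filter (fun i => ¬ p ∣ i)).card) * Q p 0 n := by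
  have key : ∏ i ∈ ((Finset.Ioc 0 (2 * n)).filter (fun i => ¬ p ∣ i)).filter (fun i => 2 ∣ i),
        (i : ZMod (p ^ 2))
      = ∏ j ∈ (Finset.Ioc 0 n).filter (fun i => ¬ p ∣ i), ((2 * j : ℕ) : ZMod (p ^ 2)) := by
    refine Finset.prod_nbij' (fun i => i / 2) (fun j => 2 * j) ?_ ?_ ?_ ?_ ?_
    · intro i hi
      simp only [Finset.mem_filter, Finset.mem_Ioc] at hi ⊢
      obtain ⟨⟨⟨hi1, hi2⟩, hip⟩, hie⟩ := hi
      refine ⟨⟨by omega, by omega⟩, fun h => hip ?_⟩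
      have h2 : p ∣ 2 * (i / 2) := Dvd.dvd.mul_left h 2
      rwa [show 2 * (i / 2) = i by omega] at h2
    · intro j hj
      simp only [Finset.mem_filter, Finset.mem_Ioc] at hj ⊢
      obtain ⟨⟨hj1, hj2⟩, hjp⟩ := hj
      refine ⟨⟨⟨by omega, by omega⟩, fun h => ?_⟩, ⟨j, rfl⟩⟩
      rcases (Nat.Prime.dvd_mul hp).mp h with h2 | h2
      · exact hnd2 h2
      · exact hjp h2
    · intro i hi
      simp only [Finset.mem_filter, Finset.mem_Ioc] at hi
      show 2 * (i / 2) = i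
      omega
    · intro j _
      show 2 * j / 2 = j
      omega
    · intro i hi
      simp only [Finset.mem_filter, Finset.mem_Ioc] at hi
      show (i : ZMod (p ^ 2)) = ((2 * (i / 2) : ℕ) : ZMod (p ^ 2))
      rw [show 2 * (i / 2) = i by omega]
  rw [key,
    show (fun j : ℕ => ((2 * j : ℕ) : ZMod (p ^ 2)))
        = fun j : ℕ => (2 : ZMod (p ^ 2)) * (j : ZMod (p ^ 2)) from
      funext fun j => by push_cast; ring,
    Finset.prod_mul_distrib, Finset.prod_const]
  rfl

/-- odd part of the product over `(0, 2n]`. -/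
lemma odd_part {p n : ℕ} (hp : p.Prime) (hnd2 : ¬ p ∣ 2) (hn : p ^ 2 = 6 * n + 1) :
    ∏ i ∈ ((Finset.Ioc 0 (2 * n)).filter (fun i => ¬ p ∣ i)).filter (fun i => ¬ 2 ∣ i),
        (i : ZMod (p ^ 2))
      = (-2) ^ (((Finset.Ioc (2 * n) (3 * n)).filter (fun i => ¬ p ∣ i)).card)
          * Q p (2 * n) (3 * n) := by
  have hp6 : p ∣ 6 * n + 1 := hn ▸ dvd_pow_self p two_ne_zero
  have key : ∏ i ∈ ((Finset.Ioc 0 (2 * n)).filter (fun i => ¬ p ∣ i)).filter (fun i => ¬ 2 ∣ i),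
        (i : ZMod (p ^ 2))
      = ∏ j ∈ (Finset.Ioc (2 * n) (3 * n)).filter (fun i => ¬ p ∣ i),
          ((6 * n + 1 - 2 * j : ℕ) : ZMod (p ^ 2)) := by
    refine Finset.prod_nbij' (fun i => (6 * n + 1 - i) / 2) (fun j => 6 * n + 1 - 2 * j)
      ?_ ?_ ?_ ?_ ?_
    · intro i hi
      simp only [Finset.mem_filter, Finset.mem_Ioc] at hi ⊢
      obtain ⟨⟨⟨hi1, hi2⟩, hip⟩, hie⟩ := hi
      refine ⟨⟨by omega, by omega⟩, fun h => hip ?_⟩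
      have h2 : p ∣ 2 * ((6 * n + 1 - i) / 2) := Dvd.dvd.mul_left h 2
      rw [show 2 * ((6 * n + 1 - i) / 2) = 6 * n + 1 - i by omega] at h2
      have h3 := Nat.dvd_sub hp6 h2
      rwa [show 6 * n + 1 - (6 * n + 1 - i) = i by omega] at h3
    · intro j hj
      simp only [Finset.mem_filter, Finset.mem_Ioc] at hj ⊢
      obtain ⟨⟨hj1, hj2⟩, hjp⟩ := hj
      refine ⟨⟨⟨by omega, by omega⟩, fun h => ?_⟩, by omega⟩
      have h3 := Nat.dvd_sub hp6 h
      rw [show 6 * n + 1 - (6 * n + 1 - 2 * j) = 2 * j by omega] at h3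
      rcases (Nat.Prime.dvd_mul hp).mp h3 with h2 | h2
      · exact hnd2 h2
      · exact hjp h2
    · intro i hi
      simp only [Finset.mem_filter, Finset.mem_Ioc] at hi
      show 6 * n + 1 - 2 * ((6 * n + 1 - i) / 2) = i
      omega
    · intro j hj
      simp only [Finset.mem_filter, Finset.mem_Ioc] at hj
      show (6 * n + 1 - (6 * n + 1 - 2 * j)) / 2 = j
      omega
    · intro i hi
      simp only [Finset.mem_filter, Finset.mem_Ioc] at hi
      show (i : ZMod (p ^ 2)) = ((6 * n + 1 - 2 * ((6 * n + 1 - i) / 2) : ℕ) : ZMod (p ^ 2))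
      rw [show 6 * n + 1 - 2 * ((6 * n + 1 - i) / 2) = i by omega]
  rw [key]
  have hfac : ∀ j ∈ (Finset.Ioc (2 * n) (3 * n)).filter (fun i => ¬ p ∣ i),
      ((6 * n + 1 - 2 * j : ℕ) : ZMod (p ^ 2)) = (-2) * (j : ZMod (p ^ 2)) := by
    intro j hj
    simp only [Finset.mem_filter, Finset.mem_Ioc] at hj
    rw [Nat.cast_sub (by omega : 2 * j ≤ 6 * n + 1),
      show ((6 * n + 1 : ℕ) : ZMod (p ^ 2)) = 0 by rw [← hn]; exact ZMod.natCast_self _]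
    push_cast
    ring
  rw [Finset.prod_congr rfl hfac, Finset.prod_mul_distrib, Finset.prod_const]
  rfl

/-- reflection over the half interval. -/
lemma reflect {p n : ℕ} (hn : p ^ 2 = 6 * n + 1) :
    Q p (3 * n) (6 * n)
      = (-1) ^ (((Finset.Ioc 0 (3 * n)).filter (fun i => ¬ p ∣ i)).card) * Q p 0 (3 * n) := by
  have hp6 : p ∣ 6 * n + 1 := hn ▸ dvd_pow_self p two_ne_zero
  have key : Q p (3 * n) (6 * n)
      = ∏ j ∈ (Finset.Ioc 0 (3 * n)).filter (fun i => ¬ p ∣ i),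
          ((6 * n + 1 - j : ℕ) : ZMod (p ^ 2)) := by
    unfold Q
    refine Finset.prod_nbij' (fun i => 6 * n + 1 - i) (fun j => 6 * n + 1 - j) ?_ ?_ ?_ ?_ ?_
    · intro i hi
      simp only [Finset.mem_filter, Finset.mem_Ioc] at hi ⊢
      obtain ⟨⟨hi1, hi2⟩, hip⟩ := hi
      refine ⟨⟨by omega, by omega⟩, fun h => hip ?_⟩
      have h3 := Nat.dvd_sub hp6 h
      rwa [show 6 * n + 1 - (6 * n + 1 - i) = i by omega] at h3
    · intro j hj
      simp only [Finset.mem_filter, Finset.mem_Ioc] at hj ⊢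
      obtain ⟨⟨hj1, hj2⟩, hjp⟩ := hj
      refine ⟨⟨by omega, by omega⟩, fun h => hjp ?_⟩
      have h3 := Nat.dvd_sub hp6 h
      rwa [show 6 * n + 1 - (6 * n + 1 - j) = j by omega] at h3
    · intro i hi
      simp only [Finset.mem_filter, Finset.mem_Ioc] at hi
      show 6 * n + 1 - (6 * n + 1 - i) = i
      omega
    · intro j hj
      simp only [Finset.mem_filter, Finset.mem_Ioc] at hj
      show 6 * n + 1 - (6 * n + 1 - j) = j
      omega
    · intro i hi
      simp only [Finset.mem_filter, Finset.mem_Ioc] at hi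
      show (i : ZMod (p ^ 2)) = ((6 * n + 1 - (6 * n + 1 - i) : ℕ) : ZMod (p ^ 2))
      rw [show 6 * n + 1 - (6 * n + 1 - i) = i by omega]
  rw [key]
  have hfac : ∀ j ∈ (Finset.Ioc 0 (3 * n)).filter (fun i => ¬ p ∣ i),
      ((6 * n + 1 - j : ℕ) : ZMod (p ^ 2)) = (-1) * (j : ZMod (p ^ 2)) := by
    intro j hj
    simp only [Finset.mem_filter, Finset.mem_Ioc] at hj
    rw [Nat.cast_sub (by omega : j ≤ 6 * n + 1),
      show ((6 * n + 1 : ℕ) : ZMod (p ^ 2)) = 0 by rw [← hn]; exact ZMod.natCast_self _]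
    ring
  rw [Finset.prod_congr rfl hfac, Finset.prod_mul_distrib, Finset.prod_const]
  rfl

/-- the full product of units squared is `1`. -/
lemma full_sq {p n : ℕ} (hp : p.Prime) (hn : p ^ 2 = 6 * n + 1) :
    Q p 0 (6 * n) * Q p 0 (6 * n) = 1 := by
  haveI : NeZero (p ^ 2) := ⟨pow_ne_zero _ hp.ne_zero⟩
  have hcop : ∀ a ∈ (Finset.Ioc 0 (6 * n)).filter (fun i => ¬ p ∣ i), Nat.Coprime a (p ^ 2) := by
    intro a ha
    simp only [Finset.mem_filter, Finset.mem_Ioc] at ha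
    exact ((hp.coprime_iff_not_dvd).mpr ha.2).symm.pow_right 2
  have key : Q p 0 (6 * n) = ∏ u : (ZMod (p ^ 2))ˣ, ((u : ZMod (p ^ 2))) := by
    unfold Q
    refine Finset.prod_bij (fun a ha => ZMod.unitOfCoprime a (hcop a ha))
      (fun a ha => Finset.mem_univ _) ?_ ?_ ?_
    · intro a1 h1 a2 h2 heq
      have hval : ((a1 : ℕ) : ZMod (p ^ 2)) = ((a2 : ℕ) : ZMod (p ^ 2)) := by
        have := congrArg (fun u : (ZMod (p ^ 2))ˣ => (u : ZMod (p ^ 2))) heq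
        simpa [ZMod.coe_unitOfCoprime] using this
      have ha1 : a1 < p ^ 2 := by
        simp only [Finset.mem_filter, Finset.mem_Ioc] at h1; omega
      have ha2 : a2 < p ^ 2 := by
        simp only [Finset.mem_filter, Finset.mem_Ioc] at h2; omega
      calc a1 = ((a1 : ℕ) : ZMod (p ^ 2)).val := (ZMod.val_cast_of_lt ha1).symm
        _ = a2 := by rw [hval, ZMod.val_cast_of_lt ha2]
    · intro u _
      have hcu := ZMod.val_coe_unit_coprime u
      have hlt : ((u : ZMod (p ^ 2)).val) < p ^ 2 := ZMod.val_lt _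
      have hnd : ¬ p ∣ (u : ZMod (p ^ 2)).val := by
        intro hd
        have hc2 : Nat.Coprime ((u : ZMod (p ^ 2)).val) p :=
          Nat.Coprime.coprime_dvd_right (dvd_pow_self p two_ne_zero) hcu
        exact ((hp.coprime_iff_not_dvd).mp hc2.symm) hd
      have hne : (u : ZMod (p ^ 2)).val ≠ 0 := by
        intro h0
        rw [h0] at hcu
        have h1 : p = 1 := by simpa [Nat.coprime_zero_left] using hcu
        exact hp.ne_one h1
      have hmem : (u : ZMod (p ^ 2)).val ∈ (Finset.Ioc 0 (6 * n)).filter (fun i => ¬ p ∣ i) := by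
        simp only [Finset.mem_filter, Finset.mem_Ioc]
        exact ⟨⟨Nat.pos_of_ne_zero hne, by omega⟩, hnd⟩
      refine ⟨(u : ZMod (p ^ 2)).val, hmem, ?_⟩
      apply Units.ext
      simp [ZMod.coe_unitOfCoprime, ZMod.natCast_val, ZMod.cast_id]
    · intro a ha
      simp [ZMod.coe_unitOfCoprime]
  have hinv : (∏ u : (ZMod (p ^ 2))ˣ, u⁻¹) = ∏ u : (ZMod (p ^ 2))ˣ, u :=
    Fintype.prod_equiv (Equiv.inv _) _ _ (fun u => rfl)
  have hP : (∏ u : (ZMod (p ^ 2))ˣ, u) * (∏ u : (ZMod (p ^ 2))ˣ, u) = 1 := by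
    calc (∏ u : (ZMod (p ^ 2))ˣ, u) * (∏ u : (ZMod (p ^ 2))ˣ, u)
        = (∏ u : (ZMod (p ^ 2))ˣ, u) * (∏ u : (ZMod (p ^ 2))ˣ, u⁻¹) := by rw [hinv]
      _ = (∏ u : (ZMod (p ^ 2))ˣ, u) * (∏ u : (ZMod (p ^ 2))ˣ, u)⁻¹ := by
          rw [Finset.prod_inv_distrib]
      _ = 1 := by group
  have hcoe := map_prod (Units.coeHom (ZMod (p ^ 2)))
    (fun u : (ZMod (p ^ 2))ˣ => u) (Finset.univ : Finset ((ZMod (p ^ 2))ˣ))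
  simp only [Units.coeHom_apply] at hcoe
  rw [key, ← hcoe, ← Units.val_mul, hP, Units.val_one]

/-- Euler's theorem for `4` mod `p^2`. -/
lemma four_pow {p : ℕ} (hp : p.Prime) (h2 : ¬ 2 ∣ p) :
    (4 : ZMod (p ^ 2)) ^ (p * (p - 1)) = 1 := by
  haveI : NeZero (p ^ 2) := ⟨pow_ne_zero _ hp.ne_zero⟩
  have hc2 : Nat.Coprime 2 p := (Nat.prime_two.coprime_iff_not_dvd).mpr h2
  have hc4 : Nat.Coprime 4 (p ^ 2) := by
    have h := (hc2.pow_right 2).pow_left 2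
    rwa [show (2 : ℕ) ^ 2 = 4 by norm_num] at h
  have h := ZMod.pow_totient (ZMod.unitOfCoprime 4 hc4)
  have ht : (p ^ 2).totient = p * (p - 1) := by
    rw [Nat.totient_prime_pow hp (by norm_num)]
    simp [pow_one]
  rw [ht] at h
  have := congrArg (fun u : (ZMod (p ^ 2))ˣ => (u : ZMod (p ^ 2))) h
  simp only [Units.val_pow_eq_pow_val, ZMod.coe_unitOfCoprime, Units.val_one] at this
  rw [show ((4 : ℕ) : ZMod (p ^ 2)) = (4 : ZMod (p ^ 2)) by push_cast; ring] at this
  exact this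

end CD

/-- **Cosgrave–Dilcher**: a prime `p ≡ 1 (mod 6)` is 1-exceptional for `m = 3`
if and only if it is 1-exceptional for `m = 6`. -/
theorem one_exceptional_three_iff_six (p : ℕ) (hp : p.Prime) (hmod : p % 6 = 1) :
    (∏ i ∈ (Finset.Icc 1 ((p ^ 2 - 1) / 3)).filter (fun i => ¬ p ∣ i), i) ^ (p - 1)
        ≡ 1 [MOD p ^ 2] ↔
    (∏ i ∈ (Finset.Icc 1 ((p ^ 2 - 1) / 6)).filter (fun i => ¬ p ∣ i), i) ^ (p - 1)
        ≡ 1 [MOD p ^ 2] := by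
  classical
  obtain ⟨k, hpk⟩ : ∃ k, p = 6 * k + 1 := ⟨p / 6, by omega⟩
  have hk1 : 1 ≤ k := by have := hp.two_le; omega
  set n : ℕ := 6 * k ^ 2 + 2 * k with hn
  have hp2 : p ^ 2 = 6 * n + 1 := by rw [hpk, hn]; ring
  have h3 : (p ^ 2 - 1) / 3 = 2 * n := by omega
  have h6 : (p ^ 2 - 1) / 6 = n := by omega
  haveI : NeZero (p ^ 2) := ⟨pow_ne_zero _ hp.ne_zero⟩
  have hIcc : ∀ m : ℕ, Finset.Icc 1 m = Finset.Ioc 0 m := fun m => Finset.Icc_add_one_left_eq_Ioc 0 m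
  rw [h3, h6, hIcc, hIcc]
  have hmain : ∀ m : ℕ,
      ((∏ i ∈ (Finset.Ioc 0 m).filter (fun i => ¬ p ∣ i), i) ^ (p - 1) ≡ 1 [MOD p ^ 2])
        ↔ (CD.Q p 0 m) ^ (p - 1) = 1 := by
    intro m
    have hc : (((∏ i ∈ (Finset.Ioc 0 m).filter (fun i => ¬ p ∣ i), i) ^ (p - 1) : ℕ)
        : ZMod (p ^ 2)) = (CD.Q p 0 m) ^ (p - 1) := by
      unfold CD.Q
      push_cast
      ring
    rw [← ZMod.natCast_eq_natCast_iff, Nat.cast_one, hc]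
  rw [hmain (2 * n), hmain n]
  have hnd2 : ¬ p ∣ 2 := fun h => by have := Nat.le_of_dvd (by norm_num) h; omega
  have h2ndp : ¬ 2 ∣ p := by omega
  -- division facts
  have hkp : k * p = 6 * k ^ 2 + k := by rw [hpk]; ring
  have hdiv1 : n / p = k := by
    rw [show n = p * k + k by rw [hpk, hn]; ring, Nat.mul_add_div hp.pos,
      Nat.div_eq_of_lt (by omega)]
    omega
  have hdiv2 : (2 * n) / p = 2 * k := by
    rw [show 2 * n = p * (2 * k) + 2 * k by rw [hpk, hn]; ring, Nat.mul_add_div hp.pos,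
      Nat.div_eq_of_lt (by omega)]
    omega
  have hdiv3 : (3 * n) / p = 3 * k := by
    rw [show 3 * n = p * (3 * k) + 3 * k by rw [hpk, hn]; ring, Nat.mul_add_div hp.pos,
      Nat.div_eq_of_lt (by omega)]
    omega
  -- cardinalities
  have cardT : ((Finset.Ioc 0 n).filter (fun i => ¬ p ∣ i)).card = k * p := by
    rw [CD.card_filter_Ioc, hdiv1]; omega
  have cardV2 : ((Finset.Ioc 0 (2 * n)).filter (fun i => ¬ p ∣ i)).card = 2 * (k * p) := by
    rw [CD.card_filter_Ioc, hdiv2]; omega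
  have cardV3 : ((Finset.Ioc 0 (3 * n)).filter (fun i => ¬ p ∣ i)).card = 3 * (k * p) := by
    rw [CD.card_filter_Ioc, hdiv3]; omega
  have cardU : ((Finset.Ioc (2 * n) (3 * n)).filter (fun i => ¬ p ∣ i)).card = k * p := by
    have hsplit : ((Finset.Ioc 0 (3 * n)).filter (fun i => ¬ p ∣ i)).card
        = ((Finset.Ioc 0 (2 * n)).filter (fun i => ¬ p ∣ i)).card
          + ((Finset.Ioc (2 * n) (3 * n)).filter (fun i => ¬ p ∣ i)).card := by
      rw [← Finset.card_union_of_disjoint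
          (Finset.disjoint_filter_filter (CD.Ioc_disj 0 (2 * n) (3 * n))),
        ← Finset.filter_union, Finset.Ioc_union_Ioc_eq_Ioc (by omega) (by omega)]
    omega
  -- even/odd decomposition
  have heo : CD.Q p 0 (2 * n)
      = (2 ^ (k * p) * CD.Q p 0 n) * ((-2) ^ (k * p) * CD.Q p (2 * n) (3 * n)) := by
    have h := Finset.prod_filter_mul_prod_filter_not
      ((Finset.Ioc 0 (2 * n)).filter (fun i => ¬ p ∣ i)) (fun i => 2 ∣ i)
      (fun i => (i : ZMod (p ^ 2)))
    rw [CD.even_part hp hnd2 n, CD.odd_part hp hnd2 hp2, cardT, cardU] at h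
    have hQ : CD.Q p 0 (2 * n)
        = ∏ i ∈ (Finset.Ioc 0 (2 * n)).filter (fun i => ¬ p ∣ i), (i : ZMod (p ^ 2)) := rfl
    rw [hQ, ← h]
  have hbc : CD.Q p 0 (2 * n) = CD.Q p 0 n * CD.Q p n (2 * n) :=
    CD.Q_split p 0 n (2 * n) (by omega) (by omega)
  have hc_eq : CD.Q p n (2 * n)
      = ((2 : ZMod (p ^ 2)) ^ (k * p) * (-2) ^ (k * p)) * CD.Q p (2 * n) (3 * n) :=
    (CD.Q_isUnit hp 0 n).mul_left_cancel (by rw [← hbc, heo]; ring)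
  -- scalar is a (p-1)-th root of unity
  have hscal : (((2 : ZMod (p ^ 2)) ^ (k * p) * (-2) ^ (k * p))) ^ (p - 1) = 1 := by
    have h4 : (4 : ZMod (p ^ 2)) ^ (p * (p - 1)) = 1 := CD.four_pow hp h2ndp
    have hps : p - 1 = 6 * k := by omega
    have e1 : (2 : ZMod (p ^ 2)) ^ (k * p) * (-2) ^ (k * p)
        = (-1 : ZMod (p ^ 2)) ^ (k * p) * 4 ^ (k * p) := by
      rw [← mul_pow, ← mul_pow]
      norm_num
    have hneg : (((-1 : ZMod (p ^ 2)) ^ (k * p)) : ZMod (p ^ 2)) ^ (p - 1) = 1 := by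
      rw [← pow_mul, show k * p * (p - 1) = 2 * (3 * k ^ 2 * p) by rw [hps]; ring]
      exact Even.neg_one_pow (even_two_mul _)
    have h4' : ((4 : ZMod (p ^ 2)) ^ (k * p)) ^ (p - 1) = 1 := by
      rw [← pow_mul, show k * p * (p - 1) = p * (p - 1) * k by ring, pow_mul, h4, one_pow]
    rw [e1, mul_pow, hneg, h4', one_mul]
  have hcd : (CD.Q p n (2 * n)) ^ (p - 1) = (CD.Q p (2 * n) (3 * n)) ^ (p - 1) := by
    rw [hc_eq, mul_pow, hscal, one_mul]
  -- fourth power of the half product is 1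
  have hh : CD.Q p 0 (3 * n) = CD.Q p 0 n * CD.Q p n (2 * n) * CD.Q p (2 * n) (3 * n) := by
    rw [CD.Q_split p 0 (2 * n) (3 * n) (by omega) (by omega), hbc]
  have hfull : CD.Q p 0 (6 * n) * CD.Q p 0 (6 * n) = 1 := CD.full_sq hp hp2
  have hsplit6 : CD.Q p 0 (6 * n) = CD.Q p 0 (3 * n) * CD.Q p (3 * n) (6 * n) :=
    CD.Q_split p 0 (3 * n) (6 * n) (by omega) (by omega)
  have hrefl := CD.reflect hp2 (p := p) (n := n)
  set v := ((Finset.Ioc 0 (3 * n)).filter (fun i => ¬ p ∣ i)).card with hv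
  have hsgn : ((-1 : ZMod (p ^ 2)) ^ v) * ((-1 : ZMod (p ^ 2)) ^ v) = 1 := by
    rw [← pow_add, ← two_mul, pow_mul]
    norm_num
  have hquad : (CD.Q p 0 (3 * n)) ^ 4 = 1 := by
    have h1 : CD.Q p 0 (6 * n) = (-1 : ZMod (p ^ 2)) ^ v * (CD.Q p 0 (3 * n)) ^ 2 := by
      rw [hsplit6, hrefl]; ring
    calc (CD.Q p 0 (3 * n)) ^ 4
        = ((-1 : ZMod (p ^ 2)) ^ v * (CD.Q p 0 (3 * n)) ^ 2)
          * ((-1 : ZMod (p ^ 2)) ^ v * (CD.Q p 0 (3 * n)) ^ 2) := by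
          rw [mul_mul_mul_comm, hsgn, one_mul, ← pow_add]
      _ = CD.Q p 0 (6 * n) * CD.Q p 0 (6 * n) := by rw [← h1]
      _ = 1 := hfull
  have hh4 : (CD.Q p 0 (3 * n)) ^ (2 * (p - 1)) = 1 := by
    rw [show 2 * (p - 1) = 4 * (3 * k) by omega, pow_mul, hquad, one_pow]
  -- final bookkeeping
  obtain ⟨wc, hwc⟩ := CD.Q_pow_form hp n (2 * n)
  set x := (CD.Q p 0 n) ^ (p - 1) with hx
  set y := (CD.Q p n (2 * n)) ^ (p - 1) with hy
  have hxy2 : (x * y ^ 2) ^ 2 = 1 := by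
    have h1 : (CD.Q p 0 (3 * n)) ^ (2 * (p - 1)) = (x * y ^ 2) ^ 2 := by
      rw [hh, mul_comm 2 (p - 1), pow_mul, mul_pow, mul_pow, ← hcd, hx, hy]
      ring
    rw [← h1, hh4]
  have hc2p : Nat.Coprime 2 p := (Nat.prime_two.coprime_iff_not_dvd).mpr h2ndp
  have hc2 : Nat.Coprime 2 (p ^ 2) := hc2p.pow_right 2
  have hc4 : Nat.Coprime 4 (p ^ 2) := by
    have h := hc2.pow_left 2
    rwa [show (2 : ℕ) ^ 2 = 4 by norm_num] at h
  rw [hbc, mul_pow, ← hx, ← hy]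
  constructor
  · intro hxy
    have hy2 : y ^ 2 = 1 := by
      have h1 : (x * y ^ 2) ^ 2 = (x * y) ^ 2 * y ^ 2 := by ring
      rw [hxy, one_pow, one_mul] at h1
      rw [← h1, hxy2]
    have hy1 : y = 1 := CD.eq_one_of_pow hwc 2 hc2 hy2
    rwa [hy1, mul_one] at hxy
  · intro hx1
    have hy4 : y ^ 4 = 1 := by
      have h1 : (x * y ^ 2) ^ 2 = y ^ 4 := by rw [hx1]; ring
      rw [← h1, hxy2]
    have hy1 : y = 1 := CD.eq_one_of_pow hwc 4 hc4 hy4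
    rw [hx1, hy1, one_mul]
end

section
/- Let p be a prime. Then there exists an integer x with p² = 3x² + 3x + 1 if and only if there exists a positive integer q such that 4p = (2+√3)^q + (2−√3)^q (as real numbers, noting that (2+√3)⁻¹ = 2−√3). -/
lemma sqrt3_mul_self : Real.sqrt 3 * Real.sqrt 3 = 3 :=
  Real.mul_self_sqrt (by norm_num)

lemma pell_pow_real (n : ℕ) :
    ((2 : ℝ) + Real.sqrt 3) ^ n
        = (Pell.xn one_lt_two n : ℝ) + (Pell.yn one_lt_two n : ℝ) * Real.sqrt 3 ∧
      ((2 : ℝ) - Real.sqrt 3) ^ n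
        = (Pell.xn one_lt_two n : ℝ) - (Pell.yn one_lt_two n : ℝ) * Real.sqrt 3 := by
  induction n with
  | zero => simp
  | succ n ih =>
    obtain ⟨h1, h2⟩ := ih
    have hx : Pell.xn one_lt_two (n + 1) = Pell.xn one_lt_two n * 2 + 3 * Pell.yn one_lt_two n :=
      Pell.xn_succ one_lt_two n
    have hy : Pell.yn one_lt_two (n + 1) = Pell.xn one_lt_two n + Pell.yn one_lt_two n * 2 :=
      Pell.yn_succ one_lt_two n
    constructor
    · rw [pow_succ, h1, hx, hy]
      push_cast
      have h3 := sqrt3_mul_self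
      ring_nf
      nlinarith [h3]
    · rw [pow_succ, h2, hx, hy]
      push_cast
      have h3 := sqrt3_mul_self
      ring_nf
      nlinarith [h3]

lemma pell_sum_real (n : ℕ) :
    ((2 : ℝ) + Real.sqrt 3) ^ n + ((2 : ℝ) - Real.sqrt 3) ^ n
      = 2 * (Pell.xn one_lt_two n : ℝ) := by
  obtain ⟨h1, h2⟩ := pell_pow_real n
  rw [h1, h2]; ring

/-- A prime `p` satisfies `p² = 3x² + 3x + 1` for some integer `x` if and only if
`4p = (2+√3)^q + (2−√3)^q` for some positive integer `q`. -/
theorem pell_form_iff_power_form (p : ℕ) (hp : p.Prime) :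
    (∃ x : ℤ, (p : ℤ) ^ 2 = 3 * x ^ 2 + 3 * x + 1) ↔
    (∃ q : ℕ, 0 < q ∧
      (4 * p : ℝ) = (2 + Real.sqrt 3) ^ q + (2 - Real.sqrt 3) ^ q) := by
  have hp2 : 2 ≤ p := hp.two_le
  constructor
  · rintro ⟨x, hx⟩
    set y : ℤ := 2 * x + 1 with hy
    have hpell : (2 * (p : ℤ)) * (2 * p) = 3 * (y * y) + 1 := by rw [hy]; ring_nf; nlinarith [hx]
    set b : ℕ := y.natAbs with hb
    have hbb : (b : ℤ) * b = y * y := Int.natAbs_mul_self' y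
    have hnat : 2 * p * (2 * p) = 3 * (b * b) + 1 := by
      have h : ((2 * p * (2 * p) : ℕ) : ℤ) = ((3 * (b * b) + 1 : ℕ) : ℤ) := by
        push_cast
        push_cast at hbb
        linarith [hpell, hbb]
      exact_mod_cast h
    have hp' : 2 * p * (2 * p) - 3 * b * b = 1 := by
      rw [show 3 * b * b = 3 * (b * b) by ring]; omega
    obtain ⟨n, hxn, hyn⟩ := Pell.eq_pell one_lt_two hp'
    have hn0 : n ≠ 0 := by
      intro h
      rw [h, Pell.xn_zero] at hxn
      omega
    refine ⟨n, Nat.pos_of_ne_zero hn0, ?_⟩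
    rw [pell_sum_real, ← hxn]
    push_cast
    ring
  · rintro ⟨q, hq0, hq⟩
    rw [pell_sum_real] at hq
    have hxq : 2 * p = Pell.xn one_lt_two q := by
      have : ((4 * p : ℕ) : ℝ) = ((2 * Pell.xn one_lt_two q : ℕ) : ℝ) := by push_cast; linarith [hq]
      have h4 : 4 * p = 2 * Pell.xn one_lt_two q := Nat.cast_injective this
      omega
    have hpz := Pell.pell_eqz one_lt_two q
    have hxz : Pell.xz one_lt_two q = (Pell.xn one_lt_two q : ℤ) := rfl
    have hyz : Pell.yz one_lt_two q = (Pell.yn one_lt_two q : ℤ) := rfl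
    rw [hxz, hyz] at hpz
    set y : ℤ := (Pell.yn one_lt_two q : ℤ) with hydef
    have key : (2 * (p : ℤ)) * (2 * p) - 3 * y * y = 1 := by
      rw [show (2 * (p:ℤ)) = (Pell.xn one_lt_two q : ℤ) by exact_mod_cast congrArg (Nat.cast : ℕ → ℤ) hxq]
      convert hpz using 2
      rfl
    rcases Int.even_or_odd y with ⟨k, hk⟩ | ⟨k, hk⟩
    · exfalso
      rw [hk] at key
      have heven : Even (2 * (p:ℤ) * (2 * p) - 3 * (k + k) * (k + k)) :=
        ⟨2 * ((p:ℤ) * p) - 6 * (k * k), by ring⟩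
      rw [key] at heven
      norm_num at heven
    · refine ⟨k, ?_⟩
      rw [hk] at key
      nlinarith [key]
end

section
/- Let m ≥ 2 be an integer and p a prime with p ≡ 1 (mod m). Then (∏_{1 ≤ a ≤ (p²−1)/m, p ∤ a} a)^(p−1) ≡ 1 (mod p²) if and only if, in the field ℤ/pℤ, one has m⁻¹·(w_p − Σ_{a=1}^{(p−1)/m} a⁻¹) − Σ_{a=1}^{(p−1)/m} q_p(a) = 0, where w_p and q_p(a) denote the images in ℤ/pℤ of the Wilson quotient and the Fermat quotients, and a⁻¹ is the inverse of a in ℤ/pℤ. -/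
open Finset



section Ring
variable {R : Type*} [CommRing R] {ι : Type*} [DecidableEq ι]

lemma aux_pow_add (a x : R) (hx : x * x = 0) (n : ℕ) :
    (a + x) ^ (n + 1) = a ^ (n + 1) + ((n : R) + 1) * a ^ n * x := by
  induction n with
  | zero => ring
  | succ n ih =>
    rw [pow_succ, ih]
    push_cast
    linear_combination (((n:R)+1) * a ^ n) * hx

lemma aux_prod_one_add (s : Finset ι) (f : ι → R)
    (h : ∀ i ∈ s, ∀ j ∈ s, f i * f j = 0) :
    ∏ i ∈ s, (1 + f i) = 1 + ∑ i ∈ s, f i := by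
  induction s using Finset.induction_on with
  | empty => simp
  | @insert a s ha ih =>
    rw [prod_insert ha, sum_insert ha,
      ih (fun i hi j hj => h i (mem_insert_of_mem hi) j (mem_insert_of_mem hj))]
    have h0 : f a * ∑ i ∈ s, f i = 0 := by
      rw [Finset.mul_sum]
      exact Finset.sum_eq_zero fun i hi =>
        h a (mem_insert_self a s) i (mem_insert_of_mem hi)
    linear_combination h0

lemma aux_prod_add (s : Finset ι) (f : ι → R) (x : R) (hx : x * x = 0) :
    ∏ i ∈ s, (x + f i) = (∏ i ∈ s, f i) + x * ∑ i ∈ s, ∏ j ∈ s.erase i, f j := by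
  induction s using Finset.induction_on with
  | empty => simp
  | @insert a s ha ih =>
    rw [prod_insert ha, sum_insert ha, erase_insert ha, ih]
    have key : ∀ i ∈ s, ∏ j ∈ (insert a s).erase i, f j = f a * ∏ j ∈ s.erase i, f j := by
      intro i hi
      have hne : a ≠ i := fun h => ha (h ▸ hi)
      rw [Finset.erase_insert_of_ne hne, prod_insert (fun hc => ha (mem_of_mem_erase hc))]
    rw [Finset.sum_congr rfl key, prod_insert ha]
    rw [← Finset.mul_sum]
    linear_combination (∑ i ∈ s, ∏ j ∈ s.erase i, f j) * hx

end Ring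

lemma aux_blocks (p : ℕ) (hp : 0 < p) (j : ℕ) :
    ∏ a ∈ (Finset.Ioc 0 (j*p)).filter (fun a => ¬ p ∣ a), a
      = ∏ t ∈ range j, ∏ i ∈ Finset.Ioc 0 (p-1), (t*p + i) := by
  induction j with
  | zero => simp
  | succ j ih =>
    have hsplit : Finset.Ioc 0 ((j+1)*p) = Finset.Ioc 0 (j*p) ∪ Finset.Ioc (j*p) ((j+1)*p) :=
      (Finset.Ioc_union_Ioc_eq_Ioc (Nat.zero_le _)
        (Nat.mul_le_mul_right p (Nat.le_succ j))).symm
    have hdisj : Disjoint (Finset.Ioc 0 (j*p)) (Finset.Ioc (j*p) ((j+1)*p)) := by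
      rw [Finset.disjoint_left]; intro a ha hb
      simp only [mem_Ioc] at ha hb; omega
    rw [hsplit, filter_union, prod_union (Finset.disjoint_filter_filter hdisj), ih,
      prod_range_succ]
    congr 1
    have hset : (Finset.Ioc (j*p) ((j+1)*p)).filter (fun a => ¬ p ∣ a)
        = Finset.Ioc (j*p) (j*p + (p-1)) := by
      ext a
      simp only [mem_filter, mem_Ioc]
      constructor
      · rintro ⟨⟨h1, h2⟩, h3⟩
        refine ⟨h1, ?_⟩
        by_contra hcon
        push_neg at hcon
        have hje : (j+1)*p = j*p + p := by ring
        have : a = (j+1)*p := by omega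
        exact h3 ⟨j+1, by rw [this]; ring⟩
      · rintro ⟨h1, h2⟩
        have hje : (j+1)*p = j*p + p := by ring
        refine ⟨⟨h1, by omega⟩, ?_⟩
        rintro ⟨b, rfl⟩
        have hb1 : j + 1 ≤ b := by
          by_contra h
          push_neg at h
          have h' : b ≤ j := by omega
          have := Nat.mul_le_mul_left p h'
          have hc : p * j = j * p := Nat.mul_comm p j
          omega
        have hb2 : p*(j+1) ≤ p*b := Nat.mul_le_mul_left p hb1
        have he : p*(j+1) = j*p + p := by ring
        omega
    rw [hset]
    refine Finset.prod_nbij' (fun a => a - j*p) (fun i => j*p + i) ?_ ?_ ?_ ?_ ?_ <;>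
      intro a ha <;> simp only [mem_Ioc] at * <;> omega

lemma aux_decomp (p k : ℕ) (hp : 0 < p) (hkp : k < p) :
    ∏ a ∈ (Finset.Ioc 0 (k*p + k)).filter (fun a => ¬ p ∣ a), a
      = (∏ t ∈ range k, ∏ i ∈ Finset.Ioc 0 (p-1), (t*p + i)) * ∏ i ∈ Finset.Ioc 0 k, (k*p + i) := by
  have hsplit : Finset.Ioc 0 (k*p + k) = Finset.Ioc 0 (k*p) ∪ Finset.Ioc (k*p) (k*p + k) :=
    (Finset.Ioc_union_Ioc_eq_Ioc (Nat.zero_le _) (Nat.le_add_right _ _)).symm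
  have hdisj : Disjoint (Finset.Ioc 0 (k*p)) (Finset.Ioc (k*p) (k*p + k)) := by
    rw [Finset.disjoint_left]; intro a ha hb
    simp only [mem_Ioc] at ha hb; omega
  rw [hsplit, filter_union, prod_union (Finset.disjoint_filter_filter hdisj),
    aux_blocks p hp k]
  congr 1
  have hset : (Finset.Ioc (k*p) (k*p + k)).filter (fun a => ¬ p ∣ a)
      = Finset.Ioc (k*p) (k*p + k) := by
    apply Finset.filter_true_of_mem
    intro a ha
    simp only [mem_Ioc] at ha
    rintro ⟨b, rfl⟩
    have hb1 : k + 1 ≤ b := by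
      by_contra h
      push_neg at h
      have h' : b ≤ k := by omega
      have := Nat.mul_le_mul_left p h'
      have hc : p * k = k * p := Nat.mul_comm p k
      omega
    have hb2 : p*(k+1) ≤ p*b := Nat.mul_le_mul_left p hb1
    have he : p*(k+1) = k*p + p := by ring
    omega
  rw [hset]
  refine Finset.prod_nbij' (fun a => a - k*p) (fun i => k*p + i) ?_ ?_ ?_ ?_ ?_ <;>
    intro a ha <;> simp only [mem_Ioc] at * <;> omega

lemma aux_sum_univ_zmod (p : ℕ) [Fact p.Prime] (hodd : p ≠ 2) :
    ∑ x : ZMod p, x = 0 := by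
  have h : ∑ x : ZMod p, x = ∑ x : ZMod p, -x :=
    Fintype.sum_equiv (Equiv.neg (ZMod p)) _ _ (fun x => (neg_neg x).symm)
  have h' : ∑ x : ZMod p, -x = -∑ x : ZMod p, x := Finset.sum_neg_distrib (fun x => x)
  rw [h'] at h
  have h2 : (2 : ZMod p) ≠ 0 := by
    intro hc
    have hd : p ∣ 2 := (ZMod.natCast_eq_zero_iff 2 p).mp (by exact_mod_cast hc)
    exact hodd ((Nat.prime_dvd_prime_iff_eq (Fact.out) Nat.prime_two).mp hd)
  have h3 : (2 : ZMod p) * ∑ x : ZMod p, x = 0 := by linear_combination h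
  exact (mul_eq_zero.mp h3).resolve_left h2

lemma aux_inv_sum (p : ℕ) [Fact p.Prime] (hodd : p ≠ 2) :
    ∑ i ∈ Finset.Ioc 0 (p-1), ((i : ZMod p))⁻¹ = 0 := by
  have hb : ∑ i ∈ Finset.Ioc 0 (p-1), ((i : ZMod p))⁻¹
      = ∑ x ∈ Finset.univ.erase (0 : ZMod p), x⁻¹ := by
    have hp1 : 1 ≤ p := (Fact.out : p.Prime).pos
    refine Finset.sum_nbij' (fun i => (i : ZMod p)) (fun x => x.val) ?_ ?_ ?_ ?_ ?_
    · intro a ha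
      simp only [mem_Ioc] at ha
      simp only [Finset.mem_erase, Finset.mem_univ, and_true]
      rw [Ne, ZMod.natCast_eq_zero_iff]
      intro hdvd
      have := Nat.le_of_dvd (by omega) hdvd
      omega
    · intro x hx
      simp only [Finset.mem_erase, Finset.mem_univ, and_true] at hx
      simp only [mem_Ioc]
      have h1 : x.val < p := ZMod.val_lt x
      have h2 : x.val ≠ 0 := fun hc => hx ((ZMod.val_eq_zero x).mp hc)
      omega
    · intro a ha
      simp only [mem_Ioc] at ha
      exact ZMod.val_natCast_of_lt (by omega)
    · intro x hx
      exact ZMod.natCast_rightInverse x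
    · intro a ha; rfl
  rw [hb]
  have hsum : ∑ x ∈ Finset.univ.erase (0 : ZMod p), x⁻¹ + (0 : ZMod p)⁻¹
      = ∑ x : ZMod p, x⁻¹ := Finset.sum_erase_add _ _ (mem_univ 0)
  have hinv : ∑ x : ZMod p, x⁻¹ = ∑ x : ZMod p, x :=
    Fintype.sum_bijective Inv.inv inv_involutive.bijective _ _ (fun x => rfl)
  rw [inv_zero, add_zero] at hsum
  rw [hsum, hinv, aux_sum_univ_zmod p hodd]


lemma aux_cp (p : ℕ) (n : ℕ) (hn : (n : ZMod p) = 0) :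
    (p : ZMod (p^2)) * (n : ZMod (p^2)) = 0 := by
  obtain ⟨u, rfl⟩ := (ZMod.natCast_eq_zero_iff n p).mp hn
  have h := ZMod.natCast_self (p^2)
  push_cast at h ⊢
  linear_combination (u : ZMod (p^2)) * h

lemma aux_cz (p : ℕ) (hp : p.Prime) (z : ℤ) :
    (p : ZMod (p^2)) * (z : ZMod (p^2)) = 0 ↔ ((z : ZMod p) = 0) := by
  have h1 : ((p:ℕ) : ZMod (p^2)) = ((p:ℤ) : ZMod (p^2)) := by push_cast; rfl
  rw [h1, ← Int.cast_mul, ZMod.intCast_zmod_eq_zero_iff_dvd,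
    ZMod.intCast_zmod_eq_zero_iff_dvd]
  have hp0 : (p:ℤ) ≠ 0 := by exact_mod_cast hp.pos.ne'
  rw [show ((p^2:ℕ):ℤ) = (p:ℤ)*(p:ℤ) by push_cast; ring]
  exact mul_dvd_mul_iff_left hp0

/-- For `m ≥ 2` and a prime `p ≡ 1 (mod m)`, the Gauss factorial
`((p²−1)/m)_p!` raised to the power `p − 1` is `1` modulo `p²` if and only if
`(1/m)·(w_p − H_{(p−1)/m}) − Σ_{a=1}^{(p−1)/m} q_p(a) = 0` in `ℤ/pℤ`,
where `w_p = ((p−1)! + 1)/p` is the Wilson quotient and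
`q_p(a) = (a^(p−1) − 1)/p` are the Fermat quotients. -/
theorem gauss_factorial_criterion (m p : ℕ) (hm : 2 ≤ m) (hp : p.Prime)
    (hmod : p % m = 1) :
    (∏ a ∈ (Finset.Icc 1 ((p ^ 2 - 1) / m)).filter (fun a => ¬ p ∣ a), a) ^ (p - 1)
        ≡ 1 [MOD p ^ 2] ↔
    (m : ZMod p)⁻¹ *
        (((((Nat.factorial (p - 1) : ℤ) + 1) / (p : ℤ) : ℤ) : ZMod p)
          - ∑ a ∈ Finset.Icc 1 ((p - 1) / m), ((a : ZMod p))⁻¹)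
      - ∑ a ∈ Finset.Icc 1 ((p - 1) / m), (((((a : ℤ) ^ (p - 1) - 1) / (p : ℤ) : ℤ) : ZMod p))
      = 0 := by
  haveI : Fact p.Prime := ⟨hp⟩
  have hp2 : p ≠ 2 := by
    rintro rfl
    rcases Nat.lt_or_ge m 3 with h | h
    · interval_cases m <;> omega
    · rw [Nat.mod_eq_of_lt (by omega)] at hmod; omega
  have hp3 : 3 ≤ p := by have := hp.two_le; rcases Nat.lt_or_ge p 3 with h | h <;> omega
  have hmp : m < p := by
    by_contra h
    push_neg at h
    rcases eq_or_lt_of_le h with h' | h'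
    · rw [← h', Nat.mod_self] at hmod; omega
    · rw [Nat.mod_eq_of_lt h'] at hmod; omega
  have hmdvd : m ∣ p - 1 := by
    have h := Nat.div_add_mod p m
    exact ⟨p / m, by omega⟩
  set k := (p - 1) / m with hkdef
  have hmk : m * k = p - 1 := Nat.mul_div_cancel' hmdvd
  have hk1 : 1 ≤ k := by
    rcases Nat.eq_zero_or_pos k with h | h
    · rw [h, mul_zero] at hmk; omega
    · exact h
  have hkp : k < p := by have h1 : k ≤ p - 1 := hkdef ▸ Nat.div_le_self (p-1) m; omega
  have hN : (p ^ 2 - 1) / m = k * p + k := by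
    obtain ⟨q, rfl⟩ : ∃ q, p = q + 1 := ⟨p - 1, by omega⟩
    have hq' : m * k = q := by omega
    have key : (q+1) ^ 2 - 1 = m * (k * (q+1) + k) := by
      have e1 : m * (k * (q+1) + k) = (m*k) * (q+2) := by ring
      have e2 : (q+1)^2 = q*(q+2)+1 := by ring
      have e3 : (m*k) * (q+2) = q * (q+2) := by rw [hq']
      omega
    rw [key, Nat.mul_div_cancel_left _ (by omega : 0 < m)]
  have hIoc : ∀ n : ℕ, Finset.Icc 1 n = Finset.Ioc 0 n := by
    intro n; ext a; simp only [mem_Icc, mem_Ioc]; omega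
  rw [hN]
  simp only [hIoc]
  rw [← ZMod.natCast_eq_natCast_iff, Nat.cast_pow, Nat.cast_one]
  -- notation
  have hc : (p : ZMod (p^2)) * (p : ZMod (p^2)) = 0 := by
    have h := ZMod.natCast_self (p^2)
    push_cast at h
    linear_combination h
  -- Wilson quotient
  have hwdvd : (p:ℤ) ∣ (Nat.factorial (p-1) : ℤ) + 1 := by
    rw [← ZMod.intCast_zmod_eq_zero_iff_dvd]
    push_cast
    rw [ZMod.wilsons_lemma]
    ring
  set wZ : ℤ := ((Nat.factorial (p-1) : ℤ) + 1) / p with hwZdef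
  have hwz : (Nat.factorial (p-1) : ℤ) = p * wZ - 1 := by
    have h := Int.mul_ediv_cancel' hwdvd
    rw [hwZdef]
    linarith
  -- Fermat quotients
  have hq : ∀ a ∈ Finset.Ioc 0 k, (a:ℤ)^(p-1) = p * (((a:ℤ)^(p-1) - 1)/p) + 1 := by
    intro a ha
    simp only [mem_Ioc] at ha
    have hane : ((a:ℕ) : ZMod p) ≠ 0 := by
      rw [Ne, ZMod.natCast_eq_zero_iff]
      intro hd
      have := Nat.le_of_dvd (by omega) hd
      omega
    have hdvd : (p:ℤ) ∣ (a:ℤ)^(p-1) - 1 := by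
      rw [← ZMod.intCast_zmod_eq_zero_iff_dvd]
      push_cast
      rw [ZMod.pow_card_sub_one_eq_one hane]
      ring
    have h := Int.mul_ediv_cancel' hdvd
    linarith
  -- the sum S0 and its vanishing mod p
  set S0 : ℕ := ∑ i ∈ Finset.Ioc 0 (p-1), ∏ j ∈ (Finset.Ioc 0 (p-1)).erase i, j with hS0def
  have hne0 : ∀ n : ℕ, ∀ i ∈ Finset.Ioc 0 n, n < p → ((i:ℕ) : ZMod p) ≠ 0 := by
    intro n i hi hn
    simp only [mem_Ioc] at hi
    rw [Ne, ZMod.natCast_eq_zero_iff]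
    intro hd
    have := Nat.le_of_dvd (by omega) hd
    omega
  have hterm : ∀ n : ℕ, n < p → ∀ i ∈ Finset.Ioc 0 n,
      (∏ j ∈ (Finset.Ioc 0 n).erase i, (j : ZMod p))
        = (∏ j ∈ Finset.Ioc 0 n, (j : ZMod p)) * ((i : ZMod p))⁻¹ := by
    intro n hn i hi
    rw [eq_mul_inv_iff_mul_eq₀ (hne0 n i hi hn)]
    exact Finset.prod_erase_mul _ _ hi
  have hS0p : (S0 : ZMod p) = 0 := by
    rw [hS0def]
    push_cast
    rw [Finset.sum_congr rfl (hterm (p-1) (by omega)), ← Finset.mul_sum,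
      aux_inv_sum p hp2, mul_zero]
  have hcS0 : (p : ZMod (p^2)) * (S0 : ZMod (p^2)) = 0 := aux_cp p S0 hS0p
  -- factorial as a product over Ioc
  have hfacprod : ∀ n : ℕ, (∏ i ∈ Finset.Ioc 0 n, i) = Nat.factorial n := by
    intro n
    have h : Finset.Ioc 0 n = Finset.Ico 1 (n+1) := by
      ext a; simp only [mem_Ioc, mem_Ico]; omega
    rw [h, Finset.prod_Ico_id_eq_factorial]
  -- block product
  have hblock : ∀ t : ℕ, ((∏ i ∈ Finset.Ioc 0 (p-1), (t*p + i) : ℕ) : ZMod (p^2))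
      = (Nat.factorial (p-1) : ZMod (p^2)) := by
    intro t
    push_cast
    rw [aux_prod_add _ _ ((t : ZMod (p^2)) * (p : ZMod (p^2)))
      (by linear_combination ((t : ZMod (p^2)) * (t : ZMod (p^2))) * hc)]
    have h1 : (∏ i ∈ Finset.Ioc 0 (p-1), (i : ZMod (p^2)))
        = (Nat.factorial (p-1) : ZMod (p^2)) := by
      rw [← Nat.cast_prod, hfacprod]
    have h2 : (∑ i ∈ Finset.Ioc 0 (p-1), ∏ j ∈ (Finset.Ioc 0 (p-1)).erase i,
        (j : ZMod (p^2))) = (S0 : ZMod (p^2)) := by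
      rw [hS0def]; push_cast; rfl
    rw [h1, h2]
    linear_combination (t : ZMod (p^2)) * hcS0
  -- tail product
  set T0 : ℕ := ∑ i ∈ Finset.Ioc 0 k, ∏ j ∈ (Finset.Ioc 0 k).erase i, j with hT0def
  have htail : ((∏ i ∈ Finset.Ioc 0 k, (k*p + i) : ℕ) : ZMod (p^2))
      = (Nat.factorial k : ZMod (p^2))
        + (k : ZMod (p^2)) * (p : ZMod (p^2)) * (T0 : ZMod (p^2)) := by
    push_cast
    rw [aux_prod_add _ _ ((k : ZMod (p^2)) * (p : ZMod (p^2)))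
      (by linear_combination ((k : ZMod (p^2)) * (k : ZMod (p^2))) * hc)]
    have h1 : (∏ i ∈ Finset.Ioc 0 k, (i : ZMod (p^2)))
        = (Nat.factorial k : ZMod (p^2)) := by
      rw [← Nat.cast_prod, hfacprod]
    have h2 : (∑ i ∈ Finset.Ioc 0 k, ∏ j ∈ (Finset.Ioc 0 k).erase i,
        (j : ZMod (p^2))) = (T0 : ZMod (p^2)) := by
      rw [hT0def]; push_cast; rfl
    rw [h1, h2]
  -- full product
  have hP : ((∏ a ∈ (Finset.Ioc 0 (k*p + k)).filter (fun a => ¬ p ∣ a), a : ℕ) : ZMod (p^2))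
      = (Nat.factorial (p-1) : ZMod (p^2))^k
        * ((Nat.factorial k : ZMod (p^2))
            + (k : ZMod (p^2)) * (p : ZMod (p^2)) * (T0 : ZMod (p^2))) := by
    rw [aux_decomp p k hp.pos hkp, Nat.cast_mul, Nat.cast_prod]
    rw [Finset.prod_congr rfl (fun t _ => hblock t), Finset.prod_const, Finset.card_range,
      htail]
  have hoddp : Odd p := hp.odd_of_ne_two hp2
  have hcast2 : ((p - 2 : ℕ) : ZMod (p^2)) + 1 = (p : ZMod (p^2)) - 1 := by
    have h1 : ((p - 2 + 2 : ℕ) : ZMod (p^2)) = (p : ZMod (p^2)) := by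
      rw [show p - 2 + 2 = p from by omega]
    push_cast at h1
    linear_combination h1
  have hx_w : ((p : ZMod (p^2)) * (wZ : ZMod (p^2)))
      * ((p : ZMod (p^2)) * (wZ : ZMod (p^2))) = 0 := by
    linear_combination ((wZ : ZMod (p^2)) * (wZ : ZMod (p^2))) * hc
  have hx_t : ((k : ZMod (p^2)) * (p : ZMod (p^2)) * (T0 : ZMod (p^2)))
      * ((k : ZMod (p^2)) * (p : ZMod (p^2)) * (T0 : ZMod (p^2))) = 0 := by
    linear_combination ((k : ZMod (p^2)) * (k : ZMod (p^2))
      * (T0 : ZMod (p^2)) * (T0 : ZMod (p^2))) * hc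
  -- Wilson factor to the (p-1)-st power
  have hF : (Nat.factorial (p-1) : ZMod (p^2))
      = (p : ZMod (p^2)) * (wZ : ZMod (p^2)) - 1 := by
    have h : ((Nat.factorial (p-1) : ℤ) : ZMod (p^2))
        = (((p:ℤ) * wZ - 1 : ℤ) : ZMod (p^2)) := by rw [← hwz]
    push_cast at h
    exact h
  have hFp : (Nat.factorial (p-1) : ZMod (p^2))^(p-1)
      = 1 + (p : ZMod (p^2)) * (wZ : ZMod (p^2)) := by
    have he : p - 1 = (p - 2) + 1 := by omega
    have heven : Even ((p-2)+1) := by rw [← he]; exact Nat.Odd.sub_odd hoddp odd_one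
    have hodd_e : Odd (p-2) := Nat.not_even_iff_odd.mp (Nat.even_add_one.mp heven)
    rw [hF, show (p : ZMod (p^2)) * (wZ : ZMod (p^2)) - 1
        = -1 + (p : ZMod (p^2)) * (wZ : ZMod (p^2)) from by ring, he,
      aux_pow_add (-1) _ hx_w (p-2),
      Even.neg_one_pow heven, Odd.neg_one_pow hodd_e, hcast2]
    linear_combination (-(wZ : ZMod (p^2))) * hc
  have hFpk : ((Nat.factorial (p-1) : ZMod (p^2))^(p-1))^k
      = 1 + (k : ZMod (p^2)) * ((p : ZMod (p^2)) * (wZ : ZMod (p^2))) := by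
    have he : k = (k - 1) + 1 := by omega
    rw [hFp, he, aux_pow_add 1 _ hx_w (k-1), one_pow, one_pow,
      show ((k - 1 : ℕ) : ZMod (p^2)) + 1 = (k : ZMod (p^2)) from by
        rw [show (k : ℕ) = (k - 1) + 1 from by omega]; push_cast; ring]
    rw [← he]
    ring
  -- Fermat part
  have hKp : (Nat.factorial k : ZMod (p^2))^(p-1)
      = 1 + (p : ZMod (p^2))
          * ((∑ a ∈ Finset.Ioc 0 k, (((a:ℤ)^(p-1) - 1)/p) : ℤ) : ZMod (p^2)) := by
    rw [← hfacprod k, Nat.cast_prod, ← Finset.prod_pow]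
    have hterm2 : ∀ a ∈ Finset.Ioc 0 k, ((a : ZMod (p^2)))^(p-1)
        = 1 + (p : ZMod (p^2)) * ((((a:ℤ)^(p-1) - 1)/p : ℤ) : ZMod (p^2)) := by
      intro a ha
      have h2 : (((a:ℤ)^(p-1) : ℤ) : ZMod (p^2))
          = (((p : ℤ) * (((a:ℤ)^(p-1) - 1)/p) + 1 : ℤ) : ZMod (p^2)) := by rw [← hq a ha]
      push_cast at h2
      linear_combination h2
    have hpair : ∀ i ∈ Finset.Ioc 0 k, ∀ j ∈ Finset.Ioc 0 k,
        ((p : ZMod (p^2)) * ((((i:ℤ)^(p-1) - 1)/p : ℤ) : ZMod (p^2)))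
          * ((p : ZMod (p^2)) * ((((j:ℤ)^(p-1) - 1)/p : ℤ) : ZMod (p^2))) = 0 := by
      intro i _ j _
      linear_combination (((((i:ℤ)^(p-1) - 1)/p : ℤ) : ZMod (p^2))
        * ((((j:ℤ)^(p-1) - 1)/p : ℤ) : ZMod (p^2))) * hc
    rw [Finset.prod_congr rfl hterm2, aux_prod_one_add _ _ hpair]
    push_cast
    rw [Finset.mul_sum]
  -- tail to the (p-1)-st power
  have htp : ((Nat.factorial k : ZMod (p^2))
        + (k : ZMod (p^2)) * (p : ZMod (p^2)) * (T0 : ZMod (p^2)))^(p-1)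
      = (Nat.factorial k : ZMod (p^2))^(p-1)
        - (k : ZMod (p^2)) * (p : ZMod (p^2))
            * ((Nat.factorial k ^ (p-2) * T0 : ℕ) : ZMod (p^2)) := by
    have he : p - 1 = (p - 2) + 1 := by omega
    rw [he, aux_pow_add _ _ hx_t (p-2), hcast2]
    push_cast
    linear_combination ((k : ZMod (p^2)) * (Nat.factorial k : ZMod (p^2))^(p-2)
      * (T0 : ZMod (p^2))) * hc
  -- assemble everything
  set QZ : ℤ := ∑ a ∈ Finset.Ioc 0 k, (((a:ℤ)^(p-1) - 1)/p) with hQZdef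
  set Z : ℤ := (k:ℤ) * wZ + QZ - ((k * (Nat.factorial k ^ (p-2) * T0) : ℕ) : ℤ) with hZdef
  have hfinal : ((∏ a ∈ (Finset.Ioc 0 (k*p + k)).filter (fun a => ¬ p ∣ a), a : ℕ)
        : ZMod (p^2))^(p-1)
      = 1 + (p : ZMod (p^2)) * ((Z : ℤ) : ZMod (p^2)) := by
    rw [hP, mul_pow, pow_right_comm ((Nat.factorial (p-1) : ZMod (p^2))) k (p-1),
      hFpk, htp, hKp, hZdef]
    push_cast
    linear_combination ((k : ZMod (p^2)) * (wZ : ZMod (p^2)) * (QZ : ZMod (p^2))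
      - (k : ZMod (p^2)) * (k : ZMod (p^2)) * (wZ : ZMod (p^2))
        * (Nat.factorial k : ZMod (p^2))^(p-2) * (T0 : ZMod (p^2))) * hc
  rw [hfinal, add_eq_left, aux_cz p hp Z]
  -- now everything lives in ZMod p
  have hT0p : (T0 : ZMod p) = (Nat.factorial k : ZMod p)
      * ∑ i ∈ Finset.Ioc 0 k, ((i : ZMod p))⁻¹ := by
    rw [hT0def]
    push_cast
    rw [Finset.sum_congr rfl (hterm k hkp), ← Finset.mul_sum, ← Nat.cast_prod, hfacprod]
  have hkfne : ((Nat.factorial k : ℕ) : ZMod p) ≠ 0 := by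
    rw [Ne, ZMod.natCast_eq_zero_iff]
    intro hd
    have := (Nat.Prime.dvd_factorial hp).mp hd
    omega
  have hfe : (Nat.factorial k : ZMod p)^(p-2) * (Nat.factorial k : ZMod p) = 1 := by
    rw [← pow_succ, show p - 2 + 1 = p - 1 from by omega,
      ZMod.pow_card_sub_one_eq_one hkfne]
  have hm0 : (m : ZMod p) ≠ 0 := by
    rw [Ne, ZMod.natCast_eq_zero_iff]
    intro hd
    have := Nat.le_of_dvd (by omega) hd
    omega
  have hkm : (m : ZMod p) * (k : ZMod p) = -1 := by
    have h1 : ((m*k : ℕ) : ZMod p) = ((p-1 : ℕ) : ZMod p) := by rw [hmk]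
    have h2 : ((p - 1 + 1 : ℕ) : ZMod p) = ((p:ℕ) : ZMod p) := by
      rw [show p - 1 + 1 = p from by omega]
    push_cast at h1 h2
    rw [ZMod.natCast_self] at h2
    linear_combination h1 + h2
  have hkval : (k : ZMod p) = -(m : ZMod p)⁻¹ := by
    field_simp
    linear_combination hkm
  have hQcast : ((QZ : ℤ) : ZMod p)
      = ∑ a ∈ Finset.Ioc 0 k, ((((a:ℤ)^(p-1) - 1)/p : ℤ) : ZMod p) := by
    rw [hQZdef, Int.cast_sum]
  have hZp : ((Z : ℤ) : ZMod p)
      = -(m : ZMod p)⁻¹ * (((wZ : ℤ) : ZMod p) - ∑ i ∈ Finset.Ioc 0 k, ((i : ZMod p))⁻¹)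
        + ∑ a ∈ Finset.Ioc 0 k, ((((a:ℤ)^(p-1) - 1)/p : ℤ) : ZMod p) := by
    rw [hZdef]
    push_cast
    rw [hT0p, hkval, ← hQcast]
    linear_combination (-(-(m : ZMod p)⁻¹) * (∑ i ∈ Finset.Ioc 0 k, ((i : ZMod p))⁻¹)) * hfe
  rw [hZp]
  constructor
  · intro h
    linear_combination -h
  · intro h
    linear_combination -h
end

section
/- Let m be a positive integer and p a prime with p ≡ 1 (mod 2m). Then (∏_{1 ≤ a ≤ (p²−1)/m, p ∤ a} a)^(p−1) ≡ (∏_{1 ≤ a ≤ (p²−1)/(2m), p ∤ a} a)^(2(p−1)) (mod p²) if and only if the rational number B_p(1/m) − 2^p·B_p(1/(2m)) is congruent to 0 modulo p³, i.e. it can be written as p³·(a/b) with integers a, b and p ∤ b. -/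
open Finset

/-- `r` is a `p`-integral rational number. -/
def PIntAux (p : ℕ) (r : ℚ) : Prop := ∃ a b : ℤ, ¬ (p : ℤ) ∣ b ∧ r = a / b

namespace PIntAux

variable {p : ℕ}

lemma intCast (hp : p.Prime) (n : ℤ) : PIntAux p n :=
  ⟨n, 1, by
    constructor
    · intro h
      have : p ∣ 1 := by exact_mod_cast h
      have h2 := Nat.le_of_dvd one_pos this
      have := hp.one_lt
      omega
    · simp⟩

lemma natCast (hp : p.Prime) (n : ℕ) : PIntAux p n := by
  simpa using intCast hp n

lemma zero (hp : p.Prime) : PIntAux p 0 := by simpa using intCast hp 0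

lemma one (hp : p.Prime) : PIntAux p 1 := by simpa using intCast hp 1

lemma denom_ne_zero {b : ℤ} (hb : ¬ (p : ℤ) ∣ b) : (b : ℚ) ≠ 0 := by
  intro h
  exact hb (by simp [show b = 0 by exact_mod_cast h])

lemma add (hp : p.Prime) {x y : ℚ} (hx : PIntAux p x) (hy : PIntAux p y) :
    PIntAux p (x + y) := by
  obtain ⟨a, b, hb, rfl⟩ := hx
  obtain ⟨c, d, hd, rfl⟩ := hy
  have hpz : Prime (p : ℤ) := Nat.prime_iff_prime_int.mp hp
  refine ⟨a * d + c * b, b * d, ?_, ?_⟩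
  · intro h
    rcases hpz.dvd_mul.mp h with h | h
    exacts [hb h, hd h]
  · have hb0 := denom_ne_zero hb
    have hd0 := denom_ne_zero hd
    field_simp
    push_cast
    ring

lemma neg (hp : p.Prime) {x : ℚ} (hx : PIntAux p x) : PIntAux p (-x) := by
  obtain ⟨a, b, hb, rfl⟩ := hx
  exact ⟨-a, b, hb, by push_cast; ring⟩

lemma sub (hp : p.Prime) {x y : ℚ} (hx : PIntAux p x) (hy : PIntAux p y) :
    PIntAux p (x - y) := by
  simpa [sub_eq_add_neg] using add hp hx (neg hp hy)

lemma mul (hp : p.Prime) {x y : ℚ} (hx : PIntAux p x) (hy : PIntAux p y) :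
    PIntAux p (x * y) := by
  obtain ⟨a, b, hb, rfl⟩ := hx
  obtain ⟨c, d, hd, rfl⟩ := hy
  have hpz : Prime (p : ℤ) := Nat.prime_iff_prime_int.mp hp
  refine ⟨a * c, b * d, ?_, ?_⟩
  · intro h
    rcases hpz.dvd_mul.mp h with h | h
    exacts [hb h, hd h]
  · have hb0 := denom_ne_zero hb
    have hd0 := denom_ne_zero hd
    field_simp
    push_cast
    ring

lemma pow (hp : p.Prime) {x : ℚ} (hx : PIntAux p x) (n : ℕ) : PIntAux p (x ^ n) := by
  induction n with
  | zero => simpa using one hp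
  | succ n ih => rw [pow_succ]; exact mul hp ih hx

lemma sum (hp : p.Prime) {α : Type*} (s : Finset α) (f : α → ℚ)
    (h : ∀ i ∈ s, PIntAux p (f i)) : PIntAux p (∑ i ∈ s, f i) :=
  Finset.sum_induction f _ (fun _ _ ha hb => add hp ha hb) (zero hp) h

lemma inv_natCast (hp : p.Prime) {c : ℕ} (hc : ¬ p ∣ c) : PIntAux p (1 / (c : ℚ)) := by
  refine ⟨1, c, ?_, by push_cast; ring⟩
  intro h
  exact hc (by exact_mod_cast h)

end PIntAux

lemma pint_bernoulli {p : ℕ} (hp : p.Prime) : ∀ k, k + 1 < p → PIntAux p (bernoulli k) := by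
  intro k
  induction k using Nat.strong_induction_on with
  | _ k ih =>
    intro hk
    rcases Nat.eq_zero_or_pos k with rfl | hk0
    · simpa using PIntAux.one hp
    · have hsum := sum_bernoulli (k + 1)
      rw [if_neg (by omega), Finset.sum_range_succ] at hsum
      have hch : (((k + 1).choose k : ℕ) : ℚ) = ((k + 1 : ℕ) : ℚ) := by
        rw [Nat.choose_succ_self_right]
      have hk1 : ((k + 1 : ℕ) : ℚ) ≠ 0 := by
        exact_mod_cast Nat.succ_ne_zero k
      have hBk : bernoulli k =
          (- ∑ i ∈ Finset.range k, ((k + 1).choose i : ℚ) * bernoulli i) * (1 / ((k + 1 : ℕ) : ℚ)) := by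
        rw [hch] at hsum
        field_simp
        push_cast at hsum ⊢
        linarith [hsum]
      rw [hBk]
      refine PIntAux.mul hp (PIntAux.neg hp (PIntAux.sum hp _ _ fun i hi => ?_))
        (PIntAux.inv_natCast hp ?_)
      · exact PIntAux.mul hp (PIntAux.natCast hp _) (ih i (Finset.mem_range.mp hi) (by
          have := Finset.mem_range.mp hi; omega))
      · intro hdvd
        have := Nat.le_of_dvd (by omega) hdvd
        omega

lemma pint_p_mul_bernoulli {p : ℕ} (hp : p.Prime) (hp3 : 3 ≤ p) :
    PIntAux p ((p : ℚ) * bernoulli (p - 1)) := by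
  have hsum := sum_bernoulli p
  rw [if_neg (by omega)] at hsum
  have h1 : p = (p - 1) + 1 := by omega
  rw [h1, Finset.sum_range_succ, ← h1] at hsum
  have hch : ((p.choose (p - 1) : ℕ) : ℚ) = (p : ℚ) := by
    have h2 := Nat.choose_symm (show p - 1 ≤ p by omega)
    rw [show p - (p - 1) = 1 by omega] at h2
    rw [← h2, Nat.choose_one_right]
  rw [hch] at hsum
  have hPB : (p : ℚ) * bernoulli (p - 1) =
      - ∑ i ∈ Finset.range (p - 1), (p.choose i : ℚ) * bernoulli i := by
    linarith [hsum]
  rw [hPB]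
  refine PIntAux.neg hp (PIntAux.sum hp _ _ fun i hi => ?_)
  exact PIntAux.mul hp (PIntAux.natCast hp _)
    (pint_bernoulli hp i (by have := Finset.mem_range.mp hi; omega))

lemma bernoulli_prime_zero {p : ℕ} (hp : p.Prime) (hp3 : 3 ≤ p) : bernoulli p = 0 := by
  rw [bernoulli_eq_bernoulli'_of_ne_one (by omega)]
  exact bernoulli'_eq_zero_of_odd (hp.odd_of_ne_two (by omega)) (by omega)

lemma bernoulli_eval_add_nat (n : ℕ) (x : ℚ) (N : ℕ) :
    (Polynomial.bernoulli n).eval (x + N) = (Polynomial.bernoulli n).eval x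
      + n * ∑ j ∈ Finset.range N, (x + j) ^ (n - 1) := by
  induction N with
  | zero => simp
  | succ N ih =>
    have hx : x + ((N + 1 : ℕ) : ℚ) = 1 + (x + N) := by push_cast; ring
    rw [hx, Polynomial.bernoulli_eval_one_add, ih, Finset.sum_range_succ]
    ring

lemma bernoulli_eval_expand (n : ℕ) (x : ℚ) :
    (Polynomial.bernoulli n).eval x
      = ∑ i ∈ Finset.range (n + 1), bernoulli i * (n.choose i : ℚ) * x ^ (n - i) := by
  rw [Polynomial.bernoulli, Polynomial.eval_finset_sum]
  simp [Polynomial.eval_monomial]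

/-- Expansion of `(p²/c − y)^(p−1)` : equals `y^(p−1)` up to `p²` times a `p`-integer. -/
lemma pow_sub_expand {p c : ℕ} (hp : p.Prime) (hp3 : 3 ≤ p) (hc : ¬ p ∣ c)
    (y : ℚ) (hy : ∃ n : ℤ, y = (n : ℚ)) :
    ∃ w : ℚ, PIntAux p w ∧
      ((p : ℚ) ^ 2 / c - y) ^ (p - 1) = y ^ (p - 1) + (p : ℚ) ^ 2 * w := by
  have heven : Even (p - 1) :=
    Nat.Odd.sub_odd (hp.odd_of_ne_two (by omega)) odd_one
  refine ⟨∑ t ∈ Finset.range (p - 1),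
      y ^ t * (-1) ^ (p - 1 - t) * (p : ℚ) ^ (2 * (p - 1 - t) - 2)
        * (1 / (c : ℚ)) ^ (p - 1 - t) * ((p - 1).choose t : ℕ), ?_, ?_⟩
  · refine PIntAux.sum hp _ _ fun t _ => ?_
    obtain ⟨n, rfl⟩ := hy
    exact PIntAux.mul hp (PIntAux.mul hp (PIntAux.mul hp (PIntAux.mul hp
      (PIntAux.pow hp (PIntAux.intCast hp n) t)
      (PIntAux.pow hp (PIntAux.intCast hp (-1)) _))
      (PIntAux.pow hp (PIntAux.natCast hp p) _))
      (PIntAux.pow hp (PIntAux.inv_natCast hp hc) _)) (PIntAux.natCast hp _)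
  · rw [← neg_sub, Even.neg_pow heven, sub_eq_add_neg, add_pow]
    rw [show p - 1 + 1 = (p - 1) + 1 from rfl, Finset.sum_range_succ]
    rw [Nat.sub_self, pow_zero, Nat.choose_self, Nat.cast_one, mul_one, mul_one]
    have hkey : ∑ t ∈ Finset.range (p - 1),
        y ^ t * (-((p : ℚ) ^ 2 / c)) ^ (p - 1 - t) * ((p - 1).choose t : ℕ)
        = ∑ t ∈ Finset.range (p - 1), (p : ℚ) ^ 2 *
            (y ^ t * (-1) ^ (p - 1 - t) * (p : ℚ) ^ (2 * (p - 1 - t) - 2)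
              * (1 / (c : ℚ)) ^ (p - 1 - t) * ((p - 1).choose t : ℕ)) := by
      refine Finset.sum_congr rfl fun t ht => ?_
      have htlt := Finset.mem_range.mp ht
      have he1 : 1 ≤ p - 1 - t := by omega
      have hsplit : 2 * (p - 1 - t) = 2 + (2 * (p - 1 - t) - 2) := by omega
      have hc0 : (c : ℚ) ≠ 0 := by
        intro h
        exact hc (by simp [show c = 0 by exact_mod_cast h])
      have hnp : (-((p : ℚ) ^ 2 / c)) ^ (p - 1 - t)
          = (-1) ^ (p - 1 - t) * ((p : ℚ) ^ 2 * (p : ℚ) ^ (2 * (p - 1 - t) - 2)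
              * (1 / (c : ℚ)) ^ (p - 1 - t)) := by
        rw [neg_pow, div_pow, ← pow_mul]
        rw [show (2 : ℕ) * (p - 1 - t) = 2 + (2 * (p - 1 - t) - 2) from by omega, pow_add]
        rw [Nat.add_sub_cancel_left, one_div, inv_pow, div_eq_mul_inv]
      rw [hnp]
      ring
    rw [hkey, ← Finset.mul_sum]
    ring

/-- Key shift identity: `B_p(1/c)` in terms of `B_p(p²/c)` and a power sum. -/
lemma evalR1 {p c N : ℕ} (hp : p.Prime) (hp3 : 3 ≤ p) (hc : ¬ p ∣ c) (hc0 : 0 < c)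
    (hcN : c * N + 1 = p ^ 2) :
    ∃ w : ℚ, PIntAux p w ∧
      (Polynomial.bernoulli p).eval (1 / (c : ℚ))
        = (Polynomial.bernoulli p).eval ((p : ℚ) ^ 2 / c)
          - p * ((∑ a ∈ Finset.Icc 1 N, a ^ (p - 1) : ℕ) : ℚ) - (p : ℚ) ^ 3 * w := by
  have hcq : (c : ℚ) ≠ 0 := by positivity
  have hx : 1 / (c : ℚ) + N = (p : ℚ) ^ 2 / c := by
    have h1 : ((c : ℚ) * N + 1) = (p : ℚ) ^ 2 := by exact_mod_cast hcN
    field_simp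
    linarith
  have htr := bernoulli_eval_add_nat p (1 / (c : ℚ)) N
  rw [hx] at htr
  -- pointwise expansion
  have H : ∀ j : ℕ, ∃ w : ℚ, PIntAux p w ∧
      ((p : ℚ) ^ 2 / c - ((j : ℚ) + 1)) ^ (p - 1)
        = ((j : ℚ) + 1) ^ (p - 1) + (p : ℚ) ^ 2 * w :=
    fun j => pow_sub_expand hp hp3 hc _ ⟨(j : ℤ) + 1, by push_cast; ring⟩
  choose w hw1 hw2 using H
  -- rewrite the sum
  have hsum : ∑ j ∈ Finset.range N, (1 / (c : ℚ) + j) ^ (p - 1)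
      = ∑ j ∈ Finset.range N, (((j : ℚ) + 1) ^ (p - 1) + (p : ℚ) ^ 2 * w j) := by
    rw [← Finset.sum_range_reflect]
    refine Finset.sum_congr rfl fun j hj => ?_
    have hjN := Finset.mem_range.mp hj
    have hcast : ((N - 1 - j : ℕ) : ℚ) = (N : ℚ) - ((j : ℚ) + 1) := by
      have : N - 1 - j = N - (j + 1) := by omega
      rw [this, Nat.cast_sub (by omega)]
      push_cast
      ring
    rw [hcast, ← hw2 j]
    congr 1
    rw [← hx]
    ring
  have hT : ((∑ a ∈ Finset.Icc 1 N, a ^ (p - 1) : ℕ) : ℚ)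
      = ∑ j ∈ Finset.range N, ((j : ℚ) + 1) ^ (p - 1) := by
    rw [← Finset.Ico_add_one_right_eq_Icc, Finset.sum_Ico_eq_sum_range]
    push_cast
    refine Finset.sum_congr (by norm_num) fun j _ => ?_
    ring
  refine ⟨∑ j ∈ Finset.range N, w j, PIntAux.sum hp _ _ fun j _ => hw1 j, ?_⟩
  rw [hsum, Finset.sum_add_distrib, ← Finset.mul_sum] at htr
  rw [hT]
  rw [htr]
  ring

/-- `B_p(p²/c') − 2^p B_p(p²/c) ≡ 0 (mod p³)` when `c' * 2 = ...`, stated with `c` and `2c`. -/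
lemma evalR2 {p c : ℕ} (hp : p.Prime) (hp3 : 3 ≤ p) (hc : ¬ p ∣ (2 * c)) (hc0 : 0 < c) :
    ∃ s : ℚ, PIntAux p s ∧
      (Polynomial.bernoulli p).eval ((p : ℚ) ^ 2 / c)
          - 2 ^ p * (Polynomial.bernoulli p).eval ((p : ℚ) ^ 2 / (2 * c))
        = (p : ℚ) ^ 3 * s := by
  haveI := Fact.mk hp
  have hcq : (c : ℚ) ≠ 0 := by positivity
  have h2cq : ((2 * c : ℕ) : ℚ) ≠ 0 := by positivity
  -- Fermat: p ∣ 2^p − 2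
  have hfermat : (p : ℤ) ∣ 2 ^ p - 2 := by
    have h1 : ((2 ^ p - 2 : ℤ) : ZMod p) = 0 := by
      push_cast
      rw [ZMod.pow_card]
      ring
    exact (ZMod.intCast_zmod_eq_zero_iff_dvd _ _).mp h1
  obtain ⟨z, hz⟩ := hfermat
  set h : ℚ := (p : ℚ) ^ 2 / (2 * c) with hh
  have h2h : (p : ℚ) ^ 2 / c = 2 * h := by
    rw [hh]; field_simp
  rw [h2h, bernoulli_eval_expand, bernoulli_eval_expand, Finset.mul_sum,
    ← Finset.sum_sub_distrib]
  have hterm : ∀ i ∈ Finset.range (p + 1), ∃ s : ℚ, PIntAux p s ∧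
      bernoulli i * (p.choose i : ℚ) * (2 * h) ^ (p - i)
        - 2 ^ p * (bernoulli i * (p.choose i : ℚ) * h ^ (p - i)) = (p : ℚ) ^ 3 * s := by
    intro i hi
    have hip := Finset.mem_range.mp hi
    rcases eq_or_lt_of_le (Nat.lt_succ_iff.mp hip) with heq | hlt
    · -- i = p : B_p = 0
      refine ⟨0, PIntAux.zero hp, ?_⟩
      rw [heq, bernoulli_prime_zero hp hp3]
      ring
    · rcases eq_or_lt_of_le (Nat.lt_iff_add_one_le.mp hlt) with heq1 | hlt1
      · -- i = p − 1
        have hie : i = p - 1 := by omega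
        have hpi : p - i = 1 := by omega
        refine ⟨(p : ℚ) * bernoulli (p - 1) * (1 / ((2 * c : ℕ) : ℚ)) * (-(z : ℚ)), ?_, ?_⟩
        · exact PIntAux.mul hp (PIntAux.mul hp (pint_p_mul_bernoulli hp hp3)
            (PIntAux.inv_natCast hp hc)) (PIntAux.neg hp (PIntAux.intCast hp z))
        · have hch : (p.choose (p - 1) : ℚ) = (p : ℚ) := by
            have h2 := Nat.choose_symm (show p - 1 ≤ p by omega)
            rw [show p - (p - 1) = 1 by omega] at h2
            rw [← h2, Nat.choose_one_right]
          have hzq : (2 : ℚ) - 2 ^ p = -((p : ℚ) * z) := by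
            have : ((2 ^ p - 2 : ℤ) : ℚ) = ((p * z : ℤ) : ℚ) := by exact_mod_cast hz
            push_cast at this
            linarith
          rw [hie] at hpi ⊢
          rw [hpi, pow_one, pow_one]
          have : bernoulli (p - 1) * (p.choose (p - 1) : ℚ) * (2 * h)
              - 2 ^ p * (bernoulli (p - 1) * (p.choose (p - 1) : ℚ) * h)
              = bernoulli (p - 1) * (p.choose (p - 1) : ℚ) * h * ((2 : ℚ) - 2 ^ p) := by ring
          rw [this, hzq, hch, hh]
          push_cast
          field_simp
      · -- i ≤ p − 2
        have hpi2 : 2 ≤ p - i := by omega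
        refine ⟨bernoulli i * (p.choose i : ℚ) * (p : ℚ) ^ (2 * (p - i) - 3)
            * (1 / ((2 * c : ℕ) : ℚ)) ^ (p - i) * ((2 ^ (p - i) - 2 ^ p : ℤ) : ℚ), ?_, ?_⟩
        · exact PIntAux.mul hp (PIntAux.mul hp (PIntAux.mul hp (PIntAux.mul hp
            (pint_bernoulli hp i (by omega)) (PIntAux.natCast hp _))
            (PIntAux.pow hp (PIntAux.natCast hp p) _))
            (PIntAux.pow hp (PIntAux.inv_natCast hp hc) _)) (PIntAux.intCast hp _)
        · have hhp : h ^ (p - i) = (p : ℚ) ^ (2 * (p - i)) * (1 / ((2 * c : ℕ) : ℚ)) ^ (p - i) := by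
            rw [hh, div_pow, ← pow_mul]
            push_cast
            field_simp
            rw [← mul_pow, mul_one_div_cancel (mul_ne_zero two_ne_zero hcq), one_pow]
          have hsplit : (p : ℚ) ^ (2 * (p - i)) = (p : ℚ) ^ 3 * (p : ℚ) ^ (2 * (p - i) - 3) := by
            rw [← pow_add]
            congr 1
            omega
          have hlhs : bernoulli i * (p.choose i : ℚ) * (2 * h) ^ (p - i)
              - 2 ^ p * (bernoulli i * (p.choose i : ℚ) * h ^ (p - i))
              = bernoulli i * (p.choose i : ℚ) * h ^ (p - i) * ((2 : ℚ) ^ (p - i) - 2 ^ p) := by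
            rw [mul_pow]
            ring
          have hzc : ((2 ^ (p - i) - 2 ^ p : ℤ) : ℚ) = (2 : ℚ) ^ (p - i) - 2 ^ p := by
            push_cast
            ring
          rw [hlhs, hhp, hsplit, hzc]
          ring
  choose s hs1 hs2 using hterm
  refine ⟨∑ i ∈ (Finset.range (p + 1)).attach, s i i.2, ?_, ?_⟩
  · exact PIntAux.sum hp _ _ fun i _ => hs1 i i.2
  · rw [← Finset.sum_attach (Finset.range (p + 1))
      (fun i => bernoulli i * (p.choose i : ℚ) * (2 * h) ^ (p - i)
        - 2 ^ p * (bernoulli i * (p.choose i : ℚ) * h ^ (p - i)))]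
    rw [Finset.mul_sum]
    exact Finset.sum_congr rfl fun i _ => hs2 i i.2

lemma int_coprime_of_not_dvd {p : ℕ} (hp : p.Prime) {d : ℤ} (hd : ¬ (p : ℤ) ∣ d) :
    IsCoprime (p : ℤ) d := by
  rw [Int.isCoprime_iff_gcd_eq_one]
  have h1 : ¬ p ∣ d.natAbs := by
    intro h
    exact hd (Int.natAbs_dvd_natAbs.mp (by simpa using h))
  have := (Nat.Prime.coprime_iff_not_dvd hp).mpr h1
  simpa [Int.gcd] using this

lemma pcube_iff {p : ℕ} (hp : p.Prime) (hp3 : 3 ≤ p) (X : ℤ) (s E : ℚ) (hs : PIntAux p s)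
    (hE : E = (p : ℚ) * (X : ℚ) + (p : ℚ) ^ 3 * s) :
    (∃ a b : ℤ, ¬ (p : ℤ) ∣ b ∧ E = (p : ℚ) ^ 3 * ((a : ℚ) / (b : ℚ)))
      ↔ (p : ℤ) ^ 2 ∣ X := by
  have hpq : (p : ℚ) ≠ 0 := Nat.cast_ne_zero.mpr (by omega)
  constructor
  · rintro ⟨a, b, hb, hEq⟩
    obtain ⟨cc, d, hd, hcd⟩ := (PIntAux.sub hp (⟨a, b, hb, rfl⟩ : PIntAux p ((a : ℚ) / (b : ℚ))) hs : PIntAux p _)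
    have hd0 : (d : ℚ) ≠ 0 := by
      intro h0
      exact hd (by simp [show d = 0 by exact_mod_cast h0])
    have h1 : (p : ℚ) * (X : ℚ) = (p : ℚ) ^ 3 * ((a : ℚ) / b - s) := by
      rw [hE] at hEq
      linarith
    rw [hcd] at h1
    have hX : (X : ℚ) = (p : ℚ) ^ 2 * ((cc : ℚ) / (d : ℚ)) :=
      mul_left_cancel₀ hpq (h1.trans (by ring))
    have hint : X * d = (p : ℤ) ^ 2 * cc := by
      have h2 : (X : ℚ) * d = ((p : ℚ)) ^ 2 * cc := by
        rw [hX]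
        field_simp
      exact_mod_cast h2
    have hcop : IsCoprime ((p : ℤ) ^ 2) d := (int_coprime_of_not_dvd hp hd).pow_left
    exact hcop.dvd_of_dvd_mul_right (Dvd.intro _ hint.symm)
  · rintro ⟨cc, hcc⟩
    obtain ⟨a, b, hb, hab⟩ := (PIntAux.add hp (PIntAux.intCast hp cc) hs : PIntAux p _)
    refine ⟨a, b, hb, ?_⟩
    rw [hE, ← hab]
    have hXq : (X : ℚ) = (p : ℚ) ^ 2 * (cc : ℚ) := by exact_mod_cast congrArg (Int.cast : ℤ → ℚ) hcc
    rw [hXq]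
    ring

/-- Product of `(a)^{p-1}` over a set of non-multiples of `p`, in `ZMod p²`. -/
lemma key_prod (p : ℕ) (hp : p.Prime) (hp3 : 3 ≤ p) (s : Finset ℕ) :
    (∀ a ∈ s, ¬ p ∣ a) →
    ∃ t : ZMod (p ^ 2), ((∏ a ∈ s, a : ℕ) : ZMod (p ^ 2)) ^ (p - 1) = 1 + (p : ZMod (p ^ 2)) * t
      ∧ (p : ZMod (p ^ 2)) * t = ∑ a ∈ s, ((a : ZMod (p ^ 2)) ^ (p - 1) - 1) := by
  classical
  have hpp : (p : ZMod (p ^ 2)) * (p : ZMod (p ^ 2)) = 0 := by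
    have h0 : ((p * p : ℕ) : ZMod (p ^ 2)) = 0 := by
      rw [show p * p = p ^ 2 by ring]
      exact ZMod.natCast_self _
    push_cast at h0
    exact h0
  induction s using Finset.induction_on with
  | empty => exact fun _ => ⟨0, by simp, by simp⟩
  | insert a s' ha ih =>
    intro hs
    obtain ⟨t, h1, h2⟩ := ih fun b hb => hs b (Finset.mem_insert_of_mem hb)
    have hnd : ¬ p ∣ a := hs a (Finset.mem_insert_self a s')
    have ha1 : 1 ≤ a := by
      rcases Nat.eq_zero_or_pos a with rfl | h
      · exact absurd (dvd_zero p) hnd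
      · exact h
    have hco : Nat.Coprime a p := Nat.coprime_comm.mp (hp.coprime_iff_not_dvd.mpr hnd)
    have hf : a ^ (p - 1) ≡ 1 [MOD p] := by
      simpa [Nat.totient_prime hp] using Nat.ModEq.pow_totient hco
    have h1le : 1 ≤ a ^ (p - 1) := Nat.one_le_pow _ _ (by omega)
    have hdvd : p ∣ a ^ (p - 1) - 1 := (Nat.modEq_iff_dvd' h1le).mp hf.symm
    obtain ⟨d, hd⟩ := hdvd
    have had : a ^ (p - 1) = 1 + p * d := by omega
    have hcast : ((a : ZMod (p ^ 2))) ^ (p - 1) = 1 + p * d := by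
      rw [← Nat.cast_pow, had]
      push_cast
      ring
    refine ⟨d + t + p * d * t, ?_, ?_⟩
    · rw [Finset.prod_insert ha]
      push_cast
      push_cast at h1
      rw [mul_pow, hcast, h1]
      ring
    · rw [Finset.sum_insert ha, ← h2, hcast]
      have : (p : ZMod (p ^ 2)) * (↑d + t + ↑p * ↑d * t)
          = ↑p * ↑d + ↑p * t + (↑p * ↑p) * (↑d * t) := by ring
      rw [this, hpp]
      ring

lemma sum_sub_one_card {R : Type*} [CommRing R] (s : Finset ℕ) (f : ℕ → R) :
    ∑ a ∈ s, (f a - 1) = (∑ a ∈ s, f a) - (s.card : R) := by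
  rw [Finset.sum_sub_distrib]
  simp

/-- For `m ≥ 1` and a prime `p ≡ 1 (mod 2m)`:
`(((p²−1)/m)_p!)^(p−1) ≡ (((p²−1)/(2m))_p!)^(2(p−1)) (mod p²)` if and only if
`B_p(1/m) − 2^p·B_p(1/(2m)) ≡ 0 (mod p³)` as a rational number. -/
theorem gauss_factorial_iff_bernoulli (m p : ℕ) (hm : 0 < m) (hp : p.Prime)
    (hmod : p % (2 * m) = 1) :
    (∏ a ∈ (Finset.Icc 1 ((p ^ 2 - 1) / m)).filter (fun a => ¬ p ∣ a), a) ^ (p - 1)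
        ≡ (∏ a ∈ (Finset.Icc 1 ((p ^ 2 - 1) / (2 * m))).filter (fun a => ¬ p ∣ a), a)
          ^ (2 * (p - 1)) [MOD p ^ 2] ↔
    ∃ a b : ℤ, ¬ (p : ℤ) ∣ b ∧
      (Polynomial.bernoulli p).eval (1 / (m : ℚ))
          - 2 ^ p * (Polynomial.bernoulli p).eval (1 / (2 * m : ℚ))
        = (p : ℚ) ^ 3 * ((a : ℚ) / (b : ℚ)) := by
  classical
  -- ARITHMETIC SETUP
  obtain ⟨k, hpk⟩ : ∃ k, 2 * m * k + 1 = p := by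
    refine ⟨p / (2 * m), ?_⟩
    have h := Nat.div_add_mod p (2 * m)
    rw [hmod] at h
    exact h
  have hk1 : 1 ≤ k := by
    rcases Nat.eq_zero_or_pos k with rfl | h
    · have := hp.one_lt
      omega
    · exact h
  have hk2 : 2 * k ≤ 2 * m * k := by
    calc 2 * k = 2 * 1 * k := by ring
    _ ≤ 2 * m * k := Nat.mul_le_mul_right k (by omega)
  have hmk : 2 * m ≤ 2 * m * k := by
    calc 2 * m = 2 * m * 1 := by ring
    _ ≤ 2 * m * k := Nat.mul_le_mul_left _ hk1
  have hp3 : 3 ≤ p := by omega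
  obtain ⟨N2, hN2def⟩ : ∃ x, x = k * (p + 1) := ⟨_, rfl⟩
  obtain ⟨N1, hN1def⟩ : ∃ x, x = 2 * N2 := ⟨_, rfl⟩
  have hsq : p ^ 2 = 2 * m * N2 + 1 := by
    rw [hN2def, pow_two, ← hpk]
    ring
  have hdiv2 : (p ^ 2 - 1) / (2 * m) = N2 := by
    rw [show p ^ 2 - 1 = 2 * m * N2 by omega]
    exact Nat.mul_div_cancel_left N2 (by omega)
  have hsq1 : p ^ 2 = m * N1 + 1 := by
    rw [hN1def, hN2def, pow_two, ← hpk]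
    ring
  have hdiv1 : (p ^ 2 - 1) / m = N1 := by
    rw [show p ^ 2 - 1 = m * N1 by omega]
    exact Nat.mul_div_cancel_left N1 hm
  have hpm : ¬ p ∣ 2 * m := by
    intro hdvd
    have h1 := Nat.le_of_dvd (by omega) hdvd
    omega
  have hpm' : ¬ p ∣ m := fun h => hpm (h.mul_left 2)
  have hkp : k < p := by omega
  have h2kp : 2 * k < p := by omega
  have hN2p : N2 / p = k := by
    rw [hN2def, show k * (p + 1) = p * k + k by ring, Nat.mul_add_div (by omega),
      Nat.div_eq_of_lt hkp]
    omega
  have hN1p : N1 / p = 2 * k := by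
    rw [hN1def, hN2def, show 2 * (k * (p + 1)) = p * (2 * k) + 2 * k by ring,
      Nat.mul_add_div (by omega), Nat.div_eq_of_lt h2kp]
    omega
  have hN2k : N2 - k = k * p := by
    have h0 : k * (p + 1) = k * p + k := by ring
    omega
  -- CARD COUNTS
  have hcard : ∀ N : ℕ, ((Finset.Icc 1 N).filter (fun a => ¬ p ∣ a)).card = N - N / p := by
    intro N
    have h1 := Finset.card_filter_add_card_filter_not
      (s := Finset.Icc 1 N) (p := fun a => p ∣ a)
    have h2 : ((Finset.Icc 1 N).filter (fun a => p ∣ a)).card = N / p := by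
      rw [show Finset.Icc 1 N = Finset.Ioc 0 N from Finset.Icc_add_one_left_eq_Ioc 0 N]
      exact Nat.Ioc_filter_dvd_card_eq_div N p
    have h3 : (Finset.Icc 1 N).card = N := by
      rw [Nat.card_Icc]
      omega
    omega
  obtain ⟨T1n, hT1def⟩ : ∃ x, x = ∑ a ∈ Finset.Icc 1 N1, a ^ (p - 1) := ⟨_, rfl⟩
  obtain ⟨T2n, hT2def⟩ : ∃ x, x = ∑ a ∈ Finset.Icc 1 N2, a ^ (p - 1) := ⟨_, rfl⟩
  -- p ∣ T2n
  haveI := Fact.mk hp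
  have hpT2 : p ∣ T2n := by
    have hzero : ((T2n : ℕ) : ZMod p) = 0 := by
      rw [hT2def]
      push_cast
      rw [← Finset.sum_filter_add_sum_filter_not (Finset.Icc 1 N2) (fun a => p ∣ a)]
      have hz1 : ∑ a ∈ (Finset.Icc 1 N2).filter (fun a => p ∣ a), ((a : ZMod p)) ^ (p - 1) = 0 := by
        refine Finset.sum_eq_zero fun a ha => ?_
        have := (Finset.mem_filter.mp ha).2
        rw [(ZMod.natCast_eq_zero_iff a p).mpr this]
        exact zero_pow (by omega)
      have hz2 : ∑ a ∈ (Finset.Icc 1 N2).filter (fun a => ¬ p ∣ a), ((a : ZMod p)) ^ (p - 1)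
          = (((Finset.Icc 1 N2).filter (fun a => ¬ p ∣ a)).card : ZMod p) := by
        rw [Finset.sum_congr rfl (fun a ha => ?_), Finset.sum_const, nsmul_eq_mul, mul_one]
        exact ZMod.pow_card_sub_one_eq_one
          (by
            intro h0
            exact (Finset.mem_filter.mp ha).2 ((ZMod.natCast_eq_zero_iff a p).mp h0))
      rw [hz1, hz2, hcard N2, hN2p, zero_add, hN2k]
      push_cast
      rw [ZMod.natCast_self]
      ring
    exact (ZMod.natCast_eq_zero_iff T2n p).mp hzero
  obtain ⟨t2i, ht2i⟩ := hpT2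
  -- PART A : reduce LHS to divisibility
  rw [hdiv1, hdiv2]
  have hpp : (p : ZMod (p ^ 2)) * (p : ZMod (p ^ 2)) = 0 := by
    have h0 : ((p * p : ℕ) : ZMod (p ^ 2)) = 0 := by
      rw [show p * p = p ^ 2 by ring]
      exact ZMod.natCast_self _
    push_cast at h0
    exact h0
  have hp2z : (p : ZMod (p ^ 2)) ^ 2 = 0 := by
    rw [← hpp]
    ring
  obtain ⟨t1, ht1, ht1'⟩ := key_prod p hp hp3 ((Finset.Icc 1 N1).filter (fun a => ¬ p ∣ a))
    (fun a ha => (Finset.mem_filter.mp ha).2)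
  obtain ⟨t2, ht2, ht2'⟩ := key_prod p hp hp3 ((Finset.Icc 1 N2).filter (fun a => ¬ p ∣ a))
    (fun a ha => (Finset.mem_filter.mp ha).2)
  have hfull : ∀ N : ℕ,
      ∑ a ∈ (Finset.Icc 1 N).filter (fun a => ¬ p ∣ a), ((a : ZMod (p ^ 2)) ^ (p - 1))
      = ((∑ a ∈ Finset.Icc 1 N, a ^ (p - 1) : ℕ) : ZMod (p ^ 2)) := by
    intro N
    have hsplit := Finset.sum_filter_add_sum_filter_not (Finset.Icc 1 N) (fun a => p ∣ a)
      (fun a => ((a : ZMod (p ^ 2)) ^ (p - 1)))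
    have hz : ∑ a ∈ (Finset.Icc 1 N).filter (fun a => p ∣ a),
        ((a : ZMod (p ^ 2)) ^ (p - 1)) = 0 := by
      refine Finset.sum_eq_zero fun a ha => ?_
      obtain ⟨b, rfl⟩ := (Finset.mem_filter.mp ha).2
      push_cast
      rw [mul_pow, show p - 1 = 2 + (p - 3) by omega, pow_add, hp2z]
      ring
    push_cast
    rw [← hsplit, hz, zero_add]
  have hiff1 : (∏ a ∈ (Finset.Icc 1 N1).filter (fun a => ¬ p ∣ a), a) ^ (p - 1)
        ≡ (∏ a ∈ (Finset.Icc 1 N2).filter (fun a => ¬ p ∣ a), a) ^ (2 * (p - 1)) [MOD p ^ 2]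
      ↔ (p : ZMod (p ^ 2)) * t1 = (p : ZMod (p ^ 2)) * (2 * t2) := by
    rw [← ZMod.natCast_eq_natCast_iff, Nat.cast_pow, Nat.cast_pow]
    rw [mul_comm 2 (p - 1), pow_mul, ht1, ht2]
    have hsq2 : (1 + (p : ZMod (p ^ 2)) * t2) ^ 2
        = 1 + (p : ZMod (p ^ 2)) * (2 * t2) := by
      have he : (1 + (p : ZMod (p ^ 2)) * t2) ^ 2
          = 1 + (p : ZMod (p ^ 2)) * (2 * t2)
            + ((p : ZMod (p ^ 2)) * (p : ZMod (p ^ 2))) * (t2 * t2) := by ring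
      rw [he, hpp]
      ring
    rw [hsq2, add_right_inj]
  have hcc : ((Finset.Icc 1 N1).filter (fun a => ¬ p ∣ a)).card
      = 2 * ((Finset.Icc 1 N2).filter (fun a => ¬ p ∣ a)).card := by
    rw [hcard N1, hcard N2, hN1p, hN2p, hN1def]
    omega
  have e1 : (p : ZMod (p ^ 2)) * t1 = ((T1n : ℕ) : ZMod (p ^ 2))
      - (((Finset.Icc 1 N1).filter (fun a => ¬ p ∣ a)).card : ZMod (p ^ 2)) := by
    rw [ht1', sum_sub_one_card, hfull N1, ← hT1def]
  have e2 : (p : ZMod (p ^ 2)) * (2 * t2) = ((2 * T2n : ℕ) : ZMod (p ^ 2))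
      - (((Finset.Icc 1 N1).filter (fun a => ¬ p ∣ a)).card : ZMod (p ^ 2)) := by
    have h2 : (p : ZMod (p ^ 2)) * (2 * t2) = 2 * ((p : ZMod (p ^ 2)) * t2) := by ring
    rw [h2, ht2', sum_sub_one_card, hfull N2, ← hT2def, hcc]
    push_cast
    ring
  have hiff2 : ((p : ZMod (p ^ 2)) * t1 = (p : ZMod (p ^ 2)) * (2 * t2))
      ↔ ((T1n : ℕ) : ZMod (p ^ 2)) = ((2 * T2n : ℕ) : ZMod (p ^ 2)) := by
    rw [e1, e2, sub_left_inj]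
  have hiff3 : (((T1n : ℕ) : ZMod (p ^ 2)) = ((2 * T2n : ℕ) : ZMod (p ^ 2)))
      ↔ (p : ℤ) ^ 2 ∣ (2 * (T2n : ℤ) - T1n) := by
    rw [ZMod.natCast_eq_natCast_iff, Nat.modEq_iff_dvd]
    have hcast2 : ((p ^ 2 : ℕ) : ℤ) = (p : ℤ) ^ 2 := by push_cast; ring
    have hcast3 : ((2 * T2n : ℕ) : ℤ) - ((T1n : ℕ) : ℤ) = 2 * ((T2n : ℕ) : ℤ) - ((T1n : ℕ) : ℤ) := by
      push_cast
      ring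
    rw [hcast2, hcast3]
  rw [hiff1, hiff2, hiff3]
  -- PART B : Bernoulli side
  obtain ⟨w1, hw1, he1⟩ := evalR1 (c := m) (N := N1) hp hp3 hpm' hm (by omega)
  obtain ⟨w2, hw2, he2⟩ := evalR1 (c := 2 * m) (N := N2) hp hp3 hpm (by omega) (by omega)
  obtain ⟨s0, hs0, he0⟩ := evalR2 (c := m) hp hp3 hpm hm
  have hfermat : (p : ℤ) ∣ 2 ^ p - 2 := by
    have h1 : ((2 ^ p - 2 : ℤ) : ZMod p) = 0 := by
      push_cast
      rw [ZMod.pow_card]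
      ring
    exact (ZMod.intCast_zmod_eq_zero_iff_dvd _ _).mp h1
  obtain ⟨z, hz⟩ := hfermat
  have hc2m : ((2 * m : ℕ) : ℚ) = 2 * (m : ℚ) := by push_cast; ring
  rw [hc2m] at he2
  have hzq : (2 : ℚ) ^ p - 2 = (p : ℚ) * (z : ℚ) := by exact_mod_cast hz
  have ht2q : ((T2n : ℕ) : ℚ) = (p : ℚ) * ((t2i : ℕ) : ℚ) := by exact_mod_cast ht2i
  rw [← hT1def] at he1
  rw [← hT2def] at he2
  refine (pcube_iff hp hp3 (2 * (T2n : ℤ) - T1n)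
    ((s0 - w1 + 2 ^ p * w2) + (z : ℚ) * ((t2i : ℕ) : ℚ)) _
    ?_ ?_).symm
  · have h2p : PIntAux p ((2 : ℚ) ^ p) := by
      have h0 := PIntAux.intCast hp (2 ^ p)
      rwa [show ((2 ^ p : ℤ) : ℚ) = (2 : ℚ) ^ p by push_cast; ring] at h0
    exact PIntAux.add hp (PIntAux.add hp (PIntAux.sub hp hs0 hw1)
      (PIntAux.mul hp h2p hw2))
      (PIntAux.mul hp (PIntAux.intCast hp z) (by
        have h0 := PIntAux.intCast hp (t2i : ℤ)
        rwa [show (((t2i : ℤ) : ℤ) : ℚ) = ((t2i : ℕ) : ℚ) by push_cast; ring] at h0))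
  · have hXq : (((2 * (T2n : ℤ) - T1n : ℤ)) : ℚ) = 2 * ((T2n : ℕ) : ℚ) - ((T1n : ℕ) : ℚ) := by
      push_cast
      ring
    rw [he1, he2, hXq]
    linear_combination he0 + ((p : ℚ) * ((T2n : ℕ) : ℚ)) * hzq
      + ((p : ℚ) ^ 2 * (z : ℚ)) * ht2q
end

section
/- Let m be a positive integer and p a prime with p ≡ 1 (mod 2m). Then the rational number Σ_{a=1}^{(p−1)/m} q_p(a) − 2·Σ_{a=1}^{(p−1)/(2m)} q_p(a) + (B_p(1/m) − 2^p·B_p(1/(2m)))/p² + (1/m)·H_{(p−1)/m} − (1/m)·H_{(p−1)/(2m)} is congruent to 0 modulo p, i.e. it can be written as p·(a/b) with integers a, b and p ∤ b. -/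
open Finset Polynomial

namespace FQaux

variable {p : ℕ} [hp : Fact p.Prime]

local notation "ν" => padicNorm p

lemma hp1 : 1 < p := hp.out.one_lt
lemma hpQ0 : (p : ℚ) ≠ 0 := by exact_mod_cast hp.out.pos.ne'
lemma pinv_pos : (0:ℚ) < (p:ℚ)⁻¹ := by
  have : (0:ℚ) < p := by exact_mod_cast hp.out.pos
  positivity
lemma pinv_le_one : (p:ℚ)⁻¹ ≤ 1 := by
  rw [inv_le_one_iff₀]; right; exact_mod_cast hp.out.one_lt.le
lemma pinv_pow_le {i j : ℕ} (h : j ≤ i) : (p:ℚ)⁻¹^i ≤ (p:ℚ)⁻¹^j :=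
  pow_le_pow_of_le_one pinv_pos.le pinv_le_one h

lemma npow (x : ℚ) (n : ℕ) : ν (x^n) = (ν x)^n := by
  induction n with
  | zero => simp [padicNorm.one]
  | succ n ih => rw [pow_succ, pow_succ, padicNorm.mul, ih]

lemma nmul_le {x y a b : ℚ} (hx : ν x ≤ a) (hy : ν y ≤ b) (hb : 0 ≤ b) :
    ν (x * y) ≤ a * b := by
  rw [padicNorm.mul]
  exact mul_le_mul hx hy (padicNorm.nonneg y) (le_trans (padicNorm.nonneg x) hx)

lemma nadd_le {x y a : ℚ} (hx : ν x ≤ a) (hy : ν y ≤ a) : ν (x + y) ≤ a :=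
  le_trans padicNorm.nonarchimedean (max_le hx hy)

lemma nsub_le {x y a : ℚ} (hx : ν x ≤ a) (hy : ν y ≤ a) : ν (x - y) ≤ a :=
  le_trans padicNorm.sub (max_le hx hy)

lemma norm_p : ν p = (p:ℚ)⁻¹ := padicNorm.padicNorm_p hp1

lemma norm_int_le (z : ℤ) : ν z ≤ 1 := padicNorm.of_int z
lemma norm_nat_le (n : ℕ) : ν n ≤ 1 := padicNorm.of_nat n

lemma norm_int_one {z : ℤ} (h : ¬ (p:ℤ) ∣ z) : ν z = 1 :=
  (padicNorm.int_eq_one_iff z).2 h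
lemma norm_nat_one {c : ℕ} (h : ¬ p ∣ c) : ν c = 1 :=
  (padicNorm.nat_eq_one_iff c).2 h

lemma norm_int_dvd {z : ℤ} (h : (p:ℤ) ∣ z) : ν z ≤ (p:ℚ)⁻¹ := by
  have := (padicNorm.dvd_iff_norm_le (p := p) (n := 1) (z := z)).1 (by simpa using h)
  simpa using this

/-- numerator and denominator of a norm-one rational are coprime to p -/
lemma num_den_unit {x : ℚ} (hx : ν x = 1) :
    ¬ (p:ℤ) ∣ x.num ∧ ¬ p ∣ x.den := by
  have hd0 : ((x.den:ℤ) : ℚ) ≠ 0 := by exact_mod_cast x.den_nz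
  have hxx : ((x.num : ℚ)) / ((x.den:ℤ) : ℚ) = x := by
    push_cast; exact Rat.num_div_den x
  have heq : ν (x.num:ℚ) = ν ((x.den:ℤ):ℚ) := by
    have h2 : ν ((x.num:ℚ) / ((x.den:ℤ):ℚ)) = 1 := by rw [hxx]; exact hx
    rw [padicNorm.div] at h2
    have hden0 : ν ((x.den:ℤ):ℚ) ≠ 0 := padicNorm.nonzero hd0
    exact (div_eq_one_iff_eq hden0).1 h2
  have key : ¬ ((p:ℤ) ∣ x.num ∨ p ∣ x.den) := by
    rintro (h | h)
    · have h1 : ν (x.num:ℚ) < 1 := (padicNorm.int_lt_one_iff _).2 h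
      have h2 : (p:ℤ) ∣ (x.den:ℤ) := (padicNorm.int_lt_one_iff _).1 (heq ▸ h1)
      have hpd : p ∣ x.den := by exact_mod_cast h2
      have hpn : p ∣ x.num.natAbs := Int.natCast_dvd_natCast.mp (Int.dvd_natAbs.mpr h)
      have h9 : p ∣ 1 := x.reduced ▸ Nat.dvd_gcd hpn hpd
      exact Nat.Prime.ne_one hp.out (Nat.dvd_one.mp h9)
    · have h1 : ν ((x.den:ℤ):ℚ) < 1 := (padicNorm.int_lt_one_iff _).2 (by exact_mod_cast h)
      have h2 : (p:ℤ) ∣ x.num := (padicNorm.int_lt_one_iff _).1 (heq ▸ h1)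
      have hpn : p ∣ x.num.natAbs := Int.natCast_dvd_natCast.mp (Int.dvd_natAbs.mpr h2)
      have h9 : p ∣ 1 := x.reduced ▸ Nat.dvd_gcd hpn h
      exact Nat.Prime.ne_one hp.out (Nat.dvd_one.mp h9)
  exact ⟨fun h => key (Or.inl h), fun h => key (Or.inr h)⟩

/-- Fermat's little theorem for norm-one rationals -/
lemma fermat {x : ℚ} (hx : ν x = 1) : ν (x^(p-1) - 1) ≤ (p:ℚ)⁻¹ := by
  obtain ⟨hnum, hden⟩ := num_den_unit hx
  have hd0 : ((x.den:ℤ) : ℚ) ≠ 0 := by exact_mod_cast x.den_nz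
  set d : ℤ := x.num^(p-1) - (x.den:ℤ)^(p-1) with hd
  have hdvd : (p:ℤ) ∣ d := by
    have h1 : ((x.num : ZMod p)) ≠ 0 := by
      rw [Ne, ZMod.intCast_zmod_eq_zero_iff_dvd]; exact hnum
    have h2 : ((x.den : ZMod p)) ≠ 0 := by
      rw [Ne, ZMod.natCast_eq_zero_iff]; exact hden
    rw [← ZMod.intCast_zmod_eq_zero_iff_dvd]
    push_cast [hd]
    rw [ZMod.pow_card_sub_one_eq_one h1, ZMod.pow_card_sub_one_eq_one h2, sub_self]
  have hxx : x^(p-1) - 1 = (d:ℚ) / ((x.den:ℤ):ℚ)^(p-1) := by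
    rw [eq_div_iff (by positivity)]
    have hmul : x * ((x.den:ℤ):ℚ) = (x.num:ℚ) := by
      push_cast
      rw [mul_comm]
      exact_mod_cast Rat.den_mul_eq_num x
    calc (x^(p-1) - 1) * ((x.den:ℤ):ℚ)^(p-1)
        = (x * ((x.den:ℤ):ℚ))^(p-1) - ((x.den:ℤ):ℚ)^(p-1) := by ring
      _ = (d:ℚ) := by rw [hmul, hd]; push_cast; ring
  rw [hxx, padicNorm.div, npow,
    norm_int_one (show ¬(p:ℤ) ∣ ((x.den:ℕ):ℤ) by exact_mod_cast hden), one_pow, div_one]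
  exact norm_int_dvd hdvd

/-- the Fermat quotient of a norm-one rational has norm ≤ 1 -/
lemma q_norm {x : ℚ} (hx : ν x = 1) : ν ((x^(p-1) - 1)/p) ≤ 1 := by
  rw [padicNorm.div, norm_p, div_le_one pinv_pos]
  exact fermat hx

lemma norm_nat_lt_one {c : ℕ} (h0 : 0 < c) (h : c < p) : ν c = 1 :=
  norm_nat_one (fun hd => absurd (Nat.le_of_dvd h0 hd) (by omega))

lemma norm_pu_pow {u : ℚ} (hu : ν u = 1) (j : ℕ) : ν (((p:ℚ)*u)^j) = (p:ℚ)⁻¹^j := by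
  rw [npow, padicNorm.mul, norm_p, hu, mul_one]

/-- The key Fermat-quotient shift congruence:
`q(x + p t) ≡ q(x) - t/x (mod p)`. -/
lemma shift {x t : ℚ} (hx : ν x = 1) (ht : ν t ≤ 1) :
    ν (((x + p*t)^(p-1) - 1)/p - (x^(p-1) - 1)/p + t/x) ≤ (p:ℚ)⁻¹ := by
  obtain ⟨s, hs⟩ : ∃ s, p - 1 = s + 1 := ⟨p - 2, by have := hp1 (p := p); omega⟩
  have hs2 : (s:ℚ) + 2 = (p:ℚ) := by
    have := hp1 (p := p); push_cast [show p = s + 2 by omega]; ring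
  have hx0 : x ≠ 0 := by
    intro h; rw [h, padicNorm.zero] at hx; norm_num at hx
  rw [hs]
  set P : ℚ := (p : ℚ) with hPdef
  have hP0 : P ≠ 0 := hpQ0
  set T : ℚ := ∑ k ∈ range s, x ^ k * (P*t) ^ (s + 1 - k) * ((s+1).choose k : ℚ) with hT
  have hbin : (x + P*t)^(s+1) = T + ((s+1:ℕ):ℚ) * (x^s * (P*t)) + x^(s+1) := by
    rw [add_pow, sum_range_succ, sum_range_succ, Nat.sub_self, Nat.choose_self,
      show s+1-s = 1 from by omega, Nat.choose_succ_self_right]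
    push_cast; ring
  have hPt : ν (P*t) ≤ (p:ℚ)⁻¹ := by
    rw [padicNorm.mul, hPdef, norm_p]
    calc (p:ℚ)⁻¹ * ν t ≤ (p:ℚ)⁻¹ * 1 := by
          exact mul_le_mul_of_nonneg_left ht pinv_pos.le
      _ = (p:ℚ)⁻¹ := mul_one _
  have hTnorm : ν T ≤ (p:ℚ)⁻¹^2 := by
    apply padicNorm.sum_le' _ (by positivity)
    intro k hk
    have hk' : k < s := mem_range.1 hk
    have h1 : ν (x^k) = 1 := by rw [npow, hx, one_pow]
    have h2 : ν ((P*t)^(s+1-k)) ≤ (p:ℚ)⁻¹^2 := by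
      rw [npow]
      calc (ν (P*t))^(s+1-k) ≤ ((p:ℚ)⁻¹)^(s+1-k) :=
            pow_le_pow_left₀ (padicNorm.nonneg _) hPt _
        _ ≤ (p:ℚ)⁻¹^2 := pinv_pow_le (by omega)
    have := nmul_le (nmul_le (le_of_eq h1) h2 (by positivity))
      (norm_nat_le ((s+1).choose k)) zero_le_one
    simpa using this
  have hfer : ν (x^(s+1) - 1) ≤ (p:ℚ)⁻¹ := by
    have := fermat (p := p) hx; rwa [hs] at this
  have hkey : ((x + P*t)^(s+1) - 1)/P - (x^(s+1) - 1)/P + t/x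
      = (t/x) * (((s+1:ℕ):ℚ) * (x^(s+1) - 1) + P) + T/P := by
    rw [hbin, ← hs2]
    push_cast
    field_simp
    ring
  rw [hkey]
  apply nadd_le
  · have h1 : ν (t/x) ≤ 1 := by rw [padicNorm.div, hx, div_one]; exact ht
    have h2 : ν (((s+1:ℕ):ℚ) * (x^(s+1) - 1) + P) ≤ (p:ℚ)⁻¹ := by
      apply nadd_le
      · simpa using nmul_le (norm_nat_le (s+1)) hfer pinv_pos.le
      · exact le_of_eq norm_p
    simpa using nmul_le h1 h2 pinv_pos.le
  · rw [padicNorm.div, hPdef, norm_p, div_le_iff₀ pinv_pos]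
    rw [show (p:ℚ)⁻¹ * (p:ℚ)⁻¹ = (p:ℚ)⁻¹^2 by ring]
    exact hTnorm


/-- Telescoping Bernoulli polynomial evaluation. -/
lemma tele (n : ℕ) (x : ℚ) (N : ℕ) :
    (Polynomial.bernoulli n).eval (x + N) = (Polynomial.bernoulli n).eval x
      + n * ∑ j ∈ range N, (x + j)^(n-1) := by
  induction N with
  | zero => simp
  | succ N ih =>
    have h := Polynomial.bernoulli_eval_one_add n (x + N)
    have hcast : x + ((N+1 : ℕ) : ℚ) = 1 + (x + (N:ℕ)) := by push_cast; ring
    rw [hcast, h, ih, sum_range_succ]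
    ring

/-- Expansion of the Bernoulli polynomial. -/
lemma expand (n : ℕ) (t : ℚ) : (Polynomial.bernoulli n).eval t
    = ∑ i ∈ range (n+1), _root_.bernoulli i * (n.choose i : ℚ) * t^(n-i) := by
  rw [Polynomial.bernoulli, Polynomial.eval_finset_sum]
  apply sum_congr rfl
  intro i _
  rw [Polynomial.eval_monomial]

/-- Faulhaber-type identity. -/
lemma faul (n : ℕ) (hn : 0 < n) (N : ℕ) :
    ∑ i ∈ range n, _root_.bernoulli i * (n.choose i : ℚ) * (N:ℚ)^(n-i)
      = n * ∑ j ∈ range N, (j:ℚ)^(n-1) := by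
  have h := tele n 0 N
  rw [Polynomial.bernoulli_eval_zero, expand] at h
  rw [sum_range_succ, Nat.sub_self, pow_zero, Nat.choose_self, Nat.cast_one, mul_one,
    mul_one, zero_add] at h
  have h2 : ∑ j ∈ range N, ((0:ℚ) + j)^(n-1) = ∑ j ∈ range N, (j:ℚ)^(n-1) := by
    apply sum_congr rfl; intro j _; rw [zero_add]
  rw [h2] at h
  linarith [h]

/-- Weak von Staudt: `‖B_k‖ ≤ p` for `k ≤ p-1`. -/
lemma vs1 : ∀ k, k ≤ p - 1 → ν (_root_.bernoulli k) ≤ (p:ℚ) := by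
  intro k
  induction k using Nat.strong_induction_on with
  | _ k ih =>
    intro hk
    have hple := hp1 (p := p)
    have hfaul := faul (k+1) (by omega) p
    rw [sum_range_succ, show k+1-k = 1 from by omega, pow_one] at hfaul
    -- bernoulli k * C(k+1,k) * p = (k+1) * Σ - tail
    have hC : (((k+1).choose k : ℕ) : ℚ) = ((k+1:ℕ):ℚ) := by
      rw [Nat.choose_succ_self_right]
    rw [hC] at hfaul
    have hiso : _root_.bernoulli k * ((k+1:ℕ):ℚ) * (p:ℚ)
        = ((k+1:ℕ):ℚ) * ∑ j ∈ range p, (j:ℚ)^(k+1-1)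
          - ∑ i ∈ range k, _root_.bernoulli i * ((k+1).choose i : ℚ) * (p:ℚ)^(k+1-i) := by
      linarith [hfaul]
    have hsum1 : ν (∑ j ∈ range p, (j:ℚ)^(k+1-1)) ≤ 1 := by
      apply padicNorm.sum_le' _ zero_le_one
      intro j _
      rw [npow]
      exact pow_le_one₀ (padicNorm.nonneg _) (norm_nat_le j)
    have htail : ∀ i ∈ range k,
        ν (_root_.bernoulli i * ((k+1).choose i : ℚ) * (p:ℚ)^(k+1-i)) ≤ (p:ℚ)⁻¹ := by
      intro i hi
      have hi' : i < k := mem_range.1 hi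
      have hB : ν (_root_.bernoulli i) ≤ (p:ℚ) := ih i hi' (by omega)
      have hpow : ν ((p:ℚ)^(k+1-i)) ≤ (p:ℚ)⁻¹^2 := by
        rw [npow, norm_p]; exact pinv_pow_le (by omega)
      have := nmul_le (nmul_le hB (norm_nat_le ((k+1).choose i)) zero_le_one) hpow
        (by positivity)
      calc ν (_root_.bernoulli i * ((k+1).choose i : ℚ) * (p:ℚ)^(k+1-i))
          ≤ (p:ℚ) * 1 * (p:ℚ)⁻¹^2 := this
        _ = (p:ℚ)⁻¹ := by field_simp [hpQ0 (p := p)]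
    by_cases hcase : k < p - 1
    · -- k+1 < p : ν (k+1) = 1
      have hnorm : ν (_root_.bernoulli k * ((k+1:ℕ):ℚ) * (p:ℚ)) ≤ 1 := by
        rw [hiso]
        apply nsub_le
        · simpa using nmul_le (norm_nat_le (k+1)) hsum1 zero_le_one
        · exact padicNorm.sum_le' htail pinv_pos.le |>.trans pinv_le_one
      rw [padicNorm.mul, padicNorm.mul, norm_nat_one (show ¬ p ∣ (k+1) from by
            intro hd; have := Nat.le_of_dvd (by omega) hd; omega),
        norm_p, mul_one] at hnorm
      calc ν (_root_.bernoulli k) = ν (_root_.bernoulli k) * (p:ℚ)⁻¹ * (p:ℚ) := by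
            field_simp [hpQ0 (p := p)]
        _ ≤ 1 * (p:ℚ) := by
            apply mul_le_mul_of_nonneg_right hnorm (by positivity)
        _ = (p:ℚ) := one_mul _
    · -- k = p - 1
      have hk1 : k + 1 = p := by omega
      have hnorm : ν (_root_.bernoulli k * ((k+1:ℕ):ℚ) * (p:ℚ)) ≤ (p:ℚ)⁻¹ := by
        rw [hiso]
        apply nsub_le
        · have : ν ((k+1:ℕ):ℚ) = (p:ℚ)⁻¹ := by rw [hk1]; exact_mod_cast norm_p
          simpa using nmul_le (le_of_eq this) hsum1 zero_le_one
        · exact padicNorm.sum_le' htail pinv_pos.le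
      rw [padicNorm.mul, padicNorm.mul, hk1, norm_p] at hnorm
      have hfin := mul_le_mul_of_nonneg_right hnorm (show (0:ℚ) ≤ (p:ℚ)^2 by positivity)
      have hq : (p:ℚ) ≠ 0 := hpQ0 (p := p)
      have e1 : (p:ℚ)⁻¹ * (p:ℚ)⁻¹ * (p:ℚ)^2 = 1 := by field_simp [pow_two]
      have e2 : (p:ℚ)⁻¹ * (p:ℚ)^2 = (p:ℚ) := by
        rw [pow_two, ← mul_assoc, inv_mul_cancel₀ hq, one_mul]
      calc ν (_root_.bernoulli k)
          = ν (_root_.bernoulli k) * ((p:ℚ)⁻¹ * (p:ℚ)⁻¹ * (p:ℚ)^2) := by rw [e1, mul_one]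
        _ = ν (_root_.bernoulli k) * (p:ℚ)⁻¹ * (p:ℚ)⁻¹ * (p:ℚ)^2 := by ring
        _ ≤ (p:ℚ)⁻¹ * (p:ℚ)^2 := hfin
        _ = (p:ℚ) := e2


/-- `p·B_{p-1} ≡ -1 (mod p)`, in the form `‖p B_{p-1} + 1‖ ≤ 1/p`. -/
lemma vs2 : ν ((p:ℚ) * _root_.bernoulli (p-1) + 1) ≤ (p:ℚ)⁻¹ := by
  have hple := hp1 (p := p)
  have hq : (p:ℚ) ≠ 0 := hpQ0 (p := p)
  have hfaul := faul p hp.out.pos p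
  obtain ⟨s, hs⟩ : ∃ s, p = s + 1 := ⟨p - 1, by omega⟩
  have hs1 : p - 1 = s := by omega
  rw [hs1]
  -- split the i = p-1 term
  rw [hs1, hs, sum_range_succ, ← hs] at hfaul
  have hC : ((p.choose s : ℕ) : ℚ) = (p:ℚ) := by
    rw [hs, Nat.choose_succ_self_right]
  rw [show p - s = 1 from by omega, pow_one, hC] at hfaul
  -- hfaul : Σ_{i<s} B_i C(p,i) p^{p-i} + B_s * p * p = p * Σ_{j<p} j^s
  have key : (p:ℚ) * ((p:ℚ) * _root_.bernoulli s + 1)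
      = ((p:ℚ) * ∑ j ∈ range p, (j:ℚ)^s + (p:ℚ))
        - ∑ i ∈ range s, _root_.bernoulli i * (p.choose i : ℚ) * (p:ℚ)^(p-i) := by
    linarith [hfaul]
  have h1 : ν ((p:ℚ) * ∑ j ∈ range p, (j:ℚ)^s + (p:ℚ)) ≤ (p:ℚ)⁻¹^2 := by
    have hsum : (∑ j ∈ range p, (j:ℚ)^s) + 1
        = (∑ j ∈ Ico 1 p, ((j:ℚ)^s - 1)) + (p:ℚ) := by
      rw [range_eq_Ico, Finset.sum_eq_sum_Ico_succ_bot (by omega : 0 < p)]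
      rw [Finset.sum_sub_distrib, Finset.sum_const, Nat.card_Ico]
      have : ((0:ℕ):ℚ)^s = 0 := by
        rw [Nat.cast_zero, zero_pow]; omega
      rw [this, zero_add]
      push_cast [hs1, hs]
      ring
    have h2 : ν ((∑ j ∈ range p, (j:ℚ)^s) + 1) ≤ (p:ℚ)⁻¹ := by
      rw [hsum]
      apply nadd_le _ (le_of_eq norm_p)
      apply padicNorm.sum_le' _ pinv_pos.le
      intro j hj
      rw [mem_Ico] at hj
      have := fermat (p := p) (norm_nat_lt_one (p := p) (show 0 < j by omega) (by omega))
      rwa [hs1] at this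
    have : (p:ℚ) * ∑ j ∈ range p, (j:ℚ)^s + (p:ℚ)
        = (p:ℚ) * ((∑ j ∈ range p, (j:ℚ)^s) + 1) := by ring
    rw [this, padicNorm.mul, norm_p, pow_two]
    exact mul_le_mul_of_nonneg_left h2 pinv_pos.le
  have h2 : ∀ i ∈ range s, ν (_root_.bernoulli i * (p.choose i : ℚ) * (p:ℚ)^(p-i))
      ≤ (p:ℚ)⁻¹^2 := by
    intro i hi
    have hi' : i < s := mem_range.1 hi
    by_cases hi0 : i = 0
    · subst hi0
      simp only [_root_.bernoulli_zero, Nat.choose_zero_right, Nat.cast_one, one_mul, mul_one,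
        Nat.sub_zero]
      rw [npow, norm_p]
      exact pinv_pow_le (by omega)
    · have hB : ν (_root_.bernoulli i) ≤ (p:ℚ) := vs1 i (by omega)
      have hCdvd : p ∣ p.choose i := hp.out.dvd_choose_self hi0 (by omega)
      have hCn : ν ((p.choose i : ℕ):ℚ) ≤ (p:ℚ)⁻¹ := by
        obtain ⟨c, hc⟩ := hCdvd
        rw [hc]
        push_cast
        rw [padicNorm.mul, norm_p]
        calc (p:ℚ)⁻¹ * ν (c:ℚ) ≤ (p:ℚ)⁻¹ * 1 :=
              mul_le_mul_of_nonneg_left (norm_nat_le c) pinv_pos.le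
          _ = (p:ℚ)⁻¹ := mul_one _
      have hpow : ν ((p:ℚ)^(p-i)) ≤ (p:ℚ)⁻¹^2 := by
        rw [npow, norm_p]; exact pinv_pow_le (by omega)
      have := nmul_le (nmul_le hB hCn pinv_pos.le) hpow (by positivity)
      calc ν (_root_.bernoulli i * (p.choose i : ℚ) * (p:ℚ)^(p-i))
          ≤ (p:ℚ) * (p:ℚ)⁻¹ * (p:ℚ)⁻¹^2 := this
        _ = (p:ℚ)⁻¹^2 := by rw [mul_inv_cancel₀ hq, one_mul]
  have hnorm : ν ((p:ℚ) * ((p:ℚ) * _root_.bernoulli s + 1)) ≤ (p:ℚ)⁻¹^2 := by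
    rw [key]
    exact nsub_le h1 (padicNorm.sum_le' h2 (by positivity))
  rw [padicNorm.mul, norm_p] at hnorm
  calc ν ((p:ℚ) * _root_.bernoulli s + 1)
      = (p:ℚ) * ((p:ℚ)⁻¹ * ν ((p:ℚ) * _root_.bernoulli s + 1)) := by
        rw [← mul_assoc, mul_inv_cancel₀ hq, one_mul]
    _ ≤ (p:ℚ) * (p:ℚ)⁻¹^2 := by
        apply mul_le_mul_of_nonneg_left hnorm (by positivity)
    _ = (p:ℚ)⁻¹ := by rw [pow_two, ← mul_assoc, mul_inv_cancel₀ hq, one_mul]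

lemma bernoulli_p_zero (hodd : Odd p) : _root_.bernoulli p = 0 := by
  have h1 : p ≠ 1 := by have := hp1 (p := p); omega
  rw [bernoulli_eq_bernoulli'_of_ne_one h1]
  exact bernoulli'_eq_zero_of_odd hodd (hp1 (p := p))

/-- `B_p(p·u) ≡ p² B_{p-1} u (mod p³)` for a norm-one `u`. -/
lemma eval_mul_p {u : ℚ} (hu : ν u = 1) (hodd : Odd p) :
    ν ((Polynomial.bernoulli p).eval ((p:ℚ)*u)
      - (p:ℚ)^2 * _root_.bernoulli (p-1) * u) ≤ (p:ℚ)⁻¹^3 := by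
  have hple := hp1 (p := p)
  have hp3 : 3 ≤ p := by
    rcases hodd with ⟨t, ht⟩; omega
  have hq : (p:ℚ) ≠ 0 := hpQ0 (p := p)
  obtain ⟨s, hs⟩ : ∃ s, p = s + 2 := ⟨p - 2, by omega⟩
  have hexp := expand p ((p:ℚ)*u)
  -- split last two terms : range (p+1) = range (s+2+1)
  rw [show p + 1 = (s+1) + 1 + 1 from by omega] at hexp
  rw [sum_range_succ, sum_range_succ] at hexp
  rw [show s + 1 + 1 = p from by omega, show s + 1 = p - 1 from by omega] at hexp
  rw [Nat.sub_self, pow_zero, Nat.choose_self, bernoulli_p_zero hodd] at hexp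
  have hC : ((p.choose (p-1) : ℕ) : ℚ) = (p:ℚ) := by
    rw [show p - 1 = s + 1 from by omega, show p = (s+1)+1 from by omega,
      Nat.choose_succ_self_right]
  rw [hC, show p - (p-1) = 1 from by omega, pow_one] at hexp
  have key : (Polynomial.bernoulli p).eval ((p:ℚ)*u)
      - (p:ℚ)^2 * _root_.bernoulli (p-1) * u
      = ∑ i ∈ range (p-1), _root_.bernoulli i * (p.choose i : ℚ) * ((p:ℚ)*u)^(p-i) := by
    rw [hexp, show p - 1 = s + 1 from by omega]; ring
  rw [key]
  apply padicNorm.sum_le' _ (by positivity)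
  intro i hi
  have hi' : i < p - 1 := mem_range.1 hi
  by_cases hi0 : i = 0
  · subst hi0
    simp only [_root_.bernoulli_zero, Nat.choose_zero_right, Nat.cast_one, one_mul, mul_one,
      Nat.sub_zero]
    rw [norm_pu_pow hu]
    exact pinv_pow_le (by omega)
  by_cases hi1 : i = 1
  · subst hi1
    rw [_root_.bernoulli_one]
    have h2 : ν (-1/2 : ℚ) = 1 := by
      have hn1 : ¬ (p:ℤ) ∣ (-1 : ℤ) := by
        intro hd
        have h1 : (p:ℤ) ∣ 1 := (dvd_neg).1 hd
        have h2 := Int.le_of_dvd one_pos h1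
        have hp2 : (2:ℤ) ≤ (p:ℤ) := by exact_mod_cast hp.out.two_le
        omega
      have hn2 : ¬ p ∣ 2 := by
        intro hd
        have := (Nat.le_of_dvd (by norm_num) hd)
        interval_cases p
      rw [show (-1/2 : ℚ) = ((-1 : ℤ):ℚ) / ((2:ℕ):ℚ) by norm_num, padicNorm.div,
        norm_int_one hn1, norm_nat_one hn2, div_one]
    have hch : ν ((p.choose 1 : ℕ):ℚ) = (p:ℚ)⁻¹ := by
      rw [Nat.choose_one_right]; exact norm_p
    have hpow : ν (((p:ℚ)*u)^(p-1)) ≤ (p:ℚ)⁻¹^2 := by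
      rw [norm_pu_pow hu]; exact pinv_pow_le (by omega)
    have := nmul_le (nmul_le (le_of_eq h2) (le_of_eq hch) pinv_pos.le) hpow (by positivity)
    calc ν (-1/2 * ((p.choose 1 : ℕ):ℚ) * ((p:ℚ)*u)^(p-1))
        ≤ 1 * (p:ℚ)⁻¹ * (p:ℚ)⁻¹^2 := this
      _ = (p:ℚ)⁻¹^3 := by ring
  by_cases hodd2 : Odd i
  · have : _root_.bernoulli i = 0 := by
      rw [bernoulli_eq_bernoulli'_of_ne_one hi1]
      exact bernoulli'_eq_zero_of_odd hodd2 (by omega)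
    rw [this]
    simp only [zero_mul]
    rw [padicNorm.zero]
    positivity
  · -- i even, 2 ≤ i ≤ p-2; since p odd and i even, i ≠ p-2, so i ≤ p-3
    have hieven : Even i := Nat.not_odd_iff_even.1 hodd2
    have hine : i ≠ p - 2 := by
      intro h
      rcases hodd with ⟨t, htt⟩
      rcases hieven with ⟨w, hw⟩
      omega
    have hile : p - i ≥ 3 := by omega
    have hB : ν (_root_.bernoulli i) ≤ (p:ℚ) := vs1 i (by omega)
    have hCdvd : p ∣ p.choose i := hp.out.dvd_choose_self hi0 (by omega)
    have hCn : ν ((p.choose i : ℕ):ℚ) ≤ (p:ℚ)⁻¹ := by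
      obtain ⟨c, hc⟩ := hCdvd
      rw [hc]
      push_cast
      rw [padicNorm.mul, norm_p]
      calc (p:ℚ)⁻¹ * ν (c:ℚ) ≤ (p:ℚ)⁻¹ * 1 :=
            mul_le_mul_of_nonneg_left (norm_nat_le c) pinv_pos.le
        _ = (p:ℚ)⁻¹ := mul_one _
    have hpow : ν (((p:ℚ)*u)^(p-i)) ≤ (p:ℚ)⁻¹^3 := by
      rw [norm_pu_pow hu]; exact pinv_pow_le (by omega)
    have := nmul_le (nmul_le hB hCn pinv_pos.le) hpow (by positivity)
    calc ν (_root_.bernoulli i * (p.choose i : ℚ) * ((p:ℚ)*u)^(p-i))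
        ≤ (p:ℚ) * (p:ℚ)⁻¹ * (p:ℚ)⁻¹^3 := this
      _ = (p:ℚ)⁻¹^3 := by rw [mul_inv_cancel₀ hq, one_mul]


lemma sum_Icc_reflect (N : ℕ) (g : ℕ → ℚ) :
    ∑ a ∈ Icc 1 N, g a = ∑ j ∈ range N, g (N - j) := by
  have h1 : Icc 1 N = Ico 1 (N+1) := by rw [Finset.Ico_add_one_right_eq_Icc]
  rw [h1, Finset.sum_Ico_eq_sum_range]
  rw [show N + 1 - 1 = N from rfl]
  rw [← Finset.sum_range_reflect (fun i => g (1 + i)) N]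
  apply sum_congr rfl
  intro j hj; rw [mem_range] at hj
  congr 1; omega

lemma block_term (hodd : Odd p) {c N : ℕ} (hc : 0 < c) (hcp : c < p)
    (hrel : c * N = p - 1) {j : ℕ} (hj : j ∈ range N) :
    ν (((1/(c:ℚ) + j)^(p-1) - 1)/(p:ℚ) - (((N-j:ℕ):ℚ)^(p-1) - 1)/(p:ℚ)
        - 1/(c:ℚ) * (1/((N-j:ℕ):ℚ))) ≤ (p:ℚ)⁻¹ := by
  have hple := hp1 (p := p)
  have hjN := mem_range.1 hj
  have heven : Even (p - 1) := by
    rcases hodd with ⟨t, ht⟩; exact ⟨t, by omega⟩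
  have ha1 : 1 ≤ N - j := by omega
  have ha2 : N - j < p := by
    have : N ≤ c * N := Nat.le_mul_of_pos_left N hc
    omega
  have hx : ν ((N-j:ℕ):ℚ) = 1 := norm_nat_lt_one (by omega) ha2
  have hcn : ν (c:ℚ) = 1 := norm_nat_lt_one hc hcp
  have ht : ν (-(1/(c:ℚ))) ≤ 1 := by
    rw [padicNorm.neg, padicNorm.div, padicNorm.one, hcn, div_one]
  have hs := shift (t := -(1/(c:ℚ))) hx ht
  have hc0 : (c:ℚ) ≠ 0 := Nat.cast_ne_zero.2 (by omega)
  have hxpt : ((N-j:ℕ):ℚ) + (p:ℚ) * (-(1/(c:ℚ))) = -(1/(c:ℚ) + j) := by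
    have hcast : ((N-j:ℕ):ℚ) = (N:ℚ) - (j:ℚ) := by
      push_cast [Nat.cast_sub (le_of_lt hjN)]; ring
    have hpc : (p:ℚ) = (c:ℚ)*(N:ℚ) + 1 := by
      have : p = c * N + 1 := by omega
      rw [this]; push_cast; ring
    rw [hcast, hpc]
    field_simp
    ring
  rw [hxpt, Even.neg_pow heven] at hs
  have hre : ((1/(c:ℚ) + j)^(p-1) - 1)/(p:ℚ) - (((N-j:ℕ):ℚ)^(p-1) - 1)/(p:ℚ)
        - 1/(c:ℚ) * (1/((N-j:ℕ):ℚ))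
      = ((1/(c:ℚ) + j)^(p-1) - 1)/(p:ℚ) - (((N-j:ℕ):ℚ)^(p-1) - 1)/(p:ℚ)
        + (-(1/(c:ℚ)))/((N-j:ℕ):ℚ) := by ring
  rw [hre]
  exact hs

lemma block (hodd : Odd p) {c N : ℕ} (hc : 0 < c) (hcp : c < p)
    (hrel : c * N = p - 1) :
    ν ((∑ j ∈ range N, ((1/(c:ℚ) + j)^(p-1) - 1)/(p:ℚ))
        - (∑ a ∈ Icc 1 N, ((a:ℚ)^(p-1) - 1)/(p:ℚ))
        - (1/(c:ℚ)) * ∑ a ∈ Icc 1 N, (1/(a:ℚ))) ≤ (p:ℚ)⁻¹ := by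
  rw [sum_Icc_reflect N (fun a => ((a:ℚ)^(p-1) - 1)/(p:ℚ)),
    sum_Icc_reflect N (fun a => 1/(a:ℚ)), mul_sum, ← sum_sub_distrib, ← sum_sub_distrib]
  exact padicNorm.sum_le' (fun j hj => block_term hodd hc hcp hrel hj) pinv_pos.le


lemma extract {E : ℚ} (h : padicNorm p E ≤ (p:ℚ)⁻¹) :
    ∃ a b : ℤ, ¬ (p:ℤ) ∣ b ∧ E = (p:ℚ) * ((a:ℚ)/(b:ℚ)) := by
  by_cases hE0 : E = 0
  · refine ⟨0, 1, ?_, by simp [hE0]⟩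
    intro hdd
    have h1 := Int.le_of_dvd one_pos hdd
    have hp2 : (2:ℤ) ≤ (p:ℤ) := by exact_mod_cast hp.out.two_le
    omega
  · set s : ℚ := E / (p:ℚ) with hs
    have hs0 : s ≠ 0 := div_ne_zero hE0 hpQ0
    have hsn : ν s ≤ 1 := by
      rw [hs, padicNorm.div, norm_p, div_le_one pinv_pos]
      exact h
    have hden : ¬ p ∣ s.den := by
      intro hd
      have hdvd : ν ((s.den:ℤ):ℚ) ≤ (p:ℚ)⁻¹ := norm_int_dvd (by exact_mod_cast hd)
      have hmul : ((s.den:ℤ):ℚ) * s = (s.num:ℚ) := by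
        push_cast
        exact_mod_cast Rat.den_mul_eq_num s
      have hnumlt : ν (s.num:ℚ) < 1 := by
        rw [← hmul, padicNorm.mul]
        calc ν ((s.den:ℤ):ℚ) * ν s ≤ (p:ℚ)⁻¹ * 1 :=
              mul_le_mul hdvd hsn (padicNorm.nonneg _) pinv_pos.le
          _ = (p:ℚ)⁻¹ := mul_one _
          _ < 1 := by
              rw [inv_lt_one_iff₀]; right; exact_mod_cast hp1 (p := p)
      have hn : (p:ℤ) ∣ s.num := (padicNorm.int_lt_one_iff _).1 hnumlt
      have hpn : p ∣ s.num.natAbs := Int.natCast_dvd_natCast.mp (Int.dvd_natAbs.mpr hn)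
      have h9 : p ∣ 1 := s.reduced ▸ Nat.dvd_gcd hpn hd
      exact (Nat.Prime.ne_one hp.out) (Nat.dvd_one.mp h9)
    refine ⟨s.num, (s.den : ℤ), by exact_mod_cast hden, ?_⟩
    have h1 : ((s.num:ℤ):ℚ)/(((s.den:ℕ):ℤ):ℚ) = s := by
      push_cast
      exact Rat.num_div_den s
    rw [h1, hs, mul_comm, div_mul_cancel₀ E hpQ0]

end FQaux

open FQaux Finset Polynomial in
/-- For `m ≥ 1` and a prime `p ≡ 1 (mod 2m)`,
`Σ_{a=1}^{(p−1)/m} q_p(a) − 2·Σ_{a=1}^{(p−1)/(2m)} q_p(a)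
  + (B_p(1/m) − 2^p·B_p(1/(2m)))/p² + (1/m)·H_{(p−1)/m} − (1/m)·H_{(p−1)/(2m)}
  ≡ 0 (mod p)` as a rational number, where `q_p(a) = (a^(p−1) − 1)/p` and
`H_k` is the `k`-th harmonic number. -/
theorem fermat_quotient_diff_bernoulli (m p : ℕ) (hm : 0 < m) (hp : p.Prime)
    (hmod : p % (2 * m) = 1) :
    ∃ a b : ℤ, ¬ (p : ℤ) ∣ b ∧
      (∑ a ∈ Finset.Icc 1 ((p - 1) / m), ((a : ℚ) ^ (p - 1) - 1) / (p : ℚ))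
        - 2 * (∑ a ∈ Finset.Icc 1 ((p - 1) / (2 * m)), ((a : ℚ) ^ (p - 1) - 1) / (p : ℚ))
        + ((Polynomial.bernoulli p).eval (1 / (m : ℚ))
            - 2 ^ p * (Polynomial.bernoulli p).eval (1 / (2 * m : ℚ))) / (p : ℚ) ^ 2
        + (1 / (m : ℚ)) * ∑ a ∈ Finset.Icc 1 ((p - 1) / m), (1 / (a : ℚ))
        - (1 / (m : ℚ)) * ∑ a ∈ Finset.Icc 1 ((p - 1) / (2 * m)), (1 / (a : ℚ))
        = (p : ℚ) * ((a : ℚ) / (b : ℚ)) := by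
  haveI : Fact p.Prime := ⟨hp⟩
  set k := p / (2*m) with hkdef
  have hsplit : p = 2*m*k + 1 := by
    conv_lhs => rw [← Nat.div_add_mod p (2*m)]
    rw [hmod]
  have hk0 : 0 < k := by
    rcases Nat.eq_zero_or_pos k with h|h
    · exfalso
      rw [h, Nat.mul_zero, Nat.zero_add] at hsplit
      exact hp.one_lt.ne' hsplit
    · exact h
  have hw : p = 2*(m*k) + 1 := by rw [hsplit]; ring
  have hw1 : 0 < m*k := Nat.mul_pos hm hk0
  have hwm : m ≤ m*k := Nat.le_mul_of_pos_right m hk0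
  have hp3 : 3 ≤ p := by omega
  have h2m : 2*m < p := by omega
  have hodd : Odd p := ⟨m*k, by omega⟩
  have hdiv2 : (p-1)/(2*m) = k := by
    rw [show p - 1 = (2*m)*k from by rw [Nat.mul_assoc]; omega]
    exact Nat.mul_div_cancel_left k (by omega)
  have hdiv1 : (p-1)/m = 2*k := by
    rw [show p - 1 = m*(2*k) from by rw [show m*(2*k) = 2*(m*k) from by ring]; omega]
    exact Nat.mul_div_cancel_left _ hm
  rw [hdiv1, hdiv2]
  have hP0 : (p:ℚ) ≠ 0 := hpQ0
  have hm0 : (m:ℚ) ≠ 0 := Nat.cast_ne_zero.2 (by omega)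
  have hPeq : (p:ℚ) = 2*(m:ℚ)*(k:ℚ) + 1 := by
    rw [hsplit]; push_cast; ring
  -- abbreviations (purely notational)
  set S1 : ℚ := ∑ a ∈ Finset.Icc 1 (2*k), ((a : ℚ) ^ (p - 1) - 1) / (p : ℚ) with hS1
  set S2 : ℚ := ∑ a ∈ Finset.Icc 1 k, ((a : ℚ) ^ (p - 1) - 1) / (p : ℚ) with hS2
  set H1 : ℚ := ∑ a ∈ Finset.Icc 1 (2*k), (1 / (a : ℚ)) with hH1
  set H2 : ℚ := ∑ a ∈ Finset.Icc 1 k, (1 / (a : ℚ)) with hH2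
  set Q1 : ℚ := ∑ j ∈ range (2*k), ((1/(m:ℚ) + (j:ℚ))^(p-1) - 1)/(p:ℚ) with hQ1
  set Q2 : ℚ := ∑ j ∈ range k, ((1/(2*(m:ℚ)) + (j:ℚ))^(p-1) - 1)/(p:ℚ) with hQ2
  set q2 : ℚ := ((2:ℚ)^(p-1) - 1)/(p:ℚ) with hq2
  set Bm1 : ℚ := _root_.bernoulli (p-1) with hBm1
  set Bpm : ℚ := (Polynomial.bernoulli p).eval ((p:ℚ) * (1/(m:ℚ))) with hBpm
  set Bp2m : ℚ := (Polynomial.bernoulli p).eval ((p:ℚ) * (1/(2*(m:ℚ)))) with hBp2m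
  have hcast2m : ((2*m:ℕ):ℚ) = 2*(m:ℚ) := by push_cast; ring
  -- Bernoulli telescoping
  have hB1 : (Polynomial.bernoulli p).eval (1/(m:ℚ))
      = Bpm - (p:ℚ) * (2*(k:ℚ) + (p:ℚ)*Q1) := by
    have t1 := tele p (1/(m:ℚ)) (2*k)
    have harg : 1/(m:ℚ) + ((2*k:ℕ):ℚ) = (p:ℚ)*(1/(m:ℚ)) := by
      rw [hPeq]; push_cast; field_simp; ring
    rw [harg] at t1
    have hsum : ∑ j ∈ range (2*k), (1/(m:ℚ) + (j:ℚ))^(p-1) = 2*(k:ℚ) + (p:ℚ)*Q1 := by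
      have hterm : ∀ j ∈ range (2*k), (1/(m:ℚ) + (j:ℚ))^(p-1)
          = 1 + (p:ℚ)*(((1/(m:ℚ) + (j:ℚ))^(p-1) - 1)/(p:ℚ)) := by
        intro j _; field_simp; ring
      rw [sum_congr rfl hterm, sum_add_distrib, sum_const, card_range, nsmul_eq_mul,
        mul_one, ← mul_sum, hQ1]
      push_cast; ring
    rw [hsum, ← hBpm] at t1
    linarith [t1]
  have hB2 : (Polynomial.bernoulli p).eval (1/(2*(m:ℚ)))
      = Bp2m - (p:ℚ) * ((k:ℚ) + (p:ℚ)*Q2) := by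
    have t1 := tele p (1/(2*(m:ℚ))) k
    have harg : 1/(2*(m:ℚ)) + ((k:ℕ):ℚ) = (p:ℚ)*(1/(2*(m:ℚ))) := by
      rw [hPeq]; push_cast; field_simp; ring
    rw [harg] at t1
    have hsum : ∑ j ∈ range k, (1/(2*(m:ℚ)) + (j:ℚ))^(p-1) = (k:ℚ) + (p:ℚ)*Q2 := by
      have hterm : ∀ j ∈ range k, (1/(2*(m:ℚ)) + (j:ℚ))^(p-1)
          = 1 + (p:ℚ)*(((1/(2*(m:ℚ)) + (j:ℚ))^(p-1) - 1)/(p:ℚ)) := by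
        intro j _; field_simp; ring
      rw [sum_congr rfl hterm, sum_add_distrib, sum_const, card_range, nsmul_eq_mul,
        mul_one, ← mul_sum, hQ2]
    rw [hsum, ← hBp2m] at t1
    linarith [t1]
  have e2p : (2:ℚ)^p = 2 + 2*(p:ℚ)*q2 := by
    rw [show p = (p-1)+1 from by omega, pow_succ, hq2]
    field_simp; push_cast [Nat.cast_sub hp.one_le]; ring
  -- the exact algebraic identity
  have hE : S1 - 2*S2
        + ((Polynomial.bernoulli p).eval (1/(m:ℚ))
            - 2^p * (Polynomial.bernoulli p).eval (1/(2*(m:ℚ))))/(p:ℚ)^2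
        + (1/(m:ℚ)) * H1 - (1/(m:ℚ)) * H2
      = (-(Q1 - S1 - (1/(m:ℚ))*H1) + 2*(Q2 - S2 - (1/(2*(m:ℚ)))*H2))
        + q2 * ((p:ℚ)/(m:ℚ))
        + 2*(p:ℚ)*q2*Q2
        + ((Bpm - (p:ℚ)^2*Bm1*(1/(m:ℚ))) - 2^p * (Bp2m - (p:ℚ)^2*Bm1*(1/(2*(m:ℚ)))))/(p:ℚ)^2
        + (-(q2/(m:ℚ)) * ((p:ℚ)*Bm1 + 1)) := by
    rw [hB1, hB2, e2p, hPeq]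
    have hden : 2*(m:ℚ)*(k:ℚ) + 1 ≠ 0 := by positivity
    field_simp
    ring
  -- norm facts
  have hmn : padicNorm p (m:ℚ) = 1 := norm_nat_lt_one hm (by omega)
  have h2mn : padicNorm p (2*(m:ℚ)) = 1 := by
    rw [← hcast2m]; exact norm_nat_lt_one (by omega) h2m
  have h2n : padicNorm p (2:ℚ) = 1 := by
    rw [show (2:ℚ) = ((2:ℕ):ℚ) by norm_num]
    exact norm_nat_lt_one (by omega) (by omega)
  have hq2n : padicNorm p q2 ≤ 1 := by rw [hq2]; exact q_norm h2n
  have hu1 : padicNorm p (1/(m:ℚ)) = 1 := by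
    rw [padicNorm.div, padicNorm.one, hmn, div_one]
  have hu2 : padicNorm p (1/(2*(m:ℚ))) = 1 := by
    rw [padicNorm.div, padicNorm.one, h2mn, div_one]
  have hX1 : padicNorm p (-(Q1 - S1 - (1/(m:ℚ))*H1) + 2*(Q2 - S2 - (1/(2*(m:ℚ)))*H2)) ≤ (p:ℚ)⁻¹ := by
    apply nadd_le
    · rw [padicNorm.neg, hQ1, hS1, hH1]
      exact block hodd hm (by omega)
        (by rw [show m*(2*k) = 2*(m*k) from by ring]; omega)
    · have hb := block (c := 2*m) (N := k) hodd (by omega) h2m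
        (by rw [Nat.mul_assoc]; omega)
      rw [hcast2m] at hb
      rw [hQ2, hS2, hH2]
      have := nmul_le (le_of_eq h2n) hb pinv_pos.le
      simpa using this
  have hQ2n : padicNorm p Q2 ≤ 1 := by
    rw [hQ2]
    apply padicNorm.sum_le' _ zero_le_one
    intro j hj
    have hjk := mem_range.1 hj
    have hx : padicNorm p (1/(2*(m:ℚ)) + (j:ℚ)) = 1 := by
      have he : 1/(2*(m:ℚ)) + (j:ℚ) = ((1 + 2*(m*j):ℕ):ℚ)/((2*m:ℕ):ℚ) := by
        push_cast; field_simp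
      have hlt : 1 + 2*(m*j) < p := by
        have e1 : m*(j+1) ≤ m*k := Nat.mul_le_mul_left m (by omega)
        have e2 : m*(j+1) = m*j + m := by ring
        omega
      rw [he, padicNorm.div,
        norm_nat_lt_one (show 0 < 1 + 2*(m*j) by omega) hlt,
        norm_nat_lt_one (show 0 < 2*m by omega) h2m, div_one]
    exact q_norm hx
  have hX2 : padicNorm p (q2 * ((p:ℚ)/(m:ℚ))) ≤ (p:ℚ)⁻¹ := by
    have hpm : padicNorm p ((p:ℚ)/(m:ℚ)) = (p:ℚ)⁻¹ := by
      rw [padicNorm.div, norm_p, hmn, div_one]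
    simpa using nmul_le hq2n (le_of_eq hpm) pinv_pos.le
  have hX3 : padicNorm p (2*(p:ℚ)*q2*Q2) ≤ (p:ℚ)⁻¹ := by
    have h1 := nmul_le (le_of_eq h2n) (le_of_eq (norm_p (p := p))) pinv_pos.le
    have h2 := nmul_le h1 hq2n (by positivity)
    have h3 := nmul_le h2 hQ2n (by positivity)
    simpa using h3
  have hX4 : padicNorm p (((Bpm - (p:ℚ)^2*Bm1*(1/(m:ℚ)))
      - 2^p * (Bp2m - (p:ℚ)^2*Bm1*(1/(2*(m:ℚ)))))/(p:ℚ)^2) ≤ (p:ℚ)⁻¹ := by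
    have hR1 := eval_mul_p hu1 hodd
    rw [← hBpm, ← hBm1] at hR1
    have hR2 := eval_mul_p hu2 hodd
    rw [← hBp2m, ← hBm1] at hR2
    have h2pn : padicNorm p ((2:ℚ)^p) ≤ 1 := by
      rw [npow, h2n, one_pow]
    have hnum : padicNorm p ((Bpm - (p:ℚ)^2*Bm1*(1/(m:ℚ)))
        - 2^p * (Bp2m - (p:ℚ)^2*Bm1*(1/(2*(m:ℚ))))) ≤ (p:ℚ)⁻¹^3 :=
      nsub_le hR1 (by simpa using nmul_le h2pn hR2 (by positivity))
    rw [padicNorm.div, npow, norm_p, div_le_iff₀ (by positivity)]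
    calc padicNorm p ((Bpm - (p:ℚ)^2*Bm1*(1/(m:ℚ)))
          - 2^p * (Bp2m - (p:ℚ)^2*Bm1*(1/(2*(m:ℚ))))) ≤ (p:ℚ)⁻¹^3 := hnum
      _ = (p:ℚ)⁻¹ * ((p:ℚ)⁻¹)^2 := by ring
  have hX5 : padicNorm p (-(q2/(m:ℚ)) * ((p:ℚ)*Bm1 + 1)) ≤ (p:ℚ)⁻¹ := by
    have h1 : padicNorm p (-(q2/(m:ℚ))) ≤ 1 := by
      rw [padicNorm.neg, padicNorm.div, hmn, div_one]; exact hq2n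
    have h2 : padicNorm p ((p:ℚ)*Bm1 + 1) ≤ (p:ℚ)⁻¹ := by rw [hBm1]; exact vs2
    simpa using nmul_le h1 h2 pinv_pos.le
  have hnorm : padicNorm p (S1 - 2*S2
        + ((Polynomial.bernoulli p).eval (1/(m:ℚ))
            - 2^p * (Polynomial.bernoulli p).eval (1/(2*(m:ℚ))))/(p:ℚ)^2
        + (1/(m:ℚ)) * H1 - (1/(m:ℚ)) * H2) ≤ (p:ℚ)⁻¹ := by
    rw [hE]
    exact nadd_le (nadd_le (nadd_le (nadd_le hX1 hX2) hX3) hX4) hX5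
  exact extract hnorm
end

section
/- Let p be a prime with p ≡ 1 (mod 4), and let E : ℕ → ℤ be the sequence of Euler numbers. Then p divides E_{p−1}. -/
/-- The sign pattern `+,+,-,-` of period 4. -/
def epsAux (m : ℕ) : ℤ := if m % 4 < 2 then 1 else -1

lemma epsAux_add_two (m : ℕ) : epsAux (m + 2) = -epsAux m := by
  simp only [epsAux]
  split_ifs with h1 h2 <;> omega

lemma epsAux_sum (t : ℕ) : ∑ m ∈ Finset.range (4 * t + 1), epsAux m = 1 := by
  induction t with
  | zero => simp [epsAux]
  | succ t ih =>
    have h : 4 * (t + 1) + 1 = (4 * t + 1) + 1 + 1 + 1 + 1 := by ring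
    rw [h, Finset.sum_range_succ, Finset.sum_range_succ, Finset.sum_range_succ,
      Finset.sum_range_succ, ih]
    simp only [epsAux]
    split_ifs <;> omega

lemma even_binom_sum (n : ℕ) (x : ℤ) :
    2 * ∑ k ∈ Finset.range (n + 1), ((2 * n).choose (2 * k) : ℤ) * x ^ (2 * k)
      = (x + 1) ^ (2 * n) + (x - 1) ^ (2 * n) := by
  have h1 : (x + 1) ^ (2 * n)
      = ∑ j ∈ Finset.range (2 * n + 1), x ^ j * ((2 * n).choose j : ℤ) := by
    rw [add_pow]; simp
  have h2 : (x - 1) ^ (2 * n)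
      = ∑ j ∈ Finset.range (2 * n + 1),
          x ^ j * (-1) ^ (2 * n - j) * ((2 * n).choose j : ℤ) := by
    rw [sub_eq_add_neg, add_pow]
  rw [h1, h2, ← Finset.sum_add_distrib]
  have himg : (Finset.range (n + 1)).image (fun k => 2 * k) ⊆ Finset.range (2 * n + 1) := by
    intro j hj
    simp only [Finset.mem_image, Finset.mem_range] at hj ⊢
    obtain ⟨k, hk, rfl⟩ := hj
    omega
  rw [← Finset.sum_subset himg]
  · rw [Finset.sum_image (by intro a _ b _ h; simp only at h; omega), Finset.mul_sum]
    apply Finset.sum_congr rfl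
    intro k hk
    simp only [Finset.mem_range] at hk
    have he : (-1 : ℤ) ^ (2 * n - 2 * k) = 1 := Even.neg_one_pow ⟨n - k, by omega⟩
    rw [he]
    ring
  · intro j hj hjn
    simp only [Finset.mem_image, Finset.mem_range] at hj hjn
    have hjo : Odd j := by
      rw [Nat.odd_iff]
      by_contra h
      exact hjn ⟨j / 2, by omega, by omega⟩
    obtain ⟨r, hr⟩ := hjo
    have ho : (-1 : ℤ) ^ (2 * n - j) = -1 := Odd.neg_one_pow ⟨n - r - 1, by omega⟩
    rw [ho]
    ring

/-- The mod-`p` model of the Euler numbers. -/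
def FF (p : ℕ) (n : ℕ) : ℤ := ∑ m ∈ Finset.range p, epsAux m * (m : ℤ) ^ n

lemma FF_zero (p : ℕ) (hmod : p % 4 = 1) : FF p 0 = 1 := by
  obtain ⟨t, rfl⟩ : ∃ t, p = 4 * t + 1 := ⟨p / 4, by omega⟩
  simp only [FF, pow_zero, mul_one]
  exact epsAux_sum t

lemma FF_rec (p : ℕ) (hp : p.Prime) (hmod : p % 4 = 1) (n : ℕ) (hn : 1 ≤ n) :
    (p : ℤ) ∣ ∑ k ∈ Finset.range (n + 1), ((2 * n).choose (2 * k) : ℤ) * FF p (2 * k) := by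
  have h5 : 5 ≤ p := by
    have := hp.two_le
    omega
  obtain ⟨t, hpt⟩ : ∃ t, p = 4 * t + 5 := ⟨(p - 5) / 4, by omega⟩
  have step : ∀ m : ℕ, epsAux m * (((m : ℤ) + 1) ^ (2 * n) + ((m : ℤ) - 1) ^ (2 * n))
      = ∑ k ∈ Finset.range (n + 1),
          2 * (((2 * n).choose (2 * k) : ℤ) * (epsAux m * (m : ℤ) ^ (2 * k))) := by
    intro m
    rw [← even_binom_sum n (m : ℤ), Finset.mul_sum, Finset.mul_sum]
    exact Finset.sum_congr rfl fun k _ => by ring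
  have key : 2 * ∑ k ∈ Finset.range (n + 1), ((2 * n).choose (2 * k) : ℤ) * FF p (2 * k)
      = ∑ m ∈ Finset.range p,
          epsAux m * (((m : ℤ) + 1) ^ (2 * n) + ((m : ℤ) - 1) ^ (2 * n)) := by
    simp only [step]
    rw [Finset.sum_comm]
    simp only [FF, Finset.mul_sum]
  -- split into the two shifted sums and peel boundary terms
  have hA : ∑ m ∈ Finset.range p, epsAux m * ((m : ℤ) + 1) ^ (2 * n)
      = (∑ m ∈ Finset.range (4 * t + 3), epsAux m * ((m : ℤ) + 1) ^ (2 * n))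
        + epsAux (4 * t + 3) * ((4 * t + 4 : ℤ)) ^ (2 * n)
        + epsAux (4 * t + 4) * ((4 * t + 5 : ℤ)) ^ (2 * n) := by
    rw [hpt, show 4 * t + 5 = (4 * t + 3) + 1 + 1 by omega, Finset.sum_range_succ,
      Finset.sum_range_succ]
    push_cast
    ring
  have hB : ∑ m ∈ Finset.range p, epsAux m * ((m : ℤ) - 1) ^ (2 * n)
      = (∑ m ∈ Finset.range (4 * t + 3), epsAux (m + 1 + 1) * ((m : ℤ) + 1) ^ (2 * n))
        + epsAux 1 * (0 : ℤ) ^ (2 * n)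
        + epsAux 0 * (-1 : ℤ) ^ (2 * n) := by
    rw [hpt, show 4 * t + 5 = (4 * t + 4) + 1 by omega, Finset.sum_range_succ',
      show 4 * t + 4 = (4 * t + 3) + 1 by omega, Finset.sum_range_succ']
    congr 1
    have hb : ∀ m ∈ Finset.range (4 * t + 3),
        epsAux (m + 1 + 1) * (((m + 1 + 1 : ℕ) : ℤ) - 1) ^ (2 * n)
          = epsAux (m + 1 + 1) * ((m : ℤ) + 1) ^ (2 * n) := by
      intro m _
      push_cast
      ring
    rw [Finset.sum_congr rfl hb]
    norm_num
  have hAB : (∑ m ∈ Finset.range (4 * t + 3), epsAux m * ((m : ℤ) + 1) ^ (2 * n))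
      + (∑ m ∈ Finset.range (4 * t + 3), epsAux (m + 1 + 1) * ((m : ℤ) + 1) ^ (2 * n)) = 0 := by
    rw [← Finset.sum_add_distrib]
    apply Finset.sum_eq_zero
    intro m _
    have : epsAux (m + 1 + 1) = -epsAux m := epsAux_add_two m
    rw [this]
    ring
  have heps3 : epsAux (4 * t + 3) = -1 := by simp only [epsAux]; split_ifs <;> omega
  have heps4 : epsAux (4 * t + 4) = 1 := by simp only [epsAux]; split_ifs <;> omega
  have heps1 : epsAux 1 = 1 := rfl
  have heps0 : epsAux 0 = 1 := rfl
  have hzero : (0 : ℤ) ^ (2 * n) = 0 := zero_pow (by omega)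
  have hone : (-1 : ℤ) ^ (2 * n) = 1 := Even.neg_one_pow ⟨n, by ring⟩
  have hd1 : (p : ℤ) ∣ (4 * t + 5 : ℤ) ^ (2 * n) := by
    have hcast : ((4 * t + 5 : ℤ)) = (p : ℤ) := by rw [hpt]; push_cast; ring
    rw [hcast]
    exact dvd_pow_self _ (by omega)
  have hd2 : (p : ℤ) ∣ (4 * t + 4 : ℤ) ^ (2 * n) - 1 := by
    have h1 : (4 * t + 4 : ℤ) ^ (2 * n) - 1 = ((4 * t + 4 : ℤ) ^ 2) ^ n - 1 := by
      rw [← pow_mul]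
    rw [h1]
    have h2 : (p : ℤ) ∣ (4 * t + 4 : ℤ) ^ 2 - 1 := by
      refine ⟨4 * t + 3, ?_⟩
      rw [hpt]
      push_cast
      ring
    exact h2.trans (by simpa using sub_dvd_pow_sub_pow ((4 * t + 4 : ℤ) ^ 2) 1 n)
  have h2dvd : (p : ℤ) ∣ 2 * ∑ k ∈ Finset.range (n + 1),
      ((2 * n).choose (2 * k) : ℤ) * FF p (2 * k) := by
    have hsplit : 2 * ∑ k ∈ Finset.range (n + 1), ((2 * n).choose (2 * k) : ℤ) * FF p (2 * k)
        = (4 * t + 5 : ℤ) ^ (2 * n) - ((4 * t + 4 : ℤ) ^ (2 * n) - 1) := by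
      have hdist : ∑ m ∈ Finset.range p,
          epsAux m * (((m : ℤ) + 1) ^ (2 * n) + ((m : ℤ) - 1) ^ (2 * n))
          = (∑ m ∈ Finset.range p, epsAux m * ((m : ℤ) + 1) ^ (2 * n))
            + ∑ m ∈ Finset.range p, epsAux m * ((m : ℤ) - 1) ^ (2 * n) := by
        rw [← Finset.sum_add_distrib]
        exact Finset.sum_congr rfl fun m _ => by ring
      rw [key, hdist, hA, hB, heps3, heps4, heps1, heps0, hzero, hone]
      linear_combination hAB
    rw [hsplit]
    exact dvd_sub hd1 hd2
  have hpint : Prime (p : ℤ) := Nat.prime_iff_prime_int.mp hp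
  rcases hpint.dvd_mul.mp h2dvd with h | h
  · exfalso
    have : (p : ℕ) ∣ 2 := by exact_mod_cast h
    have := Nat.le_of_dvd (by norm_num) this
    omega
  · exact h

lemma FF_last (p : ℕ) (hp : p.Prime) (hmod : p % 4 = 1) :
    (p : ℤ) ∣ FF p (p - 1) := by
  haveI : Fact p.Prime := ⟨hp⟩
  have h5 : 5 ≤ p := by have := hp.two_le; omega
  have hsplit : FF p (p - 1)
      = (∑ m ∈ Finset.range (p - 1), epsAux (m + 1) * ((m : ℤ) + 1) ^ (p - 1))
        + epsAux 0 * (0 : ℤ) ^ (p - 1) := by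
    unfold FF
    rw [show p = (p - 1) + 1 by omega, Finset.sum_range_succ']
    push_cast
    ring_nf
  have hz : (0 : ℤ) ^ (p - 1) = 0 := zero_pow (by omega)
  have hterm : ∀ m ∈ Finset.range (p - 1),
      (p : ℤ) ∣ epsAux (m + 1) * (((m : ℤ) + 1) ^ (p - 1) - 1) := by
    intro m hm
    simp only [Finset.mem_range] at hm
    apply Dvd.dvd.mul_left
    rw [← ZMod.intCast_zmod_eq_zero_iff_dvd]
    push_cast
    have hne : ((m : ZMod p) + 1) ≠ 0 := by
      have : (((m + 1 : ℕ)) : ZMod p) ≠ 0 := by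
        rw [Ne, ZMod.natCast_eq_zero_iff]
        intro hdvd
        have := Nat.le_of_dvd (by omega) hdvd
        omega
      push_cast at this
      exact this
    rw [ZMod.pow_card_sub_one_eq_one hne]
    ring
  have hsum0 : ∑ m ∈ Finset.range (p - 1), epsAux (m + 1) = 0 := by
    have h1 : (∑ m ∈ Finset.range (p - 1), epsAux (m + 1)) + epsAux 0
        = ∑ m ∈ Finset.range p, epsAux m := by
      rw [show p = (p - 1) + 1 by omega, Finset.sum_range_succ']
      simp
    obtain ⟨t, hpt⟩ : ∃ t, p = 4 * t + 1 := ⟨p / 4, by omega⟩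
    have h2 : ∑ m ∈ Finset.range p, epsAux m = 1 := by rw [hpt]; exact epsAux_sum t
    have h3 : epsAux 0 = 1 := rfl
    rw [h2, h3] at h1
    linarith
  have : FF p (p - 1)
      = (∑ m ∈ Finset.range (p - 1), epsAux (m + 1) * (((m : ℤ) + 1) ^ (p - 1) - 1))
        + ∑ m ∈ Finset.range (p - 1), epsAux (m + 1) := by
    rw [hsplit, hz, ← Finset.sum_add_distrib]
    simp only [mul_zero, add_zero]
    exact Finset.sum_congr rfl fun m _ => by ring
  rw [this, hsum0, add_zero]
  exact Finset.dvd_sum hterm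

/-- For a prime `p ≡ 1 (mod 4)`, `p` divides the Euler number `E_{p−1}`, where the
Euler numbers are characterized by `E₀ = 1`, `E_n = 0` for odd `n`, and
`Σ_{k=0}^{n} C(2n,2k)·E_{2k} = 0` for `n ≥ 1`. -/
theorem prime_dvd_euler_number (p : ℕ) (hp : p.Prime) (hmod : p % 4 = 1)
    (E : ℕ → ℤ) (hE0 : E 0 = 1) (hEodd : ∀ n, Odd n → E n = 0)
    (hErec : ∀ n, 1 ≤ n →
      ∑ k ∈ Finset.range (n + 1), ((2 * n).choose (2 * k) : ℤ) * E (2 * k) = 0) :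
    (p : ℤ) ∣ E (p - 1) := by
  have h5 : 5 ≤ p := by have := hp.two_le; omega
  have main : ∀ k : ℕ, (p : ℤ) ∣ E (2 * k) - FF p (2 * k) := by
    intro k
    induction k using Nat.strong_induction_on with
    | _ k ih =>
      rcases Nat.eq_zero_or_pos k with rfl | hk
      · simp only [mul_zero, hE0, FF_zero p hmod, sub_self, dvd_zero]
      · have hErec' := hErec k hk
        have hFrec := FF_rec p hp hmod k hk
        have hdiff : (p : ℤ) ∣ ∑ j ∈ Finset.range (k + 1),
            ((2 * k).choose (2 * j) : ℤ) * (E (2 * j) - FF p (2 * j)) := by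
          have : ∑ j ∈ Finset.range (k + 1),
              ((2 * k).choose (2 * j) : ℤ) * (E (2 * j) - FF p (2 * j))
              = (∑ j ∈ Finset.range (k + 1), ((2 * k).choose (2 * j) : ℤ) * E (2 * j))
                - ∑ j ∈ Finset.range (k + 1), ((2 * k).choose (2 * j) : ℤ) * FF p (2 * j) := by
            rw [← Finset.sum_sub_distrib]
            exact Finset.sum_congr rfl fun j _ => by ring
          rw [this, hErec', zero_sub]
          exact dvd_neg.mpr hFrec
        rw [Finset.sum_range_succ] at hdiff
        have hlast : ((2 * k).choose (2 * k) : ℤ) = 1 := by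
          rw [Nat.choose_self]
          norm_num
        rw [hlast, one_mul] at hdiff
        have hrest : (p : ℤ) ∣ ∑ j ∈ Finset.range k,
            ((2 * k).choose (2 * j) : ℤ) * (E (2 * j) - FF p (2 * j)) :=
          Finset.dvd_sum fun j hj => Dvd.dvd.mul_left
            (ih j (Finset.mem_range.mp hj)) _
        have := dvd_sub hdiff hrest
        simpa using this
  have hkey := main ((p - 1) / 2)
  have h2 : 2 * ((p - 1) / 2) = p - 1 := by omega
  rw [h2] at hkey
  have := dvd_add hkey (FF_last p hp hmod)
  simpa using this
end

section
/- Let p be a prime with p ≡ 1 (mod 3), and let G : ℕ → ℚ be the sequence of Glaisher numbers. Then the rational number G_{p−1} is congruent to 0 modulo p, i.e. G_{p−1} = p·(a/b) for some integers a, b with p ∤ b. -/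
open Finset

private lemma glaisher_binom {R : Type*} [CommRing R] (x : R) (n : ℕ) (hn : 1 ≤ n) :
    (x + 1) ^ n + (x - 1) ^ n =
      2 * ∑ k ∈ (range n).filter (fun k => Even (n - k)), (n.choose k : R) * x ^ k
        + 2 * x ^ n := by
  have h1 : (x + 1) ^ n = ∑ k ∈ range (n + 1), (n.choose k : R) * x ^ k := by
    rw [add_pow]
    exact Finset.sum_congr rfl fun k _ => by ring
  have h2 : (x - 1) ^ n
      = ∑ k ∈ range (n + 1), (-1 : R) ^ (n - k) * ((n.choose k : R) * x ^ k) := by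
    have h := add_pow x (-1 : R) n
    rw [← sub_eq_add_neg] at h
    rw [h]
    exact Finset.sum_congr rfl fun k _ => by ring
  rw [h1, h2, ← Finset.sum_add_distrib]
  have h3 : ∀ k ∈ range (n+1),
      ((n.choose k : R) * x ^ k + (-1:R) ^ (n-k) * ((n.choose k : R) * x ^ k))
      = if Even (n - k) then 2 * ((n.choose k : R) * x ^ k) else 0 := by
    intro k _
    by_cases h : Even (n - k)
    · rw [if_pos h, h.neg_one_pow]; ring
    · rw [if_neg h, (Nat.not_even_iff_odd.mp h).neg_one_pow]; ring
  rw [Finset.sum_congr rfl h3, Finset.sum_range_succ]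
  rw [Nat.sub_self, if_pos Even.zero, ← Finset.sum_filter, Finset.mul_sum]
  simp [Nat.choose_self]

private noncomputable def glWt (p a : ℕ) : ZMod p :=
  if a % 3 = 2 then -1 else (2 : ZMod p)⁻¹

section
variable {p : ℕ} [Fact p.Prime]

private lemma gl_two_ne (hmod : p % 3 = 1) : (2 : ZMod p) ≠ 0 := by
  have h2 : ((2:ℕ) : ZMod p) ≠ 0 := by
    rw [Ne, ZMod.natCast_eq_zero_iff]
    intro h
    have := (Nat.prime_dvd_prime_iff_eq (Fact.out : p.Prime) Nat.prime_two).mp h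
    omega
  simpa using h2

private lemma gl_half_add_half (hmod : p % 3 = 1) :
    (2 : ZMod p)⁻¹ + (2 : ZMod p)⁻¹ = 1 := by
  have h := gl_two_ne (p := p) hmod
  field_simp
  ring

private lemma gl_three_ne (hmod : p % 3 = 1) : (3 : ZMod p) ≠ 0 := by
  have h2 : ((3:ℕ) : ZMod p) ≠ 0 := by
    rw [Ne, ZMod.natCast_eq_zero_iff]
    intro h
    have := (Nat.prime_dvd_prime_iff_eq (Fact.out : p.Prime) Nat.prime_three).mp h
    omega
  simpa using h2

private lemma glWt_consec (hmod : p % 3 = 1) (b : ℕ) :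
    glWt p b + glWt p (b+1) + glWt p (b+2) = 0 := by
  have hh := gl_half_add_half (p := p) hmod
  have h3 : b % 3 = 0 ∨ b % 3 = 1 ∨ b % 3 = 2 := by omega
  unfold glWt
  rcases h3 with h | h | h
  · rw [if_neg (by omega), if_neg (by omega), if_pos (by omega)]
    rw [hh]; ring
  · rw [if_neg (by omega), if_pos (by omega), if_neg (by omega)]
    linear_combination hh
  · rw [if_pos (by omega), if_neg (by omega), if_neg (by omega)]
    rw [add_assoc, hh]; ring

private lemma glWt_sum_range (hmod : p % 3 = 1) (j : ℕ) :
    ∑ a ∈ range (3*j+1), glWt p a = (2 : ZMod p)⁻¹ := by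
  induction j with
  | zero => simp [glWt]
  | succ j ih =>
    have h : 3*(j+1)+1 = (3*j+1) + 1 + 1 + 1 := by ring
    rw [h, Finset.sum_range_succ, Finset.sum_range_succ, Finset.sum_range_succ, ih]
    have := glWt_consec (p := p) hmod (3*j+1)
    have harr : 3*j+1+1+1 = 3*j+1+2 := by ring
    rw [harr]
    linear_combination this

private lemma glWt_univ_sum (hmod : p % 3 = 1) :
    ∑ x : ZMod p, glWt p x.val = (2 : ZMod p)⁻¹ := by
  have hp : p = 3 * (p / 3) + 1 := by omega
  have heq : ∑ x : ZMod p, glWt p x.val = ∑ a ∈ range p, glWt p a := by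
    refine Finset.sum_nbij' (fun x => x.val) (fun a => (a : ZMod p)) ?_ ?_ ?_ ?_ ?_
    · intro x _; exact Finset.mem_range.mpr (ZMod.val_lt x)
    · intro a _; exact Finset.mem_univ _
    · intro x _; exact (ZMod.natCast_rightInverse x)
    · intro a ha; exact ZMod.val_cast_of_lt (Finset.mem_range.mp ha)
    · intro x _; rfl
  have h2 := glWt_sum_range (p := p) hmod (p / 3)
  rw [← hp] at h2
  rw [heq, h2]

end

section
variable {p : ℕ} [Fact p.Prime]

private lemma glWt_window (hmod : p % 3 = 1) (y : ZMod p) :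
    glWt p ((y-1).val) + glWt p y.val + glWt p ((y+1).val)
      = if y = 0 then 3 * (2 : ZMod p)⁻¹ else 0 := by
  have hp2 : 2 ≤ p := (Fact.out : p.Prime).two_le
  have hp4 : 4 ≤ p := by omega
  by_cases hy : y = 0
  · subst hy
    rw [if_pos rfl]
    have h1 : ((0:ZMod p) - 1) = ((p - 1 : ℕ) : ZMod p) := by
      rw [Nat.cast_sub (by omega : 1 ≤ p), ZMod.natCast_self, Nat.cast_one]
    have h2 : ((0:ZMod p) - 1).val = p - 1 := by
      rw [h1, ZMod.val_cast_of_lt (by omega)]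
    have h3 : ((0:ZMod p) + 1).val = 1 := by
      rw [zero_add, ZMod.val_one]
    rw [h2, h3, ZMod.val_zero]
    unfold glWt
    rw [if_neg (by omega), if_neg (by omega), if_neg (by omega)]
    ring
  · rw [if_neg hy]
    have ha1 : 1 ≤ y.val := by
      rcases Nat.eq_zero_or_pos y.val with h | h
      · exact absurd ((ZMod.val_eq_zero y).mp h) hy
      · exact h
    have ha2 : y.val < p := ZMod.val_lt y
    have hyc : ((y.val : ℕ) : ZMod p) = y := ZMod.natCast_rightInverse y
    have hm1 : (y - 1) = ((y.val - 1 : ℕ) : ZMod p) := by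
      rw [Nat.cast_sub ha1, hyc, Nat.cast_one]
    have hm1v : (y - 1).val = y.val - 1 := by
      rw [hm1, ZMod.val_cast_of_lt (by omega)]
    by_cases hcase : y.val ≤ p - 2
    · have hp1 : (y + 1) = ((y.val + 1 : ℕ) : ZMod p) := by
        rw [Nat.cast_add, hyc, Nat.cast_one]
      have hp1v : (y + 1).val = y.val + 1 := by
        rw [hp1, ZMod.val_cast_of_lt (by omega)]
      rw [hm1v, hp1v]
      have hc := glWt_consec (p := p) hmod (y.val - 1)
      have e1 : y.val - 1 + 1 = y.val := by omega
      have e2 : y.val - 1 + 2 = y.val + 1 := by omega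
      rw [e1, e2] at hc
      exact hc
    · have hpm1 : y.val = p - 1 := by omega
      have hp1 : (y + 1) = 0 := by
        rw [← hyc, hpm1, Nat.cast_sub (by omega : 1 ≤ p), Nat.cast_one, ZMod.natCast_self]
        ring
      rw [hp1, ZMod.val_zero, hm1v, hpm1]
      have e1 : p - 1 - 1 = p - 2 := by omega
      rw [e1]
      unfold glWt
      rw [if_pos (by omega), if_neg (by omega), if_neg (by omega)]
      have hh := gl_half_add_half (p := p) hmod
      linear_combination hh

end

private noncomputable def glS (p : ℕ) [Fact p.Prime] (n : ℕ) : ZMod p :=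
  ∑ x : ZMod p, glWt p x.val * x ^ n

section
variable {p : ℕ} [Fact p.Prime]

private lemma glS_zero (hmod : p % 3 = 1) : glS p 0 = (2 : ZMod p)⁻¹ := by
  unfold glS
  simp only [pow_zero, mul_one]
  exact glWt_univ_sum hmod

private lemma glS_rec (hmod : p % 3 = 1) (n : ℕ) (hn : 1 ≤ n) :
    3 * glS p n + 2 * ∑ k ∈ (range n).filter (fun k => Even (n - k)),
      (n.choose k : ZMod p) * glS p k = 0 := by
  have hn0 : n ≠ 0 := by omega
  unfold glS
  have hswap : ∑ k ∈ (range n).filter (fun k => Even (n - k)),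
      (n.choose k : ZMod p) * ∑ x : ZMod p, glWt p x.val * x ^ k
      = ∑ x : ZMod p, glWt p x.val *
          ∑ k ∈ (range n).filter (fun k => Even (n - k)), (n.choose k : ZMod p) * x ^ k := by
    simp_rw [Finset.mul_sum]
    rw [Finset.sum_comm]
    refine Finset.sum_congr rfl fun x _ => Finset.sum_congr rfl fun k _ => by ring
  rw [hswap, Finset.mul_sum, Finset.mul_sum, ← Finset.sum_add_distrib]
  have step1 : ∀ x : ZMod p,
      3 * (glWt p x.val * x ^ n) + 2 * (glWt p x.val *
        ∑ k ∈ (range n).filter (fun k => Even (n - k)), (n.choose k : ZMod p) * x ^ k)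
      = glWt p x.val * (x ^ n + (x+1) ^ n + (x-1) ^ n) := by
    intro x
    linear_combination (- glWt p x.val) * glaisher_binom x n hn
  rw [Finset.sum_congr rfl fun x _ => step1 x]
  have split : ∑ x : ZMod p, glWt p x.val * (x ^ n + (x+1) ^ n + (x-1) ^ n)
      = (∑ x : ZMod p, glWt p x.val * x ^ n)
        + (∑ x : ZMod p, glWt p x.val * (x+1) ^ n)
        + (∑ x : ZMod p, glWt p x.val * (x-1) ^ n) := by
    rw [← Finset.sum_add_distrib, ← Finset.sum_add_distrib]
    exact Finset.sum_congr rfl fun x _ => by ring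
  rw [split]
  have hmid : ∑ x : ZMod p, glWt p x.val * (x+1) ^ n
      = ∑ y : ZMod p, glWt p ((y-1).val) * y ^ n := by
    refine Fintype.sum_equiv (Equiv.addRight (1 : ZMod p))
      (fun x => glWt p x.val * (x+1) ^ n) (fun y => glWt p ((y-1).val) * y ^ n) fun x => ?_
    simp [Equiv.coe_addRight, add_sub_cancel_right]
  have hright : ∑ x : ZMod p, glWt p x.val * (x-1) ^ n
      = ∑ y : ZMod p, glWt p ((y+1).val) * y ^ n := by
    refine Fintype.sum_equiv (Equiv.subRight (1 : ZMod p))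
      (fun x => glWt p x.val * (x-1) ^ n) (fun y => glWt p ((y+1).val) * y ^ n) fun x => ?_
    simp [Equiv.subRight_apply, sub_add_cancel]
  rw [hmid, hright, ← Finset.sum_add_distrib, ← Finset.sum_add_distrib]
  have final : ∀ y : ZMod p,
      glWt p y.val * y ^ n + glWt p ((y-1).val) * y ^ n + glWt p ((y+1).val) * y ^ n
      = if y = 0 then (3 * (2 : ZMod p)⁻¹) * y ^ n else 0 := by
    intro y
    have hw := glWt_window hmod y
    by_cases hy : y = 0
    · rw [if_pos hy]
      rw [if_pos hy] at hw
      linear_combination (y ^ n) * hw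
    · rw [if_neg hy]
      rw [if_neg hy] at hw
      linear_combination (y ^ n) * hw
  rw [Finset.sum_congr rfl fun y _ => final y, Finset.sum_ite_eq' Finset.univ (0 : ZMod p)
    (fun y => (3 * (2 : ZMod p)⁻¹) * y ^ n)]
  rw [if_pos (Finset.mem_univ _), zero_pow hn0, mul_zero]

private lemma glS_last (hmod : p % 3 = 1) : glS p (p - 1) = 0 := by
  have hp2 : 2 ≤ p := (Fact.out : p.Prime).two_le
  unfold glS
  have hpt : ∀ x : ZMod p, glWt p x.val * x ^ (p - 1)
      = glWt p x.val - (if x = 0 then glWt p x.val else 0) := by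
    intro x
    by_cases hx : x = 0
    · rw [if_pos hx, hx, zero_pow (by omega : p - 1 ≠ 0), mul_zero, sub_self]
    · rw [if_neg hx, ZMod.pow_card_sub_one_eq_one hx, mul_one, sub_zero]
  rw [Finset.sum_congr rfl fun x _ => hpt x, Finset.sum_sub_distrib,
    Finset.sum_ite_eq' Finset.univ (0 : ZMod p) (fun x => glWt p x.val),
    if_pos (Finset.mem_univ _), glWt_univ_sum hmod, ZMod.val_zero]
  unfold glWt
  rw [if_neg (by omega), sub_self]

end

/-- For a prime `p ≡ 1 (mod 3)`, the Glaisher number `G_{p−1}` is congruent to `0`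
modulo `p`, where the Glaisher numbers are characterized by `G₀ = 1/2` and
`3·G_n + 2·Σ_{0 ≤ k < n, n−k even} C(n,k)·G_k = 0` for `n ≥ 1`. -/
theorem prime_dvd_glaisher_number (p : ℕ) (hp : p.Prime) (hmod : p % 3 = 1)
    (G : ℕ → ℚ) (hG0 : G 0 = 1 / 2)
    (hGrec : ∀ n, 1 ≤ n →
      3 * G n + 2 * ∑ k ∈ (Finset.range n).filter (fun k => Even (n - k)),
        (n.choose k : ℚ) * G k = 0) :
    ∃ a b : ℤ, ¬ (p : ℤ) ∣ b ∧ G (p - 1) = (p : ℚ) * ((a : ℚ) / (b : ℚ)) := by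
  haveI : Fact p.Prime := ⟨hp⟩
  have hp2 : 2 ≤ p := hp.two_le
  have hp4 : 4 ≤ p := by omega
  -- units
  have hunit : ∀ k : ℤ, ¬ (p:ℤ) ∣ k → IsUnit ((k : ℤ) : ℤ_[p]) := by
    intro k hk
    rw [PadicInt.isUnit_iff]
    refine le_antisymm (PadicInt.norm_le_one _) (not_lt.mp ?_)
    rw [PadicInt.norm_int_lt_one_iff_dvd]
    exact hk
  have hnd2 : ¬ (p:ℤ) ∣ 2 := by
    intro h
    rw [show ((2:ℤ)) = ((2:ℕ):ℤ) by norm_num, Int.natCast_dvd_natCast] at h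
    have := (Nat.prime_dvd_prime_iff_eq hp Nat.prime_two).mp h
    omega
  have hnd3 : ¬ (p:ℤ) ∣ 3 := by
    intro h
    rw [show ((3:ℤ)) = ((3:ℕ):ℤ) by norm_num, Int.natCast_dvd_natCast] at h
    have := (Nat.prime_dvd_prime_iff_eq hp Nat.prime_three).mp h
    omega
  have h2u : IsUnit (2 : ℤ_[p]) := by
    have := hunit 2 hnd2; push_cast at this; exact this
  have h3u : IsUnit (3 : ℤ_[p]) := by
    have := hunit 3 hnd3; push_cast at this; exact this
  -- cast recurrence to ℚ_[p]
  have hrecQ : ∀ n, 1 ≤ n →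
      (3:ℚ_[p]) * ((G n : ℚ) : ℚ_[p]) + 2 * ∑ k ∈ (Finset.range n).filter (fun k => Even (n - k)),
        (n.choose k : ℚ_[p]) * ((G k : ℚ) : ℚ_[p]) = 0 := by
    intro n hn
    have h := congrArg (fun q : ℚ => (q : ℚ_[p])) (hGrec n hn)
    push_cast at h
    convert h using 2
  -- p-integrality
  have hP : ∀ n, ∃ z : ℤ_[p], (z : ℚ_[p]) = ((G n : ℚ) : ℚ_[p]) := by
    intro n
    induction n using Nat.strong_induction_on with
    | _ n ih =>
      rcases Nat.eq_zero_or_pos n with hn | hn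
      · subst hn
        obtain ⟨b, hb⟩ := h2u.exists_right_inv
        refine ⟨b, ?_⟩
        have hb' : (2 : ℚ_[p]) * (b : ℚ_[p]) = 1 := by
          have := congrArg (fun z : ℤ_[p] => (z : ℚ_[p])) hb
          push_cast at this
          exact this
        rw [hG0]
        push_cast
        rw [eq_comm, div_eq_iff (by norm_num : (2:ℚ_[p]) ≠ 0)]
        linear_combination -hb'
      · choose z hz using ih
        set F := (Finset.range n).filter (fun k => Even (n - k)) with hF
        set z' : ℕ → ℤ_[p] := fun m => if h : m < n then z m h else 0 with hz'
        set w : ℤ_[p] := ∑ k ∈ F, (n.choose k : ℤ_[p]) * z' k with hw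
        have hwQ : (w : ℚ_[p]) = ∑ k ∈ F, (n.choose k : ℚ_[p]) * ((G k : ℚ) : ℚ_[p]) := by
          have hmap : ((w : ℤ_[p]) : ℚ_[p])
              = ∑ k ∈ F, (((n.choose k : ℤ_[p]) * z' k : ℤ_[p]) : ℚ_[p]) := by
            rw [hw]
            exact map_sum (PadicInt.Coe.ringHom) _ F
          rw [hmap]
          refine Finset.sum_congr rfl fun k hk => ?_
          have hkn : k < n := Finset.mem_range.mp (Finset.mem_filter.mp hk).1
          push_cast
          rw [hz']
          simp only [dif_pos hkn]
          rw [hz k hkn]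
        obtain ⟨v, hv⟩ := h3u.exists_right_inv
        refine ⟨v * (-2 * w), ?_⟩
        have hvQ : (3 : ℚ_[p]) * (v : ℚ_[p]) = 1 := by
          have := congrArg (fun z : ℤ_[p] => (z : ℚ_[p])) hv
          push_cast at this
          exact this
        have hrec := hrecQ n hn
        push_cast
        rw [hwQ, show ((2:ℤ_[p]):ℚ_[p]) = 2 from rfl]
        linear_combination (-(v : ℚ_[p])) * hrec + ((G n : ℚ) : ℚ_[p]) * hvQ
  choose GZ hGZ using hP
  have hinj : Function.Injective ((↑) : ℤ_[p] → ℚ_[p]) := Subtype.coe_injective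
  -- base case in ℤ_[p]
  have hG0Z : 2 * GZ 0 = 1 := by
    apply hinj
    push_cast
    rw [hGZ 0, hG0]
    push_cast
    rw [show ((2:ℤ_[p]):ℚ_[p]) = 2 from rfl]
    norm_num
  -- recurrence in ℤ_[p]
  have hrecZ : ∀ n, 1 ≤ n → 3 * GZ n + 2 * ∑ k ∈ (Finset.range n).filter (fun k => Even (n - k)),
      (n.choose k : ℤ_[p]) * GZ k = 0 := by
    intro n hn
    apply hinj
    have hmap : ((∑ k ∈ (Finset.range n).filter (fun k => Even (n - k)),
        (n.choose k : ℤ_[p]) * GZ k : ℤ_[p]) : ℚ_[p])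
        = ∑ k ∈ (Finset.range n).filter (fun k => Even (n - k)),
            (((n.choose k : ℤ_[p]) * GZ k : ℤ_[p]) : ℚ_[p]) :=
      map_sum PadicInt.Coe.ringHom _ _
    push_cast [hmap, hGZ]
    rw [show ((3:ℤ_[p]):ℚ_[p]) = 3 from rfl, show ((2:ℤ_[p]):ℚ_[p]) = 2 from rfl]
    exact hrecQ n hn
  -- identify residues with glS
  have key : ∀ n, PadicInt.toZMod (GZ n) = glS p n := by
    intro n
    induction n using Nat.strong_induction_on with
    | _ n ih =>
      rcases Nat.eq_zero_or_pos n with hn | hn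
      · subst hn
        have h0 := congrArg (PadicInt.toZMod (p := p)) hG0Z
        rw [map_mul, map_one, map_ofNat] at h0
        rw [glS_zero hmod]
        have h2 : (2 : ZMod p) ≠ 0 := gl_two_ne hmod
        field_simp
        linear_combination h0
      · have h1 := congrArg (PadicInt.toZMod (p := p)) (hrecZ n hn)
        rw [map_add, map_mul, map_mul, map_zero, map_sum, map_ofNat, map_ofNat] at h1
        have hsum : ∑ k ∈ (Finset.range n).filter (fun k => Even (n - k)),
            PadicInt.toZMod ((n.choose k : ℤ_[p]) * GZ k)
            = ∑ k ∈ (Finset.range n).filter (fun k => Even (n - k)),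
                (n.choose k : ZMod p) * glS p k := by
          refine Finset.sum_congr rfl fun k hk => ?_
          have hkn : k < n := Finset.mem_range.mp (Finset.mem_filter.mp hk).1
          rw [map_mul, map_natCast, ih k hkn]
        rw [hsum] at h1
        have h2 := glS_rec hmod n hn
        have h3 : (3 : ZMod p) ≠ 0 := gl_three_ne hmod
        have h4 : 3 * (PadicInt.toZMod (GZ n) - glS p n) = 0 := by
          linear_combination h1 - h2
        rcases mul_eq_zero.mp h4 with h | h
        · exact absurd h h3
        · exact sub_eq_zero.mp h
  -- conclude
  have hlast : PadicInt.toZMod (GZ (p-1)) = 0 := by rw [key (p-1), glS_last hmod]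
  have hdvd : (p : ℤ_[p]) ∣ GZ (p-1) := by
    rwa [← RingHom.mem_ker, PadicInt.ker_toZMod, PadicInt.maximalIdeal_eq_span_p,
      Ideal.mem_span_singleton] at hlast
  obtain ⟨c, hc⟩ := hdvd
  by_cases hzero : G (p-1) = 0
  · refine ⟨0, 1, ?_, ?_⟩
    · intro h
      have := Int.le_of_dvd one_pos h
      have := hp.two_le
      omega
    · rw [hzero]; norm_num
  · set r : ℚ := G (p-1) / p with hr
    have hpQ : (p : ℚ) ≠ 0 := Nat.cast_ne_zero.mpr hp.ne_zero
    have hpQp : (p : ℚ_[p]) ≠ 0 := Nat.cast_ne_zero.mpr hp.ne_zero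
    have hrc : ((r : ℚ) : ℚ_[p]) = (c : ℚ_[p]) := by
      rw [hr]
      push_cast
      rw [div_eq_iff hpQp]
      have h5 := congrArg (fun z : ℤ_[p] => (z : ℚ_[p])) hc
      push_cast at h5
      rw [hGZ (p-1)] at h5
      rw [h5]
      ring
    have hrnorm : ‖((r : ℚ) : ℚ_[p])‖ ≤ 1 := by
      rw [hrc]
      exact PadicInt.norm_le_one c
    have hden : ¬ (p : ℤ) ∣ (r.den : ℤ) := by
      intro hdv
      have hnum : ((r.num : ℚ_[p])) = (r.den : ℚ_[p]) * ((r : ℚ) : ℚ_[p]) := by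
        have := r.num_div_den
        have h6 := congrArg (fun q : ℚ => (q : ℚ_[p])) this
        push_cast at h6
        have hdQ : ((r.den : ℚ_[p])) ≠ 0 := by
          exact_mod_cast Nat.cast_ne_zero.mpr r.den_nz
        rw [← h6, mul_div_cancel₀ _ hdQ]
      have hdennorm : ‖(r.den : ℚ_[p])‖ < 1 := by
        have : ((r.den : ℤ) : ℚ_[p]) = (r.den : ℚ_[p]) := by push_cast; ring
        rw [← this, Padic.norm_intCast_lt_one_iff]
        exact hdv
      have hnumnorm : ‖(r.num : ℚ_[p])‖ < 1 := by
        rw [hnum, norm_mul]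
        calc ‖(r.den : ℚ_[p])‖ * ‖((r : ℚ) : ℚ_[p])‖
            ≤ ‖(r.den : ℚ_[p])‖ * 1 := by
              exact mul_le_mul_of_nonneg_left hrnorm (norm_nonneg _)
          _ = ‖(r.den : ℚ_[p])‖ := mul_one _
          _ < 1 := hdennorm
      have hpnum : (p : ℤ) ∣ r.num := Padic.norm_intCast_lt_one_iff.mp hnumnorm
      have hco := r.reduced
      have hd1 : p ∣ r.num.natAbs := Int.natAbs_dvd_natAbs.mpr (by simpa using hpnum)
      have hd2 : p ∣ r.den := Int.natCast_dvd_natCast.mp hdv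
      have := Nat.dvd_gcd hd1 hd2
      rw [Nat.Coprime] at hco
      rw [hco] at this
      have := Nat.le_of_dvd one_pos this
      omega
    refine ⟨r.num, (r.den : ℤ), hden, ?_⟩
    have : ((r.num : ℚ)) / ((r.den : ℚ)) = r := by
      exact_mod_cast r.num_div_den
    rw [show (((r.den : ℤ) : ℚ)) = (r.den : ℚ) by push_cast; ring, this, hr]
    field_simp
end

section
/- Let G : ℕ → ℚ be the sequence of Glaisher numbers. Then for every natural number n, B_{2n+1}(1/3) = −(2n+1)·G_{2n}/3^{2n+1}, where B_{2n+1}(x) is the (2n+1)-st Bernoulli polynomial. -/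
open Finset

lemma bern_expand (N : ℕ) (t : ℚ) :
    (Polynomial.bernoulli N).eval t
      = ∑ i ∈ range (N+1), (N.choose i : ℚ) * _root_.bernoulli i * t ^ (N - i) := by
  rw [Polynomial.bernoulli, Polynomial.eval_finset_sum]
  exact Finset.sum_congr rfl fun i _ => by rw [Polynomial.eval_monomial]; ring

lemma bern_add (N : ℕ) (x y : ℚ) :
    ∑ k ∈ range (N+1), (N.choose k : ℚ) * (Polynomial.bernoulli k).eval x * y ^ (N - k)
      = (Polynomial.bernoulli N).eval (x + y) := by
  rw [bern_expand N (x+y)]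
  calc
    ∑ k ∈ range (N+1), (N.choose k : ℚ) * (Polynomial.bernoulli k).eval x * y ^ (N - k)
        = ∑ k ∈ range (N+1), ∑ i ∈ range (k+1),
            (N.choose k : ℚ) * ((k.choose i : ℚ) * _root_.bernoulli i * x ^ (k-i)) * y ^ (N-k) := by
          refine sum_congr rfl fun k _ => ?_
          rw [bern_expand, mul_sum, sum_mul]
    _ = ∑ i ∈ range (N+1), ∑ k ∈ Ico i (N+1),
            (N.choose k : ℚ) * ((k.choose i : ℚ) * _root_.bernoulli i * x ^ (k-i)) * y ^ (N-k) := by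
          rw [range_eq_Ico, Finset.sum_Ico_Ico_comm]; simp only [range_eq_Ico]

    _ = ∑ i ∈ range (N+1), (N.choose i : ℚ) * _root_.bernoulli i * (x+y) ^ (N-i) := by
          refine sum_congr rfl fun i hi => ?_
          have hi' : i ≤ N := Nat.lt_succ_iff.mp (mem_range.mp hi)
          rw [Finset.sum_Ico_eq_sum_range]
          rw [show N + 1 - i = (N - i) + 1 from by omega, add_pow, Finset.mul_sum]
          refine sum_congr rfl fun j hj => ?_
          have hj' : j ≤ N - i := Nat.lt_succ_iff.mp (mem_range.mp hj)
          have hc : (N.choose (i+j) : ℚ) * ((i+j).choose i : ℚ)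
              = (N.choose i : ℚ) * ((N-i).choose j : ℚ) := by
            have h := Nat.choose_mul (n := N) (show i ≤ i + j by omega)
            rw [show i + j - i = j from by omega] at h
            exact_mod_cast congrArg (fun t : ℕ => (t : ℚ)) h
          rw [show i + j - i = j from by omega, show N - (i + j) = N - i - j from by omega]
          linear_combination (_root_.bernoulli i * x ^ j * y ^ (N - i - j)) * hc

lemma bern_reflect (N : ℕ) (x : ℚ) :
    (Polynomial.bernoulli N).eval (1 - x) = (-1)^N * (Polynomial.bernoulli N).eval x := by
  have h := bern_add N 1 (-x)
  rw [show (1 : ℚ) + -x = 1 - x from by ring] at h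
  rw [← h, bern_expand N x, mul_sum]
  refine sum_congr rfl fun k hk => ?_
  have hk' : k ≤ N := Nat.lt_succ_iff.mp (mem_range.mp hk)
  rw [Polynomial.bernoulli_eval_one, bernoulli'_eq_bernoulli, neg_pow]
  have hs : (-1:ℚ)^k * (-1:ℚ)^(N-k) = (-1)^N := by rw [← pow_add]; congr 1; omega
  linear_combination ((N.choose k : ℚ) * _root_.bernoulli k * x ^ (N-k)) * hs

lemma bern_plus (N : ℕ) :
    ∑ k ∈ range (N+1), (N.choose k : ℚ) * 3^k * (Polynomial.bernoulli k).eval (1/3)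
      = 3^N * (Polynomial.bernoulli N).eval (2/3) := by
  have h := bern_add N (1/3) (1/3)
  rw [show (1:ℚ)/3 + 1/3 = 2/3 from by norm_num] at h
  rw [← h, mul_sum]
  refine sum_congr rfl fun k hk => ?_
  have hk' : k ≤ N := Nat.lt_succ_iff.mp (mem_range.mp hk)
  have h3 : (3:ℚ)^N * (1/3:ℚ)^(N-k) = 3^k := by
    rw [show (3:ℚ)^N = 3^(N-k) * 3^k from by rw [← pow_add]; congr 1; omega, one_div, inv_pow]
    field_simp
  linear_combination (-((N.choose k : ℚ) * (Polynomial.bernoulli k).eval (1/3))) * h3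

lemma bern_minus (N : ℕ) :
    ∑ k ∈ range (N+1), (N.choose k : ℚ) * ((-1)^k * 3^k) * (Polynomial.bernoulli k).eval (1/3)
      = (-3)^N * _root_.bernoulli N := by
  have h := bern_add N (1/3) (-(1/3))
  rw [show (1:ℚ)/3 + -(1/3) = 0 from by norm_num, Polynomial.bernoulli_eval_zero] at h
  rw [← h, mul_sum]
  refine sum_congr rfl fun k hk => ?_
  have hk' : k ≤ N := Nat.lt_succ_iff.mp (mem_range.mp hk)
  have h3 : (-3:ℚ)^N * (-(1/3):ℚ)^(N-k) = (-1)^k * 3^k := by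
    rw [show (-3:ℚ) = -1 * 3 from by norm_num, show (-(1/3):ℚ) = -1 * (1/3) from by norm_num,
      mul_pow, mul_pow]
    have hs : (-1:ℚ)^N * (-1:ℚ)^(N-k) = (-1:ℚ)^(2*(N-k)) * (-1)^k := by
      rw [← pow_add, ← pow_add]; congr 1; omega
    have h4 : (3:ℚ)^N * (1/3:ℚ)^(N-k) = 3^k := by
      rw [show (3:ℚ)^N = 3^(N-k) * 3^k from by rw [← pow_add]; congr 1; omega, one_div, inv_pow]
      field_simp
    calc (-1:ℚ)^N * 3^N * ((-1:ℚ)^(N-k) * (1/3)^(N-k))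
        = ((-1:ℚ)^N * (-1:ℚ)^(N-k)) * ((3:ℚ)^N * (1/3:ℚ)^(N-k)) := by ring
      _ = ((-1:ℚ)^(2*(N-k)) * (-1)^k) * 3^k := by rw [hs, h4]
      _ = (-1)^k * 3^k := by rw [pow_mul]; norm_num
  linear_combination (-((N.choose k : ℚ) * (Polynomial.bernoulli k).eval (1/3))) * h3

lemma bern_key (m : ℕ) (hm1 : 1 ≤ m) :
    ∑ j ∈ range m, (((2*m+1).choose (2*j+1) : ℚ))
        * (3^(2*j+1) * (Polynomial.bernoulli (2*j+1)).eval (1/3))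
      = -(3/2) * (3^(2*m+1) * (Polynomial.bernoulli (2*m+1)).eval (1/3)) := by
  set N := 2*m+1 with hN
  have hb0 : _root_.bernoulli N = 0 := by
    rw [bernoulli_eq_bernoulli'_of_ne_one (by omega)]
    exact bernoulli'_eq_zero_of_odd (Nat.odd_iff.mpr (by omega)) (by omega)
  have hrefl : (Polynomial.bernoulli N).eval (2/3) = -(Polynomial.bernoulli N).eval (1/3) := by
    have h := bern_reflect N (1/3)
    rw [show (1:ℚ) - 1/3 = 2/3 from by norm_num,
      Odd.neg_one_pow (Nat.odd_iff.mpr (by omega))] at h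
    linarith [h]
  have hp := bern_plus N
  have hm' := bern_minus N
  rw [hb0, mul_zero] at hm'
  have hdiff : ∑ k ∈ range (N+1),
      ((N.choose k : ℚ) * 3^k * (Polynomial.bernoulli k).eval (1/3)
        - (N.choose k : ℚ) * ((-1)^k * 3^k) * (Polynomial.bernoulli k).eval (1/3))
      = -(3^N * (Polynomial.bernoulli N).eval (1/3)) := by
    rw [Finset.sum_sub_distrib, hp, hm', hrefl]; ring
  have hfilter : ∑ k ∈ (range (N+1)).filter (fun k => Odd k),
      (2:ℚ) * ((N.choose k : ℚ) * 3^k * (Polynomial.bernoulli k).eval (1/3))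
      = -(3^N * (Polynomial.bernoulli N).eval (1/3)) := by
    rw [← hdiff, Finset.sum_filter]
    refine sum_congr rfl fun k _ => ?_
    rcases Nat.even_or_odd k with he | ho
    · rw [if_neg (Nat.not_odd_iff_even.mpr he), he.neg_one_pow]; ring
    · rw [if_pos ho, ho.neg_one_pow]; ring
  rw [Finset.range_add_one, Finset.filter_insert, if_pos (Nat.odd_iff.mpr (by omega)),
      Finset.sum_insert (by simp)] at hfilter
  have hset : (range N).filter (fun k => Odd k) = (range m).image (fun j => 2*j+1) := by
    ext k
    simp only [mem_filter, mem_range, mem_image, Nat.odd_iff]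
    constructor
    · rintro ⟨h1, h2⟩; exact ⟨k/2, by omega, by omega⟩
    · rintro ⟨j, hj, rfl⟩; omega
  rw [hset, Finset.sum_image (by intro a _ b _ h; simp only at h; omega), Nat.choose_self] at hfilter
  have hgoal : ∑ j ∈ range m, ((N.choose (2*j+1) : ℚ))
        * (3^(2*j+1) * (Polynomial.bernoulli (2*j+1)).eval (1/3))
      = (1/2) * ∑ j ∈ range m,
        (2:ℚ) * ((N.choose (2*j+1) : ℚ) * 3^(2*j+1) * (Polynomial.bernoulli (2*j+1)).eval (1/3)) := by
    rw [Finset.mul_sum]; exact sum_congr rfl fun j _ => by ring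
  rw [hgoal]
  push_cast at hfilter
  linarith [hfilter]

/-- For every natural number `n`, `B_{2n+1}(1/3) = −(2n+1)·G_{2n}/3^{2n+1}`, where
`B_{2n+1}` is the `(2n+1)`-st Bernoulli polynomial and `G` is the sequence of Glaisher
numbers, characterized by `G₀ = 1/2` and
`3·G_n + 2·Σ_{0 ≤ k < n, n−k even} C(n,k)·G_k = 0` for `n ≥ 1`. -/
theorem bernoulli_poly_third_eq_glaisher (G : ℕ → ℚ) (hG0 : G 0 = 1 / 2)
    (hGrec : ∀ n, 1 ≤ n →
      3 * G n + 2 * ∑ k ∈ (Finset.range n).filter (fun k => Even (n - k)),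
        (n.choose k : ℚ) * G k = 0) (n : ℕ) :
    (Polynomial.bernoulli (2 * n + 1)).eval (1 / 3 : ℚ)
      = -(2 * n + 1 : ℚ) * G (2 * n) / 3 ^ (2 * n + 1) := by
  have main : ∀ m : ℕ, 3^(2*m+1) * (Polynomial.bernoulli (2*m+1)).eval (1/3 : ℚ)
      = -(2*m+1 : ℚ) * G (2*m) := by
    intro m
    induction m using Nat.strong_induction_on with
    | _ m ih =>
      rcases Nat.eq_zero_or_pos m with rfl | hm
      · rw [bern_expand]
        norm_num [Finset.sum_range_succ, _root_.bernoulli_zero, _root_.bernoulli_one, hG0]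
      · have hrec := hGrec (2*m) (by omega)
        have hset : (range (2*m)).filter (fun k => Even (2*m - k))
            = (range m).image (fun j => 2*j) := by
          ext k
          simp only [mem_filter, mem_range, mem_image, Nat.even_iff]
          constructor
          · rintro ⟨h1, h2⟩; exact ⟨k/2, by omega, by omega⟩
          · rintro ⟨j, hj, rfl⟩; constructor <;> omega
        rw [hset, Finset.sum_image (by intro a _ b _ h; simp only at h; omega)] at hrec
        have hsum : (2*m+1 : ℚ) * ∑ j ∈ range m, (((2*m).choose (2*j) : ℚ)) * G (2*j)
            = ∑ j ∈ range m, (((2*m+1).choose (2*j+1) : ℚ)) * ((2*j+1 : ℚ) * G (2*j)) := by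
          rw [Finset.mul_sum]
          refine sum_congr rfl fun j _ => ?_
          have hc := Nat.add_one_mul_choose_eq (2*m) (2*j)
          have hc' : ((2*m+1 : ℚ)) * (((2*m).choose (2*j) : ℚ))
              = (((2*m+1).choose (2*j+1) : ℚ)) * ((2*j+1 : ℚ)) := by
            exact_mod_cast congrArg (fun t : ℕ => (t : ℚ)) hc
          linear_combination (G (2*j)) * hc'
        have h2 : ∑ j ∈ range m, (((2*m+1).choose (2*j+1) : ℚ)) * ((2*j+1 : ℚ) * G (2*j))
            = (3/2) * (3^(2*m+1) * (Polynomial.bernoulli (2*m+1)).eval (1/3 : ℚ)) := by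
          have hk := bern_key m hm
          calc ∑ j ∈ range m, (((2*m+1).choose (2*j+1) : ℚ)) * ((2*j+1 : ℚ) * G (2*j))
              = ∑ j ∈ range m, -( (((2*m+1).choose (2*j+1) : ℚ))
                  * (3^(2*j+1) * (Polynomial.bernoulli (2*j+1)).eval (1/3 : ℚ))) := by
                refine sum_congr rfl fun j hj => ?_
                have h := ih j (mem_range.mp hj)
                linear_combination (((2*m+1).choose (2*j+1) : ℚ)) * h
            _ = -∑ j ∈ range m, (((2*m+1).choose (2*j+1) : ℚ))
                  * (3^(2*j+1) * (Polynomial.bernoulli (2*j+1)).eval (1/3 : ℚ)) := by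
                rw [Finset.sum_neg_distrib]
            _ = (3/2) * (3^(2*m+1) * (Polynomial.bernoulli (2*m+1)).eval (1/3 : ℚ)) := by
                rw [hk]; ring
        have hS : ∑ j ∈ range m, (((2*m).choose (2*j) : ℚ)) * G (2*j)
            = -(3/2) * G (2*m) := by linarith [hrec]
        rw [hS, h2] at hsum
        push_cast
        linear_combination (-(2/3) : ℚ) * hsum
  have h := main n
  have h3 : (3:ℚ) ^ (2*n+1) ≠ 0 := by positivity
  field_simp
  linear_combination h
end
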